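/- arXiv:2506.16850 — 11 statements merged into one kernel-verified Lean document; each statement's English description precedes it below -/
import Mathlib

section
/- Let ρ be an n×n density matrix, let A, B be n×n self-adjoint complex matrices, and let q ∈ ℝ. Then (1/(1+|q|)²)·|Tr[ρ[A₀,B₀]_{|q|}]|² ≤ V_ρ(A)·V_ρ(B). -/
open Matrix ComplexOrder

open scoped InnerProductSpace in
/-- Cauchy-Schwarz for the Frobenius inner product `Tr[Xᴴ Y]`. -/
lemma trace_CS_aux {n : ℕ} (X Y : Matrix (Fin n) (Fin n) ℂ) :
    ‖(Xᴴ * Y).trace‖ ^ 2 ≤ ((Xᴴ * X).trace).re * ((Yᴴ * Y).trace).re := by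
  let x : EuclideanSpace ℂ (Fin n × Fin n) := WithLp.toLp 2 (fun p : Fin n × Fin n => X p.1 p.2)
  let y : EuclideanSpace ℂ (Fin n × Fin n) := WithLp.toLp 2 (fun p : Fin n × Fin n => Y p.1 p.2)
  have key : ∀ (U V : Matrix (Fin n) (Fin n) ℂ) (u v : EuclideanSpace ℂ (Fin n × Fin n)),
      (∀ p, u p = U p.1 p.2) → (∀ p, v p = V p.1 p.2) →
      (Uᴴ * V).trace = ⟪u, v⟫_ℂ := by
    intro U V u v hu hv
    simp only [PiLp.inner_apply, RCLike.inner_apply, Matrix.trace, Matrix.diag,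
      Matrix.mul_apply, Matrix.conjTranspose_apply, hu, hv, Fintype.sum_prod_type]
    rw [Finset.sum_comm]
    exact Finset.sum_congr rfl fun _ _ => Finset.sum_congr rfl fun _ _ => mul_comm _ _
  rw [key X Y x y (fun _ => rfl) (fun _ => rfl), key X X x x (fun _ => rfl) (fun _ => rfl),
    key Y Y y y (fun _ => rfl) (fun _ => rfl)]
  have hx : (⟪x, x⟫_ℂ).re = ‖x‖ ^ 2 := by
    rw [← inner_self_eq_norm_sq (𝕜 := ℂ)]; simp [RCLike.re_to_complex]
  have hy : (⟪y, y⟫_ℂ).re = ‖y‖ ^ 2 := by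
    rw [← inner_self_eq_norm_sq (𝕜 := ℂ)]; simp [RCLike.re_to_complex]
  rw [hx, hy]
  calc ‖⟪x, y⟫_ℂ‖ ^ 2 ≤ (‖x‖ * ‖y‖) ^ 2 := by
        gcongr; exact norm_inner_le_norm x y
    _ = ‖x‖ ^ 2 * ‖y‖ ^ 2 := by ring

/-- `A₀ = A - Tr[ρA]·I`, the centered operator. -/
noncomputable def shift {n : ℕ} (ρ A : Matrix (Fin n) (Fin n) ℂ) : Matrix (Fin n) (Fin n) ℂ :=
  A - (ρ * A).trace • (1 : Matrix (Fin n) (Fin n) ℂ)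

/-- `V_ρ(A) = Tr[ρA²] - (Tr[ρA])²` (a real number for self-adjoint `A` and density `ρ`). -/
noncomputable def variance {n : ℕ} (ρ A : Matrix (Fin n) (Fin n) ℂ) : ℝ :=
  ((ρ * (A * A)).trace - ((ρ * A).trace) ^ 2).re

/-- the q-commutator `[A,B]_q = AB - q·BA`. -/
noncomputable def qComm {n : ℕ} (q : ℝ) (A B : Matrix (Fin n) (Fin n) ℂ) :
    Matrix (Fin n) (Fin n) ℂ :=
  A * B - (q : ℂ) • (B * A)

/-- the q-anti-commutator `{A,B}_q = AB + q·BA`. -/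
noncomputable def qAnti {n : ℕ} (q : ℝ) (A B : Matrix (Fin n) (Fin n) ℂ) :
    Matrix (Fin n) (Fin n) ℂ :=
  A * B + (q : ℂ) • (B * A)

open scoped MatrixOrder

/-- Uncertainty relation for the q-commutator:
`(1/(1+|q|)²)·|Tr[ρ[A₀,B₀]_{|q|}]|² ≤ V_ρ(A)·V_ρ(B)`. -/
theorem qcommutator_uncertainty {n : ℕ} (ρ A B : Matrix (Fin n) (Fin n) ℂ)
    (hρ : ρ.PosSemidef) (htr : ρ.trace = 1)
    (hA : A.IsHermitian) (hB : B.IsHermitian) (q : ℝ) :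
    (1 / (1 + |q|) ^ 2) *
        ‖(ρ * qComm |q| (shift ρ A) (shift ρ B)).trace‖ ^ 2 ≤
      variance ρ A * variance ρ B := by
  set s := CFC.sqrt ρ with hsdef
  have hs : s.IsHermitian := (nonneg_iff_posSemidef.mp (CFC.sqrt_nonneg ρ)).1
  have hss : s * s = ρ := CFC.sqrt_mul_sqrt_self ρ (nonneg_iff_posSemidef.mpr hρ)
  -- centered operators are Hermitian
  have hherm : ∀ C : Matrix (Fin n) (Fin n) ℂ, C.IsHermitian → (shift ρ C).IsHermitian := by
    intro C hC
    have htC : star ((ρ * C).trace) = (ρ * C).trace := by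
      rw [← Matrix.trace_conjTranspose, Matrix.conjTranspose_mul, hC.eq, hρ.1.eq,
        Matrix.trace_mul_comm]
    rw [Matrix.IsHermitian, shift, Matrix.conjTranspose_sub, hC.eq, Matrix.conjTranspose_smul,
      Matrix.conjTranspose_one, htC]
  have hA₀ := hherm A hA
  have hB₀ := hherm B hB
  set A₀ := shift ρ A with hA₀def
  set B₀ := shift ρ B with hB₀def
  -- trace identity : Tr[ρ C D] = Tr[(C s)ᴴ (D s)] for Hermitian C, D
  have hkey : ∀ C D : Matrix (Fin n) (Fin n) ℂ, C.IsHermitian → D.IsHermitian →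
      (ρ * (C * D)).trace = (((C * s)ᴴ) * (D * s)).trace := by
    intro C D hC hD
    rw [Matrix.conjTranspose_mul, hs.eq, hC.eq, ← hss]
    simp only [← Matrix.mul_assoc]
    conv_rhs => rw [Matrix.trace_mul_comm]
    simp only [← Matrix.mul_assoc]
  -- conjugate of the cross term
  have hstar : star ((ρ * (A₀ * B₀)).trace) = (ρ * (B₀ * A₀)).trace := by
    rw [← Matrix.trace_conjTranspose]
    simp only [Matrix.conjTranspose_mul, hA₀.eq, hB₀.eq, hρ.1.eq]
    rw [Matrix.trace_mul_comm]
  -- variance identity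
  have hvar : ∀ C : Matrix (Fin n) (Fin n) ℂ,
      (ρ * (shift ρ C * shift ρ C)).trace = (ρ * (C * C)).trace - ((ρ * C).trace) ^ 2 := by
    intro C
    simp only [shift, Matrix.sub_mul, Matrix.mul_sub, Matrix.smul_mul, Matrix.mul_smul,
      Matrix.mul_one, Matrix.one_mul, Matrix.trace_sub, Matrix.trace_smul, smul_eq_mul,
      smul_smul, htr, mul_one]
    ring
  set c := (ρ * (A₀ * B₀)).trace with hcdef
  -- the q-commutator trace
  have hqc : (ρ * qComm |q| A₀ B₀).trace = c - ((|q| : ℝ) : ℂ) * star c := by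
    rw [qComm, Matrix.mul_sub, Matrix.mul_smul, Matrix.trace_sub, Matrix.trace_smul,
      smul_eq_mul, hstar]
  -- Cauchy-Schwarz part
  have hCS : ‖c‖ ^ 2 ≤ variance ρ A * variance ρ B := by
    have h1 := trace_CS_aux (A₀ * s) (B₀ * s)
    rw [← hkey A₀ B₀ hA₀ hB₀, ← hkey A₀ A₀ hA₀ hA₀, ← hkey B₀ B₀ hB₀ hB₀] at h1
    have hva : ((ρ * (A₀ * A₀)).trace).re = variance ρ A := by
      rw [hA₀def, hvar A, variance, Complex.sub_re]
    have hvb : ((ρ * (B₀ * B₀)).trace).re = variance ρ B := by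
      rw [hB₀def, hvar B, variance, Complex.sub_re]
    rwa [hva, hvb] at h1
  -- bound the q-commutator trace by (1+|q|)·|c|
  have habs : ‖(ρ * qComm |q| A₀ B₀).trace‖ ≤ (1 + |q|) * ‖c‖ := by
    rw [hqc]
    calc ‖c - ((|q| : ℝ) : ℂ) * star c‖ ≤ ‖c‖ + ‖((|q| : ℝ) : ℂ) * star c‖ := norm_sub_le _ _
      _ = ‖c‖ + |q| * ‖c‖ := by
          rw [norm_mul, norm_star, Complex.norm_real, Real.norm_eq_abs, abs_abs]
      _ = (1 + |q|) * ‖c‖ := by ring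
  have hpos : (0 : ℝ) < (1 + |q|) ^ 2 := by positivity
  calc (1 / (1 + |q|) ^ 2) * ‖(ρ * qComm |q| A₀ B₀).trace‖ ^ 2
      ≤ (1 / (1 + |q|) ^ 2) * (((1 + |q|) * ‖c‖) ^ 2) := by
        exact mul_le_mul_of_nonneg_left
          (pow_le_pow_left₀ (norm_nonneg _) habs 2) (by positivity)
    _ = ‖c‖ ^ 2 := by field_simp
    _ ≤ variance ρ A * variance ρ B := hCS
end

section
/- Let ρ be an n×n density matrix with eigenvalues 0 ≤ λ₁ ≤ λ₂ ≤ ⋯ ≤ λ_n, let A, B be n×n self-adjoint complex matrices, and let q ∈ ℝ with |q| ≤ 1. Then (λ_n + |q|λ₁)²·|Tr[ρ[A₀,B₀]_{|q|}]|² ≤ (1+|q|)²·(λ_n − |q|λ₁)²·V_ρ(A)·V_ρ(B). -/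
open Matrix ComplexOrder

/-- `lam` lists the eigenvalues of `ρ` (with multiplicity) in increasing order. -/
def IsOrderedEigenvalues {n : ℕ} {ρ : Matrix (Fin n) (Fin n) ℂ}
    (hρ : ρ.IsHermitian) (lam : Fin n → ℝ) : Prop :=
  Monotone lam ∧ ∃ σ : Equiv.Perm (Fin n), ∀ i, lam i = hρ.eigenvalues (σ i)

set_option maxHeartbeats 1000000 in
lemma key_point (m M p a b : ℝ) (hm : 0 ≤ m) (hp0 : 0 ≤ p) (hp1 : p ≤ 1)
    (hma : m ≤ a) (haM : a ≤ M) (hmb : m ≤ b) (hbM : b ≤ M) (z : ℂ) :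
    (M + p * m) * ‖((a - p * b : ℝ) : ℂ) * z + ((b - p * a : ℝ) : ℂ) * (starRingEnd ℂ) z‖ ≤
      (1 + p) * (M - p * m) * ((a + b) * ‖z‖) := by
  have ha0 : 0 ≤ a := hm.trans hma
  have hb0 : 0 ≤ b := hm.trans hmb
  have hM0 : 0 ≤ M := ha0.trans haM
  have hmM : m ≤ M := hma.trans haM
  have hpm : p * m ≤ m := by nlinarith
  have hMpm : 0 ≤ M - p * m := by nlinarith
  have hL0 : 0 ≤ (M + p * m) * ‖((a - p * b : ℝ) : ℂ) * z + ((b - p * a : ℝ) : ℂ) * (starRingEnd ℂ) z‖ := by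
    apply mul_nonneg (by nlinarith) (norm_nonneg _)
  have hR0 : 0 ≤ (1 + p) * (M - p * m) * ((a + b) * ‖z‖) := by
    apply mul_nonneg (mul_nonneg (by linarith) hMpm)
    exact mul_nonneg (by linarith) (norm_nonneg _)
  rw [← pow_le_pow_iff_left₀ hL0 hR0 two_ne_zero]
  have habs2 : ‖((a - p * b : ℝ) : ℂ) * z + ((b - p * a : ℝ) : ℂ) * (starRingEnd ℂ) z‖^2
      = ((a - p*b) + (b - p*a))^2 * z.re^2 + ((a - p*b) - (b - p*a))^2 * z.im^2 := by
    rw [Complex.sq_norm, Complex.normSq_apply]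
    simp [Complex.add_re, Complex.add_im, Complex.mul_re, Complex.mul_im]
    ring
  have habsz2 : (‖z‖)^2 = z.re^2 + z.im^2 := by
    rw [Complex.sq_norm, Complex.normSq_apply]; ring
  have hu2 : 0 ≤ z.re^2 := sq_nonneg _
  have hv2 : 0 ≤ z.im^2 := sq_nonneg _
  -- first coefficient inequality
  have e1 : (1 - p) * (M + p * m) ≤ (1 + p) * (M - p * m) := by nlinarith [mul_nonneg hp0 (sub_nonneg.2 hmM)]
  have e1' : ((1 - p) * (M + p * m))^2 ≤ ((1 + p) * (M - p * m))^2 :=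
    pow_le_pow_left₀ (mul_nonneg (by linarith) (by nlinarith)) e1 2
  have hs : (M + p*m)^2 * ((a - p*b) + (b - p*a))^2 ≤ ((1+p)*(M-p*m))^2 * (a+b)^2 := by
    nlinarith [mul_le_mul_of_nonneg_right e1' (sq_nonneg (a+b))]
  -- second coefficient inequality
  have f1 : 0 ≤ M * b - p * m * a := by linarith [mul_le_mul (show p*m ≤ b by linarith) haM ha0 hb0]
  have f2 : 0 ≤ M * a - p * m * b := by linarith [mul_le_mul (show p*m ≤ a by linarith) hbM hb0 ha0]
  have brack : (M + p*m)^2 * (a-b)^2 ≤ (M - p*m)^2 * (a+b)^2 := by nlinarith [mul_nonneg f1 f2]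
  have hd : (M + p*m)^2 * ((a - p*b) - (b - p*a))^2 ≤ ((1+p)*(M-p*m))^2 * (a+b)^2 := by
    nlinarith [mul_le_mul_of_nonneg_left brack (sq_nonneg (1+p))]
  calc ((M + p * m) * ‖((a - p * b : ℝ) : ℂ) * z + ((b - p * a : ℝ) : ℂ) * (starRingEnd ℂ) z‖)^2
      = (M + p*m)^2 * (((a - p*b) + (b - p*a))^2 * z.re^2 + ((a - p*b) - (b - p*a))^2 * z.im^2) := by
        rw [mul_pow, habs2]
    _ ≤ ((1+p)*(M-p*m))^2 * (a+b)^2 * z.re^2 + ((1+p)*(M-p*m))^2 * (a+b)^2 * z.im^2 := by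
        nlinarith [mul_le_mul_of_nonneg_right hs hu2, mul_le_mul_of_nonneg_right hd hv2]
    _ = ((1 + p) * (M - p * m) * ((a + b) * ‖z‖))^2 := by
        rw [show ((1+p)*(M-p*m)*((a+b)*‖z‖))^2
            = ((1+p)*(M-p*m))^2 * ((a+b)^2 * (‖z‖)^2) by ring, habsz2]; ring


set_option maxHeartbeats 1000000 in
/-- Refined q-commutator uncertainty relation, case `|q| ≤ 1`:
`(λₙ + |q|λ₁)²·|Tr[ρ[A₀,B₀]_{|q|}]|² ≤ (1+|q|)²·(λₙ − |q|λ₁)²·V_ρ(A)·V_ρ(B)`. -/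
theorem refined_qcommutator_uncertainty_of_abs_le_one {n : ℕ}
    (ρ A B : Matrix (Fin (n + 1)) (Fin (n + 1)) ℂ)
    (hρ : ρ.PosSemidef) (htr : ρ.trace = 1)
    (hA : A.IsHermitian) (hB : B.IsHermitian)
    (lam : Fin (n + 1) → ℝ) (hlam : IsOrderedEigenvalues hρ.1 lam)
    (hlam0 : 0 ≤ lam 0) (q : ℝ) (hq : |q| ≤ 1) :
    (lam (Fin.last n) + |q| * lam 0) ^ 2 *
        ‖(ρ * qComm |q| (shift ρ A) (shift ρ B)).trace‖ ^ 2 ≤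
      (1 + |q|) ^ 2 * (lam (Fin.last n) - |q| * lam 0) ^ 2 *
        variance ρ A * variance ρ B := by
  obtain ⟨hmono, σ, hσ⟩ := hlam
  set p := |q| with hpdef
  have hp0 : 0 ≤ p := abs_nonneg q
  have hp1 : p ≤ 1 := hq
  set m := lam 0 with hmdef
  set M := lam (Fin.last n) with hMdef
  set lam' : Fin (n+1) → ℝ := hρ.1.eigenvalues with hlam'def
  have hrange : ∀ i, m ≤ lam' i ∧ lam' i ≤ M := by
    intro i
    have h1 : lam' i = lam (σ.symm i) := by
      rw [hσ (σ.symm i), Equiv.apply_symm_apply]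
    exact ⟨h1 ▸ hmono (Fin.zero_le _), h1 ▸ hmono (Fin.le_last _)⟩
  have hl0 : ∀ i, 0 ≤ lam' i := fun i => hlam0.trans (hrange i).1
  have hmM : m ≤ M := (hrange 0).1.trans (hrange 0).2
  have hM0 : 0 ≤ M := hlam0.trans hmM
  have hMpm0 : 0 ≤ M + p * m := by nlinarith
  have hMmpm0 : 0 ≤ M - p * m := by nlinarith
  set U : Matrix (Fin (n+1)) (Fin (n+1)) ℂ := (hρ.1.eigenvectorUnitary : Matrix (Fin (n+1)) (Fin (n+1)) ℂ) with hUdef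
  have hU1 : U * star U = 1 := Unitary.coe_mul_star_self _
  have hU2 : star U * U = 1 := Unitary.coe_star_mul_self _
  -- trace in eigenbasis
  have htrace : ∀ X : Matrix (Fin (n+1)) (Fin (n+1)) ℂ,
      (ρ * X).trace = ∑ j, (lam' j : ℂ) * (star U * X * U) j j := by
    intro X
    conv_lhs => rw [hρ.1.spectral_theorem]
    rw [Unitary.conjStarAlgAut_apply, ← hUdef, show (U * Matrix.diagonal (RCLike.ofReal ∘ lam') * star U * X)
        = U * (Matrix.diagonal (RCLike.ofReal ∘ lam') * (star U * X)) by
      simp only [mul_assoc], Matrix.trace_mul_comm, Matrix.mul_assoc, Matrix.trace]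
    simp only [Matrix.diag_apply, Matrix.diagonal_mul, Function.comp_apply]
    exact Finset.sum_congr rfl fun j _ => by rw [Matrix.mul_assoc]; rfl
  -- conjugation multiplicativity
  have hmulUU : ∀ X Y : Matrix (Fin (n+1)) (Fin (n+1)) ℂ,
      (star U * X * U) * (star U * Y * U) = star U * (X * Y) * U := by
    intro X Y
    have hUX : ∀ Z : Matrix (Fin (n+1)) (Fin (n+1)) ℂ, U * (star U * Z) = Z := by
      intro Z; rw [← mul_assoc, hU1, one_mul]
    simp only [mul_assoc, hUX]
  -- hermiticity of shift and conjugated matrices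
  have htreal : ∀ X : Matrix (Fin (n+1)) (Fin (n+1)) ℂ, X.IsHermitian →
      star ((ρ * X).trace) = (ρ * X).trace := by
    intro X hX
    rw [← Matrix.trace_conjTranspose, Matrix.conjTranspose_mul, hX.eq, hρ.1.eq,
      Matrix.trace_mul_comm]
  have hshift : ∀ X : Matrix (Fin (n+1)) (Fin (n+1)) ℂ, X.IsHermitian →
      (shift ρ X).IsHermitian := by
    intro X hX
    have h1 : ((ρ * X).trace • (1 : Matrix (Fin (n+1)) (Fin (n+1)) ℂ)).IsHermitian := by
      unfold Matrix.IsHermitian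
      rw [Matrix.conjTranspose_smul, Matrix.conjTranspose_one, htreal X hX]
    exact hX.sub h1
  set Atil := star U * shift ρ A * U with hAtildef
  set Btil := star U * shift ρ B * U with hBtildef
  have hAtil : Atil.IsHermitian := by
    rw [hAtildef, Matrix.star_eq_conjTranspose U]
    exact Matrix.isHermitian_conjTranspose_mul_mul U (hshift A hA)
  have hBtil : Btil.IsHermitian := by
    rw [hBtildef, Matrix.star_eq_conjTranspose U]
    exact Matrix.isHermitian_conjTranspose_mul_mul U (hshift B hB)
  have hAsym : ∀ j k, (starRingEnd ℂ) (Atil j k) = Atil k j := by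
    intro j k
    have := congrFun (congrFun hAtil.eq k) j
    rwa [Matrix.conjTranspose_apply, Complex.star_def] at this
  have hBsym : ∀ j k, (starRingEnd ℂ) (Btil j k) = Btil k j := by
    intro j k
    have := congrFun (congrFun hBtil.eq k) j
    rwa [Matrix.conjTranspose_apply, Complex.star_def] at this
  set a : Fin (n+1) → Fin (n+1) → ℝ := fun j k => ‖Atil j k‖ with hadef
  set b : Fin (n+1) → Fin (n+1) → ℝ := fun j k => ‖Btil j k‖ with hbdef
  have hasym : ∀ j k, a k j = a j k := by
    intro j k
    show ‖Atil k j‖ = ‖Atil j k‖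
    rw [← hAsym j k]; exact Complex.norm_conj _
  have hbsym : ∀ j k, b k j = b j k := by
    intro j k
    show ‖Btil k j‖ = ‖Btil j k‖
    rw [← hBsym j k]; exact Complex.norm_conj _
  -- variance formula
  have hVform : ∀ X : Matrix (Fin (n+1)) (Fin (n+1)) ℂ, X.IsHermitian →
      variance ρ X = ∑ j, ∑ k, lam' j * ‖(star U * shift ρ X * U) j k‖^2 := by
    intro X hX
    have hX0 := hshift X hX
    have hY : (star U * shift ρ X * U).IsHermitian := by
      rw [Matrix.star_eq_conjTranspose U]
      exact Matrix.isHermitian_conjTranspose_mul_mul U hX0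
    have hYsym : ∀ j k, (star U * shift ρ X * U) j k * (star U * shift ρ X * U) k j
        = ((‖(star U * shift ρ X * U) j k‖^2 : ℝ) : ℂ) := by
      intro j k
      have h := congrFun (congrFun hY.eq k) j
      rw [Matrix.conjTranspose_apply, Complex.star_def] at h
      rw [← h, Complex.mul_conj, Complex.normSq_eq_norm_sq]
    have h1 : (ρ * (shift ρ X * shift ρ X)).trace
        = (ρ * (X * X)).trace - ((ρ * X).trace) ^ 2 := by
      simp only [shift, Matrix.sub_mul, Matrix.mul_sub, Matrix.mul_smul, Matrix.smul_mul,
        Matrix.mul_one, Matrix.one_mul, Matrix.trace_sub, Matrix.trace_smul, smul_eq_mul,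
        smul_smul, htr]
      ring
    have h3 : (ρ * (shift ρ X * shift ρ X)).trace
        = ∑ j, ∑ k, (((lam' j * ‖(star U * shift ρ X * U) j k‖^2 : ℝ)) : ℂ) := by
      rw [htrace]
      refine Finset.sum_congr rfl fun j _ => ?_
      rw [← hmulUU, Matrix.mul_apply, Finset.mul_sum]
      refine Finset.sum_congr rfl fun k _ => ?_
      rw [hYsym j k]
      push_cast
      ring
    unfold variance
    rw [← h1, h3, Complex.re_sum]
    refine Finset.sum_congr rfl fun j _ => ?_
    rw [Complex.re_sum]
    refine Finset.sum_congr rfl fun k _ => ?_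
    exact Complex.ofReal_re _
  -- trace of the q-commutator
  set T := (ρ * qComm p (shift ρ A) (shift ρ B)).trace with hTdef
  set z : Fin (n+1) → Fin (n+1) → ℂ := fun j k => Atil j k * Btil k j with hzdef
  have hT : T = ∑ j, ∑ k, ((lam' j - p * lam' k : ℝ) : ℂ) * z j k := by
    have e1 : T = (ρ * (shift ρ A * shift ρ B)).trace
        - (p : ℂ) * (ρ * (shift ρ B * shift ρ A)).trace := by
      rw [hTdef]
      simp only [qComm, Matrix.mul_sub, Matrix.mul_smul, Matrix.trace_sub, Matrix.trace_smul,
        smul_eq_mul]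
    have e2 : (ρ * (shift ρ A * shift ρ B)).trace
        = ∑ j, ∑ k, (lam' j : ℂ) * (Atil j k * Btil k j) := by
      rw [htrace]
      refine Finset.sum_congr rfl fun j _ => ?_
      rw [← hmulUU, Matrix.mul_apply, Finset.mul_sum]
    have e3 : (ρ * (shift ρ B * shift ρ A)).trace
        = ∑ j, ∑ k, (lam' k : ℂ) * (Atil j k * Btil k j) := by
      rw [htrace]
      have e3' : ∑ j, (lam' j : ℂ) * (star U * (shift ρ B * shift ρ A) * U) j j
          = ∑ j, ∑ k, (lam' j : ℂ) * (Btil j k * Atil k j) := by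
        refine Finset.sum_congr rfl fun j _ => ?_
        rw [← hmulUU, Matrix.mul_apply, Finset.mul_sum]
      rw [e3', Finset.sum_comm]
      exact Finset.sum_congr rfl fun j _ => Finset.sum_congr rfl fun k _ => by ring
    rw [e1, e2, e3, Finset.mul_sum, ← Finset.sum_sub_distrib]
    refine Finset.sum_congr rfl fun j _ => ?_
    rw [Finset.mul_sum, ← Finset.sum_sub_distrib]
    refine Finset.sum_congr rfl fun k _ => ?_
    simp only [hzdef]
    push_cast
    ring
  have h2T : (2 : ℂ) * T = ∑ j, ∑ k,
      (((lam' j - p * lam' k : ℝ) : ℂ) * z j k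
        + ((lam' k - p * lam' j : ℝ) : ℂ) * (starRingEnd ℂ) (z j k)) := by
    have hzconj : ∀ j k, (starRingEnd ℂ) (z j k) = z k j := by
      intro j k
      simp only [hzdef]
      rw [map_mul (starRingEnd ℂ), hAsym, hBsym]
    have h2 : ∑ j, ∑ k, ((lam' k - p * lam' j : ℝ) : ℂ) * (starRingEnd ℂ) (z j k) = T := by
      rw [hT]
      simp only [hzconj]
      rw [Finset.sum_comm]
    rw [show (∑ j, ∑ k, (((lam' j - p * lam' k : ℝ) : ℂ) * z j k
        + ((lam' k - p * lam' j : ℝ) : ℂ) * (starRingEnd ℂ) (z j k)))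
        = (∑ j, ∑ k, ((lam' j - p * lam' k : ℝ) : ℂ) * z j k)
          + ∑ j, ∑ k, ((lam' k - p * lam' j : ℝ) : ℂ) * (starRingEnd ℂ) (z j k) by
      rw [← Finset.sum_add_distrib]
      exact Finset.sum_congr rfl fun j _ => by rw [← Finset.sum_add_distrib]]
    rw [← hT, h2, two_mul]
  -- main estimate
  set S := ∑ j, ∑ k, (lam' j + lam' k) * (a j k * b j k) with hSdef
  have hmain : (M + p * m) * (2 * ‖T‖) ≤ (1 + p) * (M - p * m) * S := by
    have habs1 : ‖(2 : ℂ) * T‖ = 2 * ‖T‖ := by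
      rw [norm_mul]; simp
    calc (M + p * m) * (2 * ‖T‖) = (M + p * m) * ‖(2 : ℂ) * T‖ := by
          rw [habs1]
      _ ≤ (M + p * m) * ∑ j, ∑ k, ‖((lam' j - p * lam' k : ℝ) : ℂ) * z j k
            + ((lam' k - p * lam' j : ℝ) : ℂ) * (starRingEnd ℂ) (z j k)‖ := by
          apply mul_le_mul_of_nonneg_left _ hMpm0
          rw [h2T]
          refine le_trans (norm_sum_le _ _) ?_
          exact Finset.sum_le_sum fun j _ => norm_sum_le _ _
      _ = ∑ j, ∑ k, (M + p * m) * ‖((lam' j - p * lam' k : ℝ) : ℂ) * z j k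
            + ((lam' k - p * lam' j : ℝ) : ℂ) * (starRingEnd ℂ) (z j k)‖ := by
          rw [Finset.mul_sum]
          exact Finset.sum_congr rfl fun j _ => by rw [Finset.mul_sum]
      _ ≤ ∑ j, ∑ k, (1 + p) * (M - p * m) * ((lam' j + lam' k) * (a j k * b j k)) := by
          refine Finset.sum_le_sum fun j _ => Finset.sum_le_sum fun k _ => ?_
          have habz : ‖z j k‖ = a j k * b j k := by
            show ‖Atil j k * Btil k j‖
              = ‖Atil j k‖ * ‖Btil j k‖
            rw [norm_mul, ← hBsym j k, Complex.norm_conj]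
          have hk := key_point m M p (lam' j) (lam' k) hlam0 hp0 hp1 (hrange j).1 (hrange j).2
            (hrange k).1 (hrange k).2 (z j k)
          rwa [habz] at hk
      _ = (1 + p) * (M - p * m) * S := by
          rw [hSdef, Finset.mul_sum]
          exact Finset.sum_congr rfl fun j _ => by rw [Finset.mul_sum]
  have hCS : S ^ 2 ≤ (2 * variance ρ A) * (2 * variance ρ B) := by
    have key2 : ∀ (c : Fin (n+1) → Fin (n+1) → ℝ), (∀ j k, c k j = c j k) →
        2 * (∑ j, ∑ k, lam' j * (c j k)^2)
          = ∑ jk : Fin (n+1) × Fin (n+1), (Real.sqrt (lam' jk.1 + lam' jk.2) * c jk.1 jk.2)^2 := by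
      intro c hcsym
      rw [Fintype.sum_prod_type]
      have hterm : ∀ j k : Fin (n+1), (Real.sqrt (lam' j + lam' k) * c j k)^2
          = (lam' j + lam' k) * (c j k)^2 := by
        intro j k; rw [mul_pow, Real.sq_sqrt (add_nonneg (hl0 j) (hl0 k))]
      simp only [hterm]
      have hswap : ∑ j, ∑ k, lam' k * (c j k)^2 = ∑ j, ∑ k, lam' j * (c j k)^2 := by
        rw [Finset.sum_comm]
        exact Finset.sum_congr rfl fun x _ => Finset.sum_congr rfl fun y _ => by rw [hcsym x y]
      calc 2 * ∑ j, ∑ k, lam' j * (c j k)^2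
          = ∑ j, ∑ k, lam' j * (c j k)^2 + ∑ j, ∑ k, lam' k * (c j k)^2 := by rw [hswap]; ring
        _ = ∑ j, ∑ k, (lam' j + lam' k) * (c j k)^2 := by
            rw [← Finset.sum_add_distrib]
            refine Finset.sum_congr rfl fun j _ => ?_
            rw [← Finset.sum_add_distrib]
            exact Finset.sum_congr rfl fun k _ => by ring
    have hda : 2 * variance ρ A
        = ∑ jk : Fin (n+1) × Fin (n+1), (Real.sqrt (lam' jk.1 + lam' jk.2) * a jk.1 jk.2)^2 := by
      rw [hVform A hA]; exact key2 a hasym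
    have hdb : 2 * variance ρ B
        = ∑ jk : Fin (n+1) × Fin (n+1), (Real.sqrt (lam' jk.1 + lam' jk.2) * b jk.1 jk.2)^2 := by
      rw [hVform B hB]; exact key2 b hbsym
    have hS : S = ∑ jk : Fin (n+1) × Fin (n+1),
        (Real.sqrt (lam' jk.1 + lam' jk.2) * a jk.1 jk.2)
          * (Real.sqrt (lam' jk.1 + lam' jk.2) * b jk.1 jk.2) := by
      rw [hSdef, Fintype.sum_prod_type]
      refine Finset.sum_congr rfl fun j _ => Finset.sum_congr rfl fun k _ => ?_
      rw [show (Real.sqrt (lam' j + lam' k) * a j k) * (Real.sqrt (lam' j + lam' k) * b j k)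
          = (Real.sqrt (lam' j + lam' k) * Real.sqrt (lam' j + lam' k)) * (a j k * b j k) by ring,
        Real.mul_self_sqrt (add_nonneg (hl0 j) (hl0 k))]
    rw [hS, hda, hdb]
    exact Finset.sum_mul_sq_le_sq_mul_sq _ _ _
  -- conclude
  have hL0 : 0 ≤ (M + p * m) * (2 * ‖T‖) :=
    mul_nonneg hMpm0 (by positivity)
  have hsq := pow_le_pow_left₀ hL0 hmain 2
  have hCS' := mul_le_mul_of_nonneg_left hCS (sq_nonneg ((1 + p) * (M - p * m)))
  nlinarith [hsq, hCS', sq_nonneg (‖T‖)]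
end

section
/- Let ρ be an n×n density matrix with eigenvalues 0 ≤ λ₁ ≤ λ₂ ≤ ⋯ ≤ λ_n, let A, B be n×n self-adjoint complex matrices, and let q ∈ ℝ with |q| > 1. Then (|q|λ_n + λ₁)²·|Tr[ρ[B₀,A₀]_{|q|}]|² ≤ (1+|q|)²·(|q|λ_n − λ₁)²·V_ρ(A)·V_ρ(B). -/
set_option maxHeartbeats 1000000

open Matrix ComplexOrder Finset

section AuxLemmas

section facts
variable {m : ℕ} (ρ A B : Matrix (Fin m) (Fin m) ℂ)

lemma trace_rho_real (hρ : ρ.IsHermitian) (hA : A.IsHermitian) :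
    star ((ρ * A).trace) = (ρ * A).trace := by
  have h1 : (ρ * A)ᴴ = A * ρ := by rw [conjTranspose_mul, hρ, hA]
  calc star ((ρ * A).trace) = ((ρ * A)ᴴ).trace := (Matrix.trace_conjTranspose _).symm
    _ = (A * ρ).trace := by rw [h1]
    _ = (ρ * A).trace := Matrix.trace_mul_comm _ _

lemma shift_isHermitian (hρ : ρ.IsHermitian) (hA : A.IsHermitian) :
    (shift ρ A).IsHermitian := by
  unfold shift Matrix.IsHermitian
  rw [conjTranspose_sub, conjTranspose_smul, conjTranspose_one, hA,
    trace_rho_real ρ A hρ hA]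

lemma trace_rho_shift_sq (htr : ρ.trace = 1) :
    (ρ * (shift ρ A * shift ρ A)).trace
      = (ρ * (A * A)).trace - ((ρ * A).trace) ^ 2 := by
  set t := (ρ * A).trace with ht
  have hexp : shift ρ A * shift ρ A
      = A * A - t • A - t • A + (t * t) • (1 : Matrix (Fin m) (Fin m) ℂ) := by
    unfold shift
    simp only [Matrix.sub_mul, Matrix.mul_sub, Matrix.smul_mul, Matrix.mul_smul,
      Matrix.one_mul, Matrix.mul_one, smul_sub, smul_smul]
    abel
  rw [hexp]
  simp only [Matrix.mul_add, Matrix.mul_sub, Matrix.mul_smul, Matrix.mul_one,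
    Matrix.trace_add, Matrix.trace_sub, Matrix.trace_smul, htr, smul_eq_mul, mul_one, ← ht]
  ring

lemma trace_rho_qComm (q : ℝ) :
    (ρ * qComm q B A).trace
      = (ρ * (B * A)).trace - (q : ℂ) * (ρ * (A * B)).trace := by
  unfold qComm
  rw [Matrix.mul_sub, Matrix.mul_smul, Matrix.trace_sub, Matrix.trace_smul, smul_eq_mul]

lemma trace_conj_z (hρ : ρ.IsHermitian) (hA : A.IsHermitian) (hB : B.IsHermitian) :
    (starRingEnd ℂ) ((ρ * (A * B)).trace) = (ρ * (B * A)).trace := by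
  have h1 : (ρ * (A * B))ᴴ = (B * A) * ρ := by
    rw [conjTranspose_mul, conjTranspose_mul, hρ, hA, hB, Matrix.mul_assoc]
  calc (starRingEnd ℂ) ((ρ * (A * B)).trace) = ((ρ * (A * B))ᴴ).trace :=
        (Matrix.trace_conjTranspose _).symm
    _ = ((B * A) * ρ).trace := by rw [h1]
    _ = (ρ * (B * A)).trace := Matrix.trace_mul_comm _ _

end facts

lemma trace_eq_sum_eig {m : ℕ} {ρ : Matrix (Fin m) (Fin m) ℂ} (hρ : ρ.IsHermitian)
    (M : Matrix (Fin m) (Fin m) ℂ) :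
    (ρ * M).trace = ∑ i, (hρ.eigenvalues i : ℂ) *
      ((star (hρ.eigenvectorUnitary : Matrix (Fin m) (Fin m) ℂ) * M *
        (hρ.eigenvectorUnitary : Matrix (Fin m) (Fin m) ℂ)) i i) := by
  set U := (hρ.eigenvectorUnitary : Matrix (Fin m) (Fin m) ℂ) with hU
  set D := Matrix.diagonal (RCLike.ofReal ∘ hρ.eigenvalues : Fin m → ℂ) with hD
  conv_lhs => rw [hρ.spectral_theorem]
  simp only [Unitary.conjStarAlgAut_apply, Unitary.coe_star]
  have e1 : (U * D * star U) * M = U * (D * (star U * M)) := by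
    rw [Matrix.mul_assoc, Matrix.mul_assoc]
  rw [e1, Matrix.trace_mul_comm, Matrix.mul_assoc, Matrix.mul_assoc]
  rw [show star U * (M * U) = star U * M * U from (Matrix.mul_assoc _ _ _).symm]
  rw [Matrix.trace]
  refine Finset.sum_congr rfl fun i _ => ?_
  rw [Matrix.diag_apply, Matrix.diagonal_mul]
  rfl

lemma conj_entry {m : ℕ} {P : Matrix (Fin m) (Fin m) ℂ} (hP : P.IsHermitian) (i j : Fin m) :
    P i j * P j i = ((‖P i j‖ ^ 2 : ℝ) : ℂ) := by
  have h : P j i = star (P i j) := by rw [← Matrix.conjTranspose_apply, hP]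
  rw [h, Complex.star_def, Complex.mul_conj]
  exact congrArg _ (Complex.sq_norm _).symm

lemma weighted_cs {ι : Type*} [Fintype ι] (w f g : ι → ℝ) (hw : ∀ i, 0 ≤ w i) :
    (∑ i, w i * (f i * g i)) ^ 2 ≤ (∑ i, w i * f i ^ 2) * (∑ i, w i * g i ^ 2) := by
  have h := Finset.sum_mul_sq_le_sq_mul_sq Finset.univ
      (fun i => Real.sqrt (w i) * f i) (fun i => Real.sqrt (w i) * g i)
  have e1 : ∀ i : ι, (Real.sqrt (w i) * f i) * (Real.sqrt (w i) * g i) = w i * (f i * g i) := by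
    intro i; rw [mul_mul_mul_comm, Real.mul_self_sqrt (hw i)]
  have e2 : ∀ i : ι, (Real.sqrt (w i) * f i) ^ 2 = w i * f i ^ 2 := by
    intro i; rw [mul_pow, Real.sq_sqrt (hw i)]
  have e3 : ∀ i : ι, (Real.sqrt (w i) * g i) ^ 2 = w i * g i ^ 2 := by
    intro i; rw [mul_pow, Real.sq_sqrt (hw i)]
  simp only [e1, e2, e3] at h
  exact h

lemma poly_key (a b q : ℝ) (ha : 0 ≤ a) (hab : a ≤ b) (hq : 1 < q) :
    (q - 1) ^ 2 * (q * b + a) ^ 2 * (a + b) ^ 2 + 4 * q * (b - a) ^ 2 * (q * b + a) ^ 2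
      ≤ (1 + q) ^ 2 * (q * b - a) ^ 2 * (a + b) ^ 2 := by
  have hb : 0 ≤ b := le_trans ha hab
  have hq0 : 0 ≤ q := by linarith
  have hF : 0 ≤ 4 * q * (b - a) *
      (a * b ^ 2 * ((3 * q + 1) * (q - 1)) + a ^ 2 * b * ((q + 3) * (q - 1))) := by
    apply mul_nonneg (mul_nonneg (by positivity) (by linarith))
    apply add_nonneg
    · exact mul_nonneg (by positivity) (mul_nonneg (by linarith) (by linarith))
    · exact mul_nonneg (by positivity) (mul_nonneg (by linarith) (by linarith))
  nlinarith [hF]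

lemma sum_key {ι : Type*} [Fintype ι] [Nonempty ι] (lam : ι → ℝ) (a b q : ℝ)
    (hal : ∀ i, a ≤ lam i) (hlb : ∀ i, lam i ≤ b) (ha : 0 ≤ a) (hb : 0 < b) (hq : 1 < q)
    (P Q : Matrix ι ι ℂ) (hP : P.IsHermitian) (hQ : Q.IsHermitian) :
    (q * b + a) ^ 2 * ‖(starRingEnd ℂ) (∑ i, ∑ j, (lam i : ℂ) * (P i j * Q j i))
          - (q : ℂ) * ∑ i, ∑ j, (lam i : ℂ) * (P i j * Q j i)‖ ^ 2 ≤
      (1 + q) ^ 2 * (q * b - a) ^ 2 * (∑ i, ∑ j, lam i * ‖P i j‖ ^ 2)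
        * (∑ i, ∑ j, lam i * ‖Q i j‖ ^ 2) := by
  classical
  have hlam0 : ∀ i, 0 ≤ lam i := fun i => le_trans ha (hal i)
  have hba : a ≤ b := le_trans (hal (Classical.arbitrary ι)) (hlb _)
  have hPc : ∀ i j, (starRingEnd ℂ) (P i j) = P j i := fun i j => by
    conv_rhs => rw [← hP]
    rfl
  have hQc : ∀ i j, (starRingEnd ℂ) (Q i j) = Q j i := fun i j => by
    conv_rhs => rw [← hQ]
    rfl
  have hPabs : ∀ i j, ‖P j i‖ = ‖P i j‖ := fun i j => by
    rw [← hPc i j, Complex.norm_conj]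
  have hQabs : ∀ i j, ‖Q j i‖ = ‖Q i j‖ := fun i j => by
    rw [← hQc i j, Complex.norm_conj]
  set z : ℂ := ∑ i, ∑ j, (lam i : ℂ) * (P i j * Q j i) with hz
  set VA : ℝ := ∑ i, ∑ j, lam i * ‖P i j‖ ^ 2 with hVA
  set VB : ℝ := ∑ i, ∑ j, lam i * ‖Q i j‖ ^ 2 with hVB
  set SA : ℝ := ∑ i, ∑ j, |lam i - lam j| * ‖P i j‖ ^ 2 with hSA
  set SB : ℝ := ∑ i, ∑ j, |lam i - lam j| * ‖Q i j‖ ^ 2 with hSB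
  have hVA0 : 0 ≤ VA := Finset.sum_nonneg fun i _ => Finset.sum_nonneg fun j _ =>
    mul_nonneg (hlam0 i) (by positivity)
  have hVB0 : 0 ≤ VB := Finset.sum_nonneg fun i _ => Finset.sum_nonneg fun j _ =>
    mul_nonneg (hlam0 i) (by positivity)
  have hSA0 : 0 ≤ SA := Finset.sum_nonneg fun i _ => Finset.sum_nonneg fun j _ =>
    mul_nonneg (abs_nonneg _) (by positivity)
  have hSB0 : 0 ≤ SB := Finset.sum_nonneg fun i _ => Finset.sum_nonneg fun j _ =>
    mul_nonneg (abs_nonneg _) (by positivity)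
  -- Cauchy-Schwarz: |z|^2 ≤ VA * VB
  have h1 : ‖z‖ ^ 2 ≤ VA * VB := by
    have htri : ‖z‖ ≤
        ∑ i, ∑ j, lam i * (‖P i j‖ * ‖Q j i‖) := by
      rw [hz]
      refine le_trans (norm_sum_le _ _) (Finset.sum_le_sum fun i _ => ?_)
      refine le_trans (norm_sum_le _ _) (le_of_eq (Finset.sum_congr rfl fun j _ => ?_))
      rw [norm_mul, norm_mul, Complex.norm_real, Real.norm_eq_abs, abs_of_nonneg (hlam0 i)]
    have hcs : (∑ i, ∑ j, lam i * (‖P i j‖ * ‖Q j i‖)) ^ 2 ≤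
        (∑ i, ∑ j, lam i * ‖P i j‖ ^ 2)
          * (∑ i, ∑ j, lam i * ‖Q j i‖ ^ 2) := by
      have h := weighted_cs (fun p : ι × ι => lam p.1)
        (fun p : ι × ι => ‖P p.1 p.2‖) (fun p : ι × ι => ‖Q p.2 p.1‖)
        (fun p => hlam0 p.1)
      simpa only [Fintype.sum_prod_type] using h
    have hEB : (∑ i, ∑ j, lam i * ‖Q j i‖ ^ 2) = VB :=
      Finset.sum_congr rfl fun i _ => Finset.sum_congr rfl fun j _ => by rw [hQabs]
    rw [hEB] at hcs
    exact le_trans (pow_le_pow_left₀ (norm_nonneg _) htri 2) hcs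
  -- conjugate of z
  have hconj : (starRingEnd ℂ) z = ∑ i, ∑ j, (lam j : ℂ) * (P i j * Q j i) := by
    rw [hz, map_sum]
    rw [show (∑ i, (starRingEnd ℂ) (∑ j, (lam i : ℂ) * (P i j * Q j i)))
        = ∑ i, ∑ j, (lam i : ℂ) * (P j i * Q i j) from Finset.sum_congr rfl fun i _ => by
          rw [map_sum]
          exact Finset.sum_congr rfl fun j _ => by
            rw [_root_.map_mul, _root_.map_mul, Complex.conj_ofReal, hPc, hQc]]
    exact Finset.sum_comm
  -- z - conj z
  have hsub : z - (starRingEnd ℂ) z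
      = ∑ i, ∑ j, ((lam i : ℂ) - (lam j : ℂ)) * (P i j * Q j i) := by
    rw [hconj, hz, ← Finset.sum_sub_distrib]
    exact Finset.sum_congr rfl fun i _ => by
      rw [← Finset.sum_sub_distrib]
      exact Finset.sum_congr rfl fun j _ => by ring
  -- refined bound on the commutator part
  have h2 : ‖z - (starRingEnd ℂ) z‖ ^ 2 ≤ SA * SB := by
    have htri : ‖z - (starRingEnd ℂ) z‖ ≤
        ∑ i, ∑ j, |lam i - lam j| * (‖P i j‖ * ‖Q j i‖) := by
      rw [hsub]
      refine le_trans (norm_sum_le _ _) (Finset.sum_le_sum fun i _ => ?_)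
      refine le_trans (norm_sum_le _ _) (le_of_eq (Finset.sum_congr rfl fun j _ => ?_))
      rw [norm_mul, norm_mul, ← Complex.ofReal_sub, Complex.norm_real, Real.norm_eq_abs]
    have hcs : (∑ i, ∑ j, |lam i - lam j| * (‖P i j‖ * ‖Q j i‖)) ^ 2 ≤
        (∑ i, ∑ j, |lam i - lam j| * ‖P i j‖ ^ 2)
          * (∑ i, ∑ j, |lam i - lam j| * ‖Q j i‖ ^ 2) := by
      have h := weighted_cs (fun p : ι × ι => |lam p.1 - lam p.2|)
        (fun p : ι × ι => ‖P p.1 p.2‖) (fun p : ι × ι => ‖Q p.2 p.1‖)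
        (fun p => abs_nonneg _)
      simpa only [Fintype.sum_prod_type] using h
    have hEB : (∑ i, ∑ j, |lam i - lam j| * ‖Q j i‖ ^ 2) = SB :=
      Finset.sum_congr rfl fun i _ => Finset.sum_congr rfl fun j _ => by rw [hQabs]
    rw [hEB] at hcs
    exact le_trans (pow_le_pow_left₀ (norm_nonneg _) htri 2) hcs
  -- (a+b)·S ≤ 2(b−a)·V
  have hscal : ∀ i j : ι, (a + b) * |lam i - lam j| ≤ (b - a) * (lam i + lam j) := by
    intro i j
    rcases abs_cases (lam i - lam j) with ⟨h, _⟩ | ⟨h, _⟩ <;> rw [h] <;>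
      nlinarith [mul_le_mul_of_nonneg_left (hlb i) ha, mul_le_mul_of_nonneg_left (hlb j) ha,
        mul_le_mul_of_nonneg_left (hal i) hb.le, mul_le_mul_of_nonneg_left (hal j) hb.le]
  have hswap : ∀ R : Matrix ι ι ℂ, (∀ i j, ‖R j i‖ = ‖R i j‖) →
      (∑ i, ∑ j, lam j * ‖R i j‖ ^ 2)
        = ∑ i, ∑ j, lam i * ‖R i j‖ ^ 2 := by
    intro R hR
    rw [Finset.sum_comm]
    exact Finset.sum_congr rfl fun i _ => Finset.sum_congr rfl fun j _ => by rw [hR]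
  have h3 : ∀ R : Matrix ι ι ℂ, (∀ i j, ‖R j i‖ = ‖R i j‖) →
      (a + b) * (∑ i, ∑ j, |lam i - lam j| * ‖R i j‖ ^ 2)
        ≤ 2 * (b - a) * (∑ i, ∑ j, lam i * ‖R i j‖ ^ 2) := by
    intro R hR
    have step : ∑ i, ∑ j, (a + b) * (|lam i - lam j| * ‖R i j‖ ^ 2)
        ≤ ∑ i, ∑ j, (b - a) * ((lam i + lam j) * ‖R i j‖ ^ 2) := by
      refine Finset.sum_le_sum fun i _ => Finset.sum_le_sum fun j _ => ?_
      have := mul_le_mul_of_nonneg_right (hscal i j)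
        (by positivity : (0:ℝ) ≤ ‖R i j‖ ^ 2)
      nlinarith [this]
    have e1 : (a + b) * (∑ i, ∑ j, |lam i - lam j| * ‖R i j‖ ^ 2)
        = ∑ i, ∑ j, (a + b) * (|lam i - lam j| * ‖R i j‖ ^ 2) := by
      rw [Finset.mul_sum]
      exact Finset.sum_congr rfl fun i _ => Finset.mul_sum _ _ _
    have e2 : ∑ i, ∑ j, (b - a) * ((lam i + lam j) * ‖R i j‖ ^ 2)
        = (b - a) * ((∑ i, ∑ j, lam i * ‖R i j‖ ^ 2)
            + ∑ i, ∑ j, lam j * ‖R i j‖ ^ 2) := by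
      rw [mul_add, Finset.mul_sum, Finset.mul_sum, ← Finset.sum_add_distrib]
      refine Finset.sum_congr rfl fun i _ => ?_
      rw [Finset.mul_sum, Finset.mul_sum, ← Finset.sum_add_distrib]
      exact Finset.sum_congr rfl fun j _ => by ring
    rw [e1]
    calc _ ≤ _ := step
      _ = _ := e2
      _ = 2 * (b - a) * (∑ i, ∑ j, lam i * ‖R i j‖ ^ 2) := by
          rw [hswap R hR]; ring
  have h3A := h3 P hPabs
  have h3B := h3 Q hQabs
  rw [← hSA, ← hVA] at h3A
  rw [← hSB, ← hVB] at h3B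
  have hab : 0 < a + b := by linarith
  have h2' : (a + b) ^ 2 * ‖z - (starRingEnd ℂ) z‖ ^ 2
      ≤ 4 * (b - a) ^ 2 * (VA * VB) := by
    calc (a + b) ^ 2 * ‖z - (starRingEnd ℂ) z‖ ^ 2
        ≤ (a + b) ^ 2 * (SA * SB) := by
          exact mul_le_mul_of_nonneg_left h2 (by positivity)
      _ = ((a + b) * SA) * ((a + b) * SB) := by ring
      _ ≤ (2 * (b - a) * VA) * (2 * (b - a) * VB) := by
          refine mul_le_mul h3A h3B (mul_nonneg hab.le hSB0) ?_
          nlinarith [hVA0]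
      _ = 4 * (b - a) ^ 2 * (VA * VB) := by ring
  -- coordinates
  set x : ℝ := z.re with hx
  set y : ℝ := z.im with hy
  have hz2 : ‖z‖ ^ 2 = x ^ 2 + y ^ 2 := by
    rw [Complex.sq_norm, Complex.normSq_apply]; ring
  have hzz : ‖z - (starRingEnd ℂ) z‖ ^ 2 = 4 * y ^ 2 := by
    rw [Complex.sq_norm, Complex.normSq_apply, Complex.sub_re, Complex.sub_im,
      Complex.conj_re, Complex.conj_im]
    ring
  have htgt : ‖(starRingEnd ℂ) z - (q : ℂ) * z‖ ^ 2
      = (1 - q) ^ 2 * x ^ 2 + (1 + q) ^ 2 * y ^ 2 := by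
    rw [Complex.sq_norm, Complex.normSq_apply, Complex.sub_re, Complex.sub_im,
      Complex.conj_re, Complex.conj_im, Complex.mul_re, Complex.mul_im,
      Complex.ofReal_re, Complex.ofReal_im]
    ring
  rw [htgt]
  rw [hz2] at h1
  rw [hzz] at h2'
  -- final polynomial step
  have hpoly := poly_key a b q ha hba hq
  have hP0 : 0 ≤ VA * VB := mul_nonneg hVA0 hVB0
  have hq0 : (0:ℝ) < q := by linarith
  have hmain : ((q * b + a) ^ 2 * ((1 - q) ^ 2 * x ^ 2 + (1 + q) ^ 2 * y ^ 2)) * (a + b) ^ 2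
      ≤ ((1 + q) ^ 2 * (q * b - a) ^ 2 * VA * VB) * (a + b) ^ 2 := by
    have h1' := mul_le_mul_of_nonneg_left h1
      (by positivity : (0:ℝ) ≤ (q - 1) ^ 2 * (q * b + a) ^ 2 * (a + b) ^ 2)
    have h2'' := mul_le_mul_of_nonneg_left h2'
      (by positivity : (0:ℝ) ≤ q * (q * b + a) ^ 2)
    have h3' := mul_le_mul_of_nonneg_right hpoly hP0
    linarith [h1', h2'', h3']
  exact le_of_mul_le_mul_right hmain (by positivity : (0:ℝ) < (a + b) ^ 2)

end AuxLemmas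

/-- Refined q-commutator uncertainty relation, case `|q| > 1`:
`(|q|λₙ + λ₁)²·|Tr[ρ[B₀,A₀]_{|q|}]|² ≤ (1+|q|)²·(|q|λₙ − λ₁)²·V_ρ(A)·V_ρ(B)`. -/
theorem refined_qcommutator_uncertainty_of_one_lt_abs {n : ℕ}
    (ρ A B : Matrix (Fin (n + 1)) (Fin (n + 1)) ℂ)
    (hρ : ρ.PosSemidef) (htr : ρ.trace = 1)
    (hA : A.IsHermitian) (hB : B.IsHermitian)
    (lam : Fin (n + 1) → ℝ) (hlam : IsOrderedEigenvalues hρ.1 lam)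
    (hlam0 : 0 ≤ lam 0) (q : ℝ) (hq : 1 < |q|) :
    (|q| * lam (Fin.last n) + lam 0) ^ 2 *
        ‖(ρ * qComm |q| (shift ρ B) (shift ρ A)).trace‖ ^ 2 ≤
      (1 + |q|) ^ 2 * (|q| * lam (Fin.last n) - lam 0) ^ 2 *
        variance ρ A * variance ρ B := by
  obtain ⟨hmono, σ, hσ⟩ := hlam
  set hH := hρ.1 with hHdef
  set lam' : Fin (n+1) → ℝ := hH.eigenvalues with hlam'
  set U : Matrix (Fin (n+1)) (Fin (n+1)) ℂ := (↑hH.eigenvectorUnitary : Matrix (Fin (n+1)) (Fin (n+1)) ℂ) with hUdef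
  have hU1 : U * star U = 1 := mem_unitaryGroup_iff.mp hH.eigenvectorUnitary.2
  set A₀ := shift ρ A with hA₀
  set B₀ := shift ρ B with hB₀
  have hA₀H : A₀.IsHermitian := shift_isHermitian ρ A hH hA
  have hB₀H : B₀.IsHermitian := shift_isHermitian ρ B hH hB
  set P := star U * A₀ * U with hPdef
  set Q := star U * B₀ * U with hQdef
  have hPH : P.IsHermitian := by
    rw [hPdef, Matrix.star_eq_conjTranspose]
    exact Matrix.isHermitian_conjTranspose_mul_mul U hA₀H
  have hQH : Q.IsHermitian := by
    rw [hQdef, Matrix.star_eq_conjTranspose]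
    exact Matrix.isHermitian_conjTranspose_mul_mul U hB₀H
  -- conjugation is multiplicative
  have keyMul : ∀ M N : Matrix (Fin (n+1)) (Fin (n+1)) ℂ,
      star U * (M * N) * U = (star U * M * U) * (star U * N * U) := by
    intro M N
    have h : U * (star U * (N * U)) = N * U := by
      rw [← Matrix.mul_assoc, hU1, Matrix.one_mul]
    simp only [Matrix.mul_assoc, h]
  -- trace formulas
  have key : ∀ M : Matrix (Fin (n+1)) (Fin (n+1)) ℂ,
      (ρ * M).trace = ∑ i, (lam' i : ℂ) * ((star U * M * U) i i) :=
    fun M => trace_eq_sum_eig hH M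
  have hzA : (ρ * (A₀ * B₀)).trace
      = ∑ i, ∑ j, (lam' i : ℂ) * (P i j * Q j i) := by
    rw [key (A₀ * B₀), Finset.sum_congr rfl fun i _ => ?_]
    rw [keyMul, ← hPdef, ← hQdef, Matrix.mul_apply, Finset.mul_sum]
  -- variances
  have hvar : ∀ (C : Matrix (Fin (n+1)) (Fin (n+1)) ℂ), C.IsHermitian →
      ∀ (C₀ : Matrix (Fin (n+1)) (Fin (n+1)) ℂ), C₀ = shift ρ C →
      ∀ (R : Matrix (Fin (n+1)) (Fin (n+1)) ℂ), R = star U * C₀ * U → R.IsHermitian →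
      variance ρ C = ∑ i, ∑ j, lam' i * ‖R i j‖ ^ 2 := by
    intro C hC C₀ hC₀ R hR hRH
    have h1 : (ρ * (C₀ * C₀)).trace = ((∑ i, ∑ j, lam' i * ‖R i j‖ ^ 2 : ℝ) : ℂ) := by
      rw [hC₀] at hR
      rw [key (C₀ * C₀), hC₀]
      push_cast
      refine Finset.sum_congr rfl fun i _ => ?_
      rw [keyMul, ← hR]
      rw [Matrix.mul_apply, Finset.mul_sum]
      refine Finset.sum_congr rfl fun j _ => ?_
      rw [conj_entry hRH i j]
      push_cast
      ring
    unfold variance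
    rw [← trace_rho_shift_sq ρ C htr, ← hC₀, h1, Complex.ofReal_re]
  have hvA : variance ρ A = ∑ i, ∑ j, lam' i * ‖P i j‖ ^ 2 :=
    hvar A hA A₀ hA₀ P hPdef hPH
  have hvB : variance ρ B = ∑ i, ∑ j, lam' i * ‖Q i j‖ ^ 2 :=
    hvar B hB B₀ hB₀ Q hQdef hQH
  -- the q-commutator trace
  have hqc : (ρ * qComm |q| B₀ A₀).trace
      = (starRingEnd ℂ) (∑ i, ∑ j, (lam' i : ℂ) * (P i j * Q j i))
        - ((|q| : ℝ) : ℂ) * ∑ i, ∑ j, (lam' i : ℂ) * (P i j * Q j i) := by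
    rw [trace_rho_qComm ρ A₀ B₀ |q|, ← hzA,
      ← trace_conj_z ρ A₀ B₀ hH hA₀H hB₀H]
  -- eigenvalue bounds
  have hal : ∀ i, lam 0 ≤ lam' i := by
    intro i
    have h := hσ (σ.symm i)
    rw [Equiv.apply_symm_apply] at h
    rw [← h]
    exact hmono (Fin.zero_le _)
  have hlb : ∀ i, lam' i ≤ lam (Fin.last n) := by
    intro i
    have h := hσ (σ.symm i)
    rw [Equiv.apply_symm_apply] at h
    rw [← h]
    exact hmono (Fin.le_last _)
  have hsum1 : ∑ i, lam' i = 1 := by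
    have hU2 : star U * U = 1 := mem_unitaryGroup_iff'.mp hH.eigenvectorUnitary.2
    have h := key 1
    rw [Matrix.mul_one, htr] at h
    rw [show star U * 1 * U = (1 : Matrix (Fin (n+1)) (Fin (n+1)) ℂ) from by
      rw [Matrix.mul_one, hU2]] at h
    have h' : ((1:ℝ):ℂ) = ((∑ i, lam' i : ℝ) : ℂ) := by
      push_cast
      simpa [Matrix.one_apply_eq] using h
    exact (Complex.ofReal_inj.mp h').symm
  have hb : 0 < lam (Fin.last n) := by
    by_contra hc
    push_neg at hc
    have : ∑ i, lam' i ≤ 0 :=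
      Finset.sum_nonpos fun i _ => le_trans (hlb i) hc
    linarith [hsum1]
  -- apply the main sum inequality
  have main := sum_key lam' (lam 0) (lam (Fin.last n)) |q| hal hlb hlam0 hb hq P Q hPH hQH
  rw [hqc, hvA, hvB]
  exact main
end

section
/- Let ρ be an n×n density matrix with eigenvalues 0 ≤ λ₁ ≤ λ₂ ≤ ⋯ ≤ λ_n, let A, B be n×n self-adjoint complex matrices, and let q ∈ ℝ with |q| > 1. Then (q²·(|q|λ_n + λ₁)²)·|Tr[ρ[A₀,B₀]_{1/|q|}]|² = (|q|λ_n + λ₁)²·|Tr[ρ[B₀,A₀]_{|q|}]|², and this common value is ≤ (1+|q|)²·(|q|λ_n − λ₁)²·V_ρ(A)·V_ρ(B). -/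
open Matrix ComplexOrder Finset

private lemma key_scalar {Q c1 cn x y : ℝ} (hQ : 1 ≤ Q) (h0 : 0 ≤ c1) (hx1 : c1 ≤ x)
    (hxn : x ≤ cn) (hy1 : c1 ≤ y) (hyn : y ≤ cn) :
    |y - Q * x| * (Q * cn + c1) ≤ (Q * cn - c1) * (y + Q * x) := by
  have hx0 : 0 ≤ x := h0.trans hx1
  have hy0 : 0 ≤ y := h0.trans hy1
  have hcn : 0 ≤ cn := hx0.trans hxn
  have hQ0 : 0 ≤ Q := zero_le_one.trans hQ
  have hQ2 : 1 ≤ Q ^ 2 := by nlinarith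
  rcases abs_cases (y - Q * x) with ⟨h, _⟩ | ⟨h, _⟩ <;> rw [h]
  · nlinarith [mul_le_mul_of_nonneg_left hyn h0, mul_le_mul_of_nonneg_right hx1 hcn,
      mul_nonneg hx0 hcn]
  · have h1 : c1 * x ≤ cn * y := by
      nlinarith [mul_le_mul_of_nonneg_right hy1 hx0, mul_le_mul_of_nonneg_left hxn hy0]
    nlinarith [mul_le_mul_of_nonneg_left h1 hQ0]


set_option maxHeartbeats 2000000 in
/-- Refined q-commutator uncertainty relation, case `|q| > 1`, with the identity
`q²·(|q|λₙ + λ₁)²·|Tr[ρ[A₀,B₀]_{1/|q|}]|² = (|q|λₙ + λ₁)²·|Tr[ρ[B₀,A₀]_{|q|}]|²`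
and the bound `≤ (1+|q|)²·(|q|λₙ − λ₁)²·V_ρ(A)·V_ρ(B)`. -/
theorem refined_qcommutator_uncertainty_of_one_lt_abs' {n : ℕ}
    (ρ A B : Matrix (Fin (n + 1)) (Fin (n + 1)) ℂ)
    (hρ : ρ.PosSemidef) (htr : ρ.trace = 1)
    (hA : A.IsHermitian) (hB : B.IsHermitian)
    (lam : Fin (n + 1) → ℝ) (hlam : IsOrderedEigenvalues hρ.1 lam)
    (hlam0 : 0 ≤ lam 0) (q : ℝ) (hq : 1 < |q|) :
    q ^ 2 * (|q| * lam (Fin.last n) + lam 0) ^ 2 *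
        ‖(ρ * qComm (1 / |q|) (shift ρ A) (shift ρ B)).trace‖ ^ 2 =
      (|q| * lam (Fin.last n) + lam 0) ^ 2 *
        ‖(ρ * qComm |q| (shift ρ B) (shift ρ A)).trace‖ ^ 2 ∧
    (|q| * lam (Fin.last n) + lam 0) ^ 2 *
        ‖(ρ * qComm |q| (shift ρ B) (shift ρ A)).trace‖ ^ 2 ≤
      (1 + |q|) ^ 2 * (|q| * lam (Fin.last n) - lam 0) ^ 2 *
        variance ρ A * variance ρ B := by
  have hQ1 : (1 : ℝ) ≤ |q| := hq.le
  have hQpos : (0 : ℝ) < |q| := lt_trans one_pos hq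
  have hQne : ((|q| : ℝ) : ℂ) ≠ 0 := by
    simpa using hQpos.ne'
  -- Part 1 : the identity
  have hconv : qComm (1 / |q|) (shift ρ A) (shift ρ B)
      = (-(((|q| : ℝ) : ℂ))⁻¹) • qComm |q| (shift ρ B) (shift ρ A) := by
    simp only [qComm]
    push_cast
    match_scalars <;> field_simp
  have habs1 : ‖(ρ * qComm (1 / |q|) (shift ρ A) (shift ρ B)).trace‖
      = |q|⁻¹ * ‖(ρ * qComm |q| (shift ρ B) (shift ρ A)).trace‖ := by
    rw [hconv, Matrix.mul_smul, Matrix.trace_smul, smul_eq_mul, norm_mul]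
    congr 1
    rw [norm_neg, norm_inv, Complex.norm_real, Real.norm_eq_abs, abs_abs]
  constructor
  · rw [habs1, mul_pow]
    have hq0 : q ≠ 0 := by intro h; rw [h, abs_zero] at hq; linarith
    have h2 : (|q|⁻¹) ^ 2 * q ^ 2 = 1 := by rw [← sq_abs q]; field_simp
    linear_combination ((|q| * lam (Fin.last n) + lam 0) ^ 2 *
      ‖(ρ * qComm |q| (shift ρ B) (shift ρ A)).trace‖ ^ 2) * h2
  -- Part 2 : the inequality
  -- setup : spectral data
  set U : Matrix (Fin (n+1)) (Fin (n+1)) ℂ := ↑(hρ.1.eigenvectorUnitary) with hU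
  set μ : Fin (n+1) → ℝ := hρ.1.eigenvalues with hμdef
  have hUU' : U * star U = 1 := mem_unitaryGroup_iff.mp (hρ.1.eigenvectorUnitary).2
  have hUU : star U * U = 1 := mem_unitaryGroup_iff'.mp (hρ.1.eigenvectorUnitary).2
  have hspec : ρ = U * Matrix.diagonal (fun i => (μ i : ℂ)) * star U :=
    hρ.1.spectral_theorem
  have htrace : ∀ M : Matrix (Fin (n+1)) (Fin (n+1)) ℂ,
      (ρ * M).trace = ∑ i, (μ i : ℂ) * ((star U * (M * U)) i i) := by
    intro M
    conv_lhs => rw [hspec]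
    rw [show U * Matrix.diagonal (fun i => (μ i : ℂ)) * star U * M
        = U * (Matrix.diagonal (fun i => (μ i : ℂ)) * (star U * M)) by
      simp [Matrix.mul_assoc]]
    rw [Matrix.trace_mul_comm]
    rw [show Matrix.diagonal (fun i => (μ i : ℂ)) * (star U * M) * U
        = Matrix.diagonal (fun i => (μ i : ℂ)) * (star U * (M * U)) by
      simp [Matrix.mul_assoc]]
    simp [Matrix.trace, Matrix.diag, Matrix.diagonal_mul]
  have hcancel : ∀ Z : Matrix (Fin (n+1)) (Fin (n+1)) ℂ, U * (star U * Z) = Z := by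
    intro Z; rw [← Matrix.mul_assoc, hUU', Matrix.one_mul]
  set A' : Matrix (Fin (n+1)) (Fin (n+1)) ℂ := star U * (shift ρ A * U) with hA'
  set B' : Matrix (Fin (n+1)) (Fin (n+1)) ℂ := star U * (shift ρ B * U) with hB'
  have hg_mul : ∀ X Y : Matrix (Fin (n+1)) (Fin (n+1)) ℂ,
      star U * (X * Y * U) = (star U * (X * U)) * (star U * (Y * U)) := by
    intro X Y
    simp only [Matrix.mul_assoc, hcancel]
  -- trace of ρ times hermitian is real
  have hts : ∀ {M : Matrix (Fin (n+1)) (Fin (n+1)) ℂ}, M.IsHermitian →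
      star ((ρ * M).trace) = (ρ * M).trace := by
    intro M hM
    rw [← Matrix.trace_conjTranspose, Matrix.conjTranspose_mul, hM.eq, hρ.1.eq,
      Matrix.trace_mul_comm]
  have hshiftA : (shift ρ A).IsHermitian := by
    unfold Matrix.IsHermitian
    simp [shift, Matrix.conjTranspose_sub, Matrix.conjTranspose_smul, hA.eq, hts hA]
  have hshiftB : (shift ρ B).IsHermitian := by
    unfold Matrix.IsHermitian
    simp [shift, Matrix.conjTranspose_sub, Matrix.conjTranspose_smul, hB.eq, hts hB]
  have hg_herm : ∀ {M : Matrix (Fin (n+1)) (Fin (n+1)) ℂ}, M.IsHermitian →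
      (star U * (M * U)).IsHermitian := by
    intro M hM
    unfold Matrix.IsHermitian
    simp [Matrix.star_eq_conjTranspose, Matrix.conjTranspose_mul, hM.eq, Matrix.mul_assoc]
  have hA'h : A'.IsHermitian := by rw [hA']; exact hg_herm hshiftA
  have hB'h : B'.IsHermitian := by rw [hB']; exact hg_herm hshiftB
  have habs_star : ∀ z : ℂ, ‖star z‖ = ‖z‖ := fun z => by
    rw [Complex.star_def, Complex.norm_conj]
  have habsA : ∀ i j, ‖A' j i‖ = ‖A' i j‖ := by
    intro i j; rw [← hA'h.apply i j, habs_star]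
  have habsB : ∀ i j, ‖B' j i‖ = ‖B' i j‖ := by
    intro i j; rw [← hB'h.apply i j, habs_star]
  have hdouble : ∀ X Y : Matrix (Fin (n+1)) (Fin (n+1)) ℂ,
      (ρ * (X * Y)).trace = ∑ i, ∑ j, (μ i : ℂ) *
        ((star U * (X * U)) i j * (star U * (Y * U)) j i) := by
    intro X Y
    rw [htrace (X * Y)]
    simp only [hg_mul]
    simp [Matrix.mul_apply, Finset.mul_sum]
  -- eigenvalue bounds
  have hbnd : ∀ j, lam 0 ≤ μ j ∧ μ j ≤ lam (Fin.last n) := by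
    obtain ⟨hmono, σ, hσ⟩ := hlam
    intro j
    have h1 : lam (σ.symm j) = μ j := by
      rw [hσ (σ.symm j), Equiv.apply_symm_apply, hμdef]
    exact ⟨h1 ▸ hmono (Fin.zero_le _), h1 ▸ hmono (Fin.le_last _)⟩
  have hμ0 : ∀ i, 0 ≤ μ i := fun i => hlam0.trans (hbnd i).1
  have hc1cn : lam 0 ≤ lam (Fin.last n) := (hbnd 0).1.trans (hbnd 0).2
  have hcn0 : 0 ≤ lam (Fin.last n) := hlam0.trans hc1cn
  -- the trace as a double sum
  have hTsum : (ρ * qComm |q| (shift ρ B) (shift ρ A)).trace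
      = ∑ i, ∑ j, ((μ j : ℂ) - |q| * μ i) * (A' i j * B' j i) := by
    have e1 : (ρ * (shift ρ B * shift ρ A)).trace
        = ∑ i, ∑ j, (μ j : ℂ) * (A' i j * B' j i) := by
      rw [hdouble, ← hA', ← hB', Finset.sum_comm]
      exact Finset.sum_congr rfl fun i _ => Finset.sum_congr rfl fun j _ => by ring
    have e2 : (ρ * (shift ρ A * shift ρ B)).trace
        = ∑ i, ∑ j, (μ i : ℂ) * (A' i j * B' j i) := by
      rw [hdouble, ← hA', ← hB']
    calc (ρ * qComm |q| (shift ρ B) (shift ρ A)).trace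
        = (ρ * (shift ρ B * shift ρ A)).trace
            - ((|q| : ℝ) : ℂ) * (ρ * (shift ρ A * shift ρ B)).trace := by
          simp only [qComm]
          rw [Matrix.mul_sub, Matrix.mul_smul, Matrix.trace_sub, Matrix.trace_smul, smul_eq_mul]
      _ = ∑ i, ∑ j, ((μ j : ℂ) - |q| * μ i) * (A' i j * B' j i) := by
          rw [e1, e2, Finset.mul_sum, ← Finset.sum_sub_distrib]
          refine Finset.sum_congr rfl fun i _ => ?_
          rw [Finset.mul_sum, ← Finset.sum_sub_distrib]
          exact Finset.sum_congr rfl fun j _ => by ring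
  have habsT : ‖(ρ * qComm |q| (shift ρ B) (shift ρ A)).trace‖
      ≤ ∑ i, ∑ j, |μ j - |q| * μ i| * (‖A' i j‖ * ‖B' i j‖) := by
    rw [hTsum]
    refine (norm_sum_le _ _).trans (Finset.sum_le_sum fun i _ => ?_)
    refine (norm_sum_le _ _).trans (Finset.sum_le_sum fun j _ => le_of_eq ?_)
    rw [norm_mul, norm_mul, habsB i j]
    congr 1
    rw [show ((μ j : ℂ) - |q| * μ i) = ((μ j - |q| * μ i : ℝ) : ℂ) by push_cast; ring,
      Complex.norm_real, Real.norm_eq_abs]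
  -- scalar bound, summed
  have hkey : ∀ i j : Fin (n+1), |μ j - |q| * μ i| * (|q| * lam (Fin.last n) + lam 0)
      ≤ (|q| * lam (Fin.last n) - lam 0) * (μ j + |q| * μ i) :=
    fun i j => key_scalar hQ1 hlam0 (hbnd i).1 (hbnd i).2 (hbnd j).1 (hbnd j).2
  have hstep1 : (∑ i, ∑ j, |μ j - |q| * μ i| *
        (‖A' i j‖ * ‖B' i j‖)) * (|q| * lam (Fin.last n) + lam 0)
      ≤ ∑ i, ∑ j, ((|q| * lam (Fin.last n) - lam 0) * (μ j + |q| * μ i)) *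
        (‖A' i j‖ * ‖B' i j‖) := by
    rw [Finset.sum_mul]
    refine Finset.sum_le_sum fun i _ => ?_
    rw [Finset.sum_mul]
    refine Finset.sum_le_sum fun j _ => ?_
    rw [mul_right_comm]
    exact mul_le_mul_of_nonneg_right (hkey i j)
      (mul_nonneg (norm_nonneg _) (norm_nonneg _))
  have hs1 : ∑ i, ∑ j, μ j * (‖A' i j‖ * ‖B' i j‖)
      = ∑ i, ∑ j, μ i * (‖A' i j‖ * ‖B' i j‖) := by
    rw [Finset.sum_comm]
    refine Finset.sum_congr rfl fun i _ => Finset.sum_congr rfl fun j _ => ?_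
    rw [habsA i j, habsB i j]
  have hsplit : ∑ i, ∑ j, ((|q| * lam (Fin.last n) - lam 0) * (μ j + |q| * μ i)) *
        (‖A' i j‖ * ‖B' i j‖)
      = (|q| * lam (Fin.last n) - lam 0) * ((1 + |q|) *
        ∑ i, ∑ j, μ i * (‖A' i j‖ * ‖B' i j‖)) := by
    have e : ∀ i j : Fin (n+1), ((|q| * lam (Fin.last n) - lam 0) * (μ j + |q| * μ i)) *
          (‖A' i j‖ * ‖B' i j‖)
        = (|q| * lam (Fin.last n) - lam 0) *
            (μ j * (‖A' i j‖ * ‖B' i j‖))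
          + ((|q| * lam (Fin.last n) - lam 0) * |q|) *
            (μ i * (‖A' i j‖ * ‖B' i j‖)) := fun i j => by ring
    calc ∑ i, ∑ j, ((|q| * lam (Fin.last n) - lam 0) * (μ j + |q| * μ i)) *
          (‖A' i j‖ * ‖B' i j‖)
        = ∑ i, ∑ j, ((|q| * lam (Fin.last n) - lam 0) *
              (μ j * (‖A' i j‖ * ‖B' i j‖))
            + ((|q| * lam (Fin.last n) - lam 0) * |q|) *
              (μ i * (‖A' i j‖ * ‖B' i j‖))) :=
          Finset.sum_congr rfl fun i _ => Finset.sum_congr rfl fun j _ => e i j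
      _ = (∑ i, ∑ j, (|q| * lam (Fin.last n) - lam 0) *
              (μ j * (‖A' i j‖ * ‖B' i j‖)))
          + ∑ i, ∑ j, ((|q| * lam (Fin.last n) - lam 0) * |q|) *
              (μ i * (‖A' i j‖ * ‖B' i j‖)) := by
          simp only [Finset.sum_add_distrib]
      _ = (|q| * lam (Fin.last n) - lam 0) *
              (∑ i, ∑ j, μ j * (‖A' i j‖ * ‖B' i j‖))
          + ((|q| * lam (Fin.last n) - lam 0) * |q|) *
              (∑ i, ∑ j, μ i * (‖A' i j‖ * ‖B' i j‖)) := by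
          simp only [← Finset.mul_sum]
      _ = (|q| * lam (Fin.last n) - lam 0) * ((1 + |q|) *
          ∑ i, ∑ j, μ i * (‖A' i j‖ * ‖B' i j‖)) := by
          rw [hs1]; ring
  -- Cauchy-Schwarz
  have hCS : (∑ i, ∑ j, μ i * (‖A' i j‖ * ‖B' i j‖)) ^ 2
      ≤ (∑ i, ∑ j, μ i * ‖A' i j‖ ^ 2) *
        (∑ i, ∑ j, μ i * ‖B' i j‖ ^ 2) := by
    have h := Finset.sum_mul_sq_le_sq_mul_sq Finset.univ
      (fun p : Fin (n+1) × Fin (n+1) => Real.sqrt (μ p.1) * ‖A' p.1 p.2‖)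
      (fun p : Fin (n+1) × Fin (n+1) => Real.sqrt (μ p.1) * ‖B' p.1 p.2‖)
    have e1 : ∀ (i j : Fin (n+1)),
        (Real.sqrt (μ i) * ‖A' i j‖) * (Real.sqrt (μ i) * ‖B' i j‖)
          = μ i * (‖A' i j‖ * ‖B' i j‖) := by
      intro i j
      have h2 := Real.mul_self_sqrt (hμ0 i)
      linear_combination (‖A' i j‖ * ‖B' i j‖) * h2
    have e2 : ∀ (i j : Fin (n+1)),
        (Real.sqrt (μ i) * ‖A' i j‖) ^ 2 = μ i * ‖A' i j‖ ^ 2 := by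
      intro i j; rw [mul_pow, Real.sq_sqrt (hμ0 i)]
    have e3 : ∀ (i j : Fin (n+1)),
        (Real.sqrt (μ i) * ‖B' i j‖) ^ 2 = μ i * ‖B' i j‖ ^ 2 := by
      intro i j; rw [mul_pow, Real.sq_sqrt (hμ0 i)]
    simpa [Fintype.sum_prod_type, e1, e2, e3] using h
  -- variance as a sum
  have hshift : ∀ {M : Matrix (Fin (n+1)) (Fin (n+1)) ℂ}, M.IsHermitian →
      (shift ρ M).IsHermitian := by
    intro M hM
    unfold Matrix.IsHermitian
    simp [shift, Matrix.conjTranspose_sub, Matrix.conjTranspose_smul, hM.eq, hts hM]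
  have hvar : ∀ (M : Matrix (Fin (n+1)) (Fin (n+1)) ℂ), M.IsHermitian →
      variance ρ M = ∑ i, ∑ j, μ i * ‖(star U * (shift ρ M * U)) i j‖ ^ 2 := by
    intro M hM
    have hexp : (ρ * (shift ρ M * shift ρ M)).trace
        = (ρ * (M * M)).trace - ((ρ * M).trace) ^ 2 := by
      simp only [shift, Matrix.sub_mul, Matrix.mul_sub, Matrix.smul_mul, Matrix.mul_smul,
        Matrix.one_mul, Matrix.mul_one, Matrix.trace_sub, Matrix.trace_smul, smul_eq_mul,
        smul_smul, htr]
      ring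
    have hterm : ∀ i j, ((μ i : ℂ) * ((star U * (shift ρ M * U)) i j *
          (star U * (shift ρ M * U)) j i)).re
        = μ i * ‖(star U * (shift ρ M * U)) i j‖ ^ 2 := by
      intro i j
      have hz : (star U * (shift ρ M * U)) j i
          = star ((star U * (shift ρ M * U)) i j) := ((hg_herm (hshift hM)).apply j i).symm
      rw [hz, Complex.star_def, Complex.mul_conj, ← Complex.ofReal_mul, Complex.ofReal_re,
        ← Complex.sq_norm]
    have hv0 : variance ρ M = ((ρ * (shift ρ M * shift ρ M)).trace).re := by
      rw [variance, hexp]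
    rw [hv0, hdouble (shift ρ M) (shift ρ M), Complex.re_sum]
    refine Finset.sum_congr rfl fun i _ => ?_
    rw [Complex.re_sum]
    exact Finset.sum_congr rfl fun j _ => hterm i j
  have hvarA : variance ρ A = ∑ i, ∑ j, μ i * ‖A' i j‖ ^ 2 := by
    rw [hvar A hA, ← hA']
  have hvarB : variance ρ B = ∑ i, ∑ j, μ i * ‖B' i j‖ ^ 2 := by
    rw [hvar B hB, ← hB']
  -- final assembly
  have hP0 : 0 ≤ |q| * lam (Fin.last n) + lam 0 :=
    add_nonneg (mul_nonneg hQpos.le hcn0) hlam0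
  have hM0 : 0 ≤ |q| * lam (Fin.last n) - lam 0 := by nlinarith
  have h1 : ‖(ρ * qComm |q| (shift ρ B) (shift ρ A)).trace‖ *
        (|q| * lam (Fin.last n) + lam 0)
      ≤ (|q| * lam (Fin.last n) - lam 0) * ((1 + |q|) *
        ∑ i, ∑ j, μ i * (‖A' i j‖ * ‖B' i j‖)) :=
    (mul_le_mul_of_nonneg_right habsT hP0).trans (hstep1.trans_eq hsplit)
  have h2 := mul_self_le_mul_self (mul_nonneg (norm_nonneg _) hP0) h1
  have h3 : ((1 + |q|) * (|q| * lam (Fin.last n) - lam 0)) ^ 2 *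
        (∑ i, ∑ j, μ i * (‖A' i j‖ * ‖B' i j‖)) ^ 2
      ≤ ((1 + |q|) * (|q| * lam (Fin.last n) - lam 0)) ^ 2 *
        ((∑ i, ∑ j, μ i * ‖A' i j‖ ^ 2) *
         (∑ i, ∑ j, μ i * ‖B' i j‖ ^ 2)) :=
    mul_le_mul_of_nonneg_left hCS (sq_nonneg _)
  rw [hvarA, hvarB]
  nlinarith [h2, h3]
end

section
/- Let ρ be an n×n density matrix with eigenvalues 0 ≤ λ₁ ≤ λ₂ ≤ ⋯ ≤ λ_n, let A, B be n×n self-adjoint complex matrices, and let q ∈ ℝ with 0 < q ≤ 1. Then (λ_n + qλ₁)²·|Tr[ρ[A₀,B₀]_q]|² ≤ (1+q)²·(λ_n − qλ₁)²·V_ρ(A)·V_ρ(B). -/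
open Matrix ComplexOrder

set_option maxHeartbeats 1000000


lemma myCoeff1 {q m L : ℝ} (hq0 : 0 < q) (hm : 0 ≤ m) (hL : m ≤ L) :
    (1 - q) * (L + q * m) ≤ (1 + q) * (L - q * m) := by nlinarith

lemma myCoeff2 {q m L x y : ℝ} (hq0 : 0 < q) (hq1 : q ≤ 1) (hm : 0 ≤ m)
    (hx1 : m ≤ x) (hx2 : x ≤ L) (hy1 : m ≤ y) (hy2 : y ≤ L) :
    ((L + q * m) * (x - y)) ^ 2 ≤ ((L - q * m) * (x + y)) ^ 2 := by
  have hx0 : 0 ≤ x := hm.trans hx1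
  have hy0 : 0 ≤ y := hm.trans hy1
  have hqm : q * m ≤ m := by nlinarith
  have h1 : q * m * x ≤ L * y := by
    calc q * m * x ≤ y * L := mul_le_mul (hqm.trans hy1) hx2 hx0 hy0
    _ = L * y := mul_comm _ _
  have h2 : q * m * y ≤ L * x := by
    calc q * m * y ≤ x * L := mul_le_mul (hqm.trans hx1) hy2 hy0 hx0
    _ = L * x := mul_comm _ _
  nlinarith [mul_nonneg (sub_nonneg.2 h1) (sub_nonneg.2 h2)]

lemma myPtwise {q m L x y : ℝ} (z : ℂ) (hq0 : 0 < q) (hq1 : q ≤ 1) (hm : 0 ≤ m)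
    (hx1 : m ≤ x) (hx2 : x ≤ L) (hy1 : m ≤ y) (hy2 : y ≤ L) :
    (L + q * m) * ‖((x : ℂ) - (q : ℂ) * (y : ℂ)) * z
        + ((y : ℂ) - (q : ℂ) * (x : ℂ)) * (starRingEnd ℂ) z‖
      ≤ (1 + q) * (L - q * m) * ((x + y) * ‖z‖) := by
  have hL0 : 0 ≤ L := hm.trans (hx1.trans hx2)
  have hLm : 0 ≤ L + q * m := by nlinarith
  have hLm2 : 0 ≤ L - q * m := by nlinarith
  have hxy : 0 ≤ x + y := by linarith [hm.trans hx1, hm.trans hy1]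
  set w : ℂ := ((x : ℂ) - (q : ℂ) * (y : ℂ)) * z + ((y : ℂ) - (q : ℂ) * (x : ℂ)) * (starRingEnd ℂ) z with hw
  have hwre : w.re = (1 - q) * (x + y) * z.re := by
    simp [hw, Complex.add_re, Complex.mul_re, Complex.sub_re, Complex.sub_im,
      Complex.ofReal_re, Complex.ofReal_im, Complex.mul_im, Complex.conj_re, Complex.conj_im]
    ring
  have hwim : w.im = (1 + q) * (x - y) * z.im := by
    simp [hw, Complex.add_im, Complex.mul_re, Complex.sub_re, Complex.sub_im,
      Complex.ofReal_re, Complex.ofReal_im, Complex.mul_im, Complex.conj_re, Complex.conj_im]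
    ring
  have hRHS : 0 ≤ (1 + q) * (L - q * m) * ((x + y) * ‖z‖) :=
    mul_nonneg (mul_nonneg (by linarith) hLm2) (mul_nonneg hxy (norm_nonneg _))
  refine (pow_le_pow_iff_left₀ (mul_nonneg hLm (norm_nonneg _)) hRHS two_ne_zero).mp ?_
  have e1 : ((L + q * m) * ‖w‖) ^ 2 = (L + q * m) ^ 2 * (w.re ^ 2 + w.im ^ 2) := by
    rw [show ((L + q * m) * ‖w‖) ^ 2 = (L + q * m) ^ 2 * ‖w‖ ^ 2 from by ring,
      Complex.sq_norm, Complex.normSq_apply]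
    ring
  have e2 : ((1 + q) * (L - q * m) * ((x + y) * ‖z‖)) ^ 2
      = ((1 + q) * (L - q * m) * (x + y)) ^ 2 * (z.re ^ 2 + z.im ^ 2) := by
    rw [show ((1 + q) * (L - q * m) * ((x + y) * ‖z‖)) ^ 2
        = ((1 + q) * (L - q * m) * (x + y)) ^ 2 * ‖z‖ ^ 2 from by ring,
      Complex.sq_norm, Complex.normSq_apply]
    ring
  rw [e1, e2, hwre, hwim]
  have c1 : (1 - q) * (L + q * m) ≤ (1 + q) * (L - q * m) := myCoeff1 hq0 hm (hx1.trans hx2)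
  have c1sq : ((1 - q) * (L + q * m)) ^ 2 ≤ ((1 + q) * (L - q * m)) ^ 2 :=
    pow_le_pow_left₀ (mul_nonneg (by linarith) hLm) c1 2
  have c2 := myCoeff2 hq0 hq1 hm hx1 hx2 hy1 hy2
  have h3 := mul_le_mul_of_nonneg_right c1sq (sq_nonneg ((x + y) * z.re))
  have h4 := mul_le_mul_of_nonneg_right c2 (sq_nonneg ((1 + q) * z.im))
  calc (L + q * m) ^ 2 * (((1 - q) * (x + y) * z.re) ^ 2 + ((1 + q) * (x - y) * z.im) ^ 2)
      = ((1 - q) * (L + q * m)) ^ 2 * ((x + y) * z.re) ^ 2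
        + ((L + q * m) * (x - y)) ^ 2 * ((1 + q) * z.im) ^ 2 := by ring
    _ ≤ ((1 + q) * (L - q * m)) ^ 2 * ((x + y) * z.re) ^ 2
        + ((L - q * m) * (x + y)) ^ 2 * ((1 + q) * z.im) ^ 2 := add_le_add h3 h4
    _ = ((1 + q) * (L - q * m) * (x + y)) ^ 2 * (z.re ^ 2 + z.im ^ 2) := by ring


/-- Refined uncertainty relation, case `0 < q ≤ 1`:
`(λₙ + qλ₁)²·|Tr[ρ[A₀,B₀]_q]|² ≤ (1+q)²·(λₙ − qλ₁)²·V_ρ(A)·V_ρ(B)`. -/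
theorem refined_uncertainty_of_pos_le_one {n : ℕ}
    (ρ A B : Matrix (Fin (n + 1)) (Fin (n + 1)) ℂ)
    (hρ : ρ.PosSemidef) (htr : ρ.trace = 1)
    (hA : A.IsHermitian) (hB : B.IsHermitian)
    (lam : Fin (n + 1) → ℝ) (hlam : IsOrderedEigenvalues hρ.1 lam)
    (hlam0 : 0 ≤ lam 0) (q : ℝ) (hq0 : 0 < q) (hq1 : q ≤ 1) :
    (lam (Fin.last n) + q * lam 0) ^ 2 *
        ‖(ρ * qComm q (shift ρ A) (shift ρ B)).trace‖ ^ 2 ≤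
      (1 + q) ^ 2 * (lam (Fin.last n) - q * lam 0) ^ 2 *
        variance ρ A * variance ρ B := by
  obtain ⟨hmono, σ, hσ⟩ := hlam
  have hH := hρ.1
  set d : Fin (n + 1) → ℝ := hH.eigenvalues with hd
  have hdlo : ∀ k, lam 0 ≤ d k := by
    intro k
    have h1 : d k = lam (σ.symm k) := by rw [hσ (σ.symm k), Equiv.apply_symm_apply]
    rw [h1]; exact hmono (Fin.zero_le _)
  have hdhi : ∀ k, d k ≤ lam (Fin.last n) := by
    intro k
    have h1 : d k = lam (σ.symm k) := by rw [hσ (σ.symm k), Equiv.apply_symm_apply]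
    rw [h1]; exact hmono (Fin.le_last _)
  set U : Matrix (Fin (n + 1)) (Fin (n + 1)) ℂ := (hH.eigenvectorUnitary : Matrix (Fin (n + 1)) (Fin (n + 1)) ℂ) with hUdef
  have hU1 : U * star U = 1 := mem_unitaryGroup_iff.mp hH.eigenvectorUnitary.2
  have hU2 : star U * U = 1 := mem_unitaryGroup_iff'.mp hH.eigenvectorUnitary.2
  have hspec : ρ = U * diagonal (fun k => (d k : ℂ)) * star U := hH.spectral_theorem
  -- trace formula
  have htrace : ∀ M : Matrix (Fin (n + 1)) (Fin (n + 1)) ℂ,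
      (ρ * M).trace = ∑ k, (d k : ℂ) * ((star U * M * U) k k) := by
    intro M
    conv_lhs => rw [hspec]
    rw [Matrix.mul_assoc, Matrix.mul_assoc, Matrix.mul_assoc, trace_mul_comm]
    rw [show diagonal (fun k => (d k : ℂ)) * (star U * M) * U
        = diagonal (fun k => (d k : ℂ)) * (star U * M * U) from by rw [Matrix.mul_assoc]]
    simp [Matrix.trace, Matrix.diag, Matrix.diagonal_mul]
    simp only [Matrix.mul_assoc]
  -- conjugation multiplicative
  have hconj : ∀ X Y : Matrix (Fin (n + 1)) (Fin (n + 1)) ℂ,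
      star U * (X * Y) * U = (star U * X * U) * (star U * Y * U) := by
    intro X Y
    have h : (star U * X * U) * (star U * Y * U) = star U * (X * ((U * star U) * (Y * U))) := by
      simp only [Matrix.mul_assoc]
    rw [h, hU1, Matrix.one_mul]
    simp only [Matrix.mul_assoc]
  -- real trace of rho*M for hermitian M
  have hreal : ∀ M : Matrix (Fin (n + 1)) (Fin (n + 1)) ℂ, M.IsHermitian →
      star ((ρ * M).trace) = (ρ * M).trace := by
    intro M hM
    rw [← trace_conjTranspose, conjTranspose_mul, hM.eq, hρ.1.eq, trace_mul_comm]
  -- shifted matrices are hermitian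
  have hshiftH : ∀ M : Matrix (Fin (n + 1)) (Fin (n + 1)) ℂ, M.IsHermitian →
      (shift ρ M).IsHermitian := by
    intro M hM
    unfold shift
    unfold Matrix.IsHermitian
    rw [conjTranspose_sub, conjTranspose_smul, conjTranspose_one, hM.eq, hreal M hM]
  set α := shift ρ A with hα
  set β := shift ρ B with hβ
  set a := star U * α * U with ha
  set b := star U * β * U with hb
  -- entrywise conjugation symmetry
  have hermEntry : ∀ (M : Matrix (Fin (n + 1)) (Fin (n + 1)) ℂ), M.IsHermitian →
      ∀ k l, (star U * M * U) l k = (starRingEnd ℂ) ((star U * M * U) k l) := by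
    intro M hM k l
    have hMH : (star U * M * U).IsHermitian := by
      unfold Matrix.IsHermitian
      rw [conjTranspose_mul, conjTranspose_mul, hM.eq, Matrix.star_eq_conjTranspose,
        conjTranspose_conjTranspose, Matrix.mul_assoc]
    conv_lhs => rw [← hMH]
    simp [Matrix.conjTranspose_apply, RCLike.star_def]
  have haE : ∀ k l, a l k = (starRingEnd ℂ) (a k l) := hermEntry α (hshiftH A hA)
  have hbE : ∀ k l, b l k = (starRingEnd ℂ) (b k l) := hermEntry β (hshiftH B hB)
  -- trace expansions
  have e1 : (ρ * (α * β)).trace = ∑ k, ∑ l, (d k : ℂ) * (a k l * b l k) := by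
    rw [htrace (α * β), hconj α β, ← ha, ← hb]
    exact Finset.sum_congr rfl fun k _ => by rw [Matrix.mul_apply, Finset.mul_sum]
  have e2 : (ρ * (β * α)).trace = ∑ k, ∑ l, (d l : ℂ) * (a k l * b l k) := by
    rw [htrace (β * α), hconj β α, ← ha, ← hb]
    rw [show (∑ k, (d k : ℂ) * ((b * a) k k)) = ∑ k, ∑ l, (d k : ℂ) * (b k l * a l k) from
      Finset.sum_congr rfl fun k _ => by rw [Matrix.mul_apply, Finset.mul_sum]]
    rw [Finset.sum_comm]
    exact Finset.sum_congr rfl fun k _ => Finset.sum_congr rfl fun l _ => by ring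
  have hT : (ρ * qComm q α β).trace
      = ∑ k, ∑ l, ((d k : ℂ) - (q : ℂ) * (d l : ℂ)) * (a k l * b l k) := by
    have e0 : ρ * qComm q α β = ρ * (α * β) - (q : ℂ) • (ρ * (β * α)) := by
      rw [qComm, Matrix.mul_sub, Matrix.mul_smul]
    rw [e0, trace_sub, trace_smul, e1, e2, smul_eq_mul, Finset.mul_sum, ← Finset.sum_sub_distrib]
    refine Finset.sum_congr rfl fun k _ => ?_
    rw [Finset.mul_sum, ← Finset.sum_sub_distrib]
    exact Finset.sum_congr rfl fun l _ => by ring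
  have hzsym : ∀ k l, (starRingEnd ℂ) (a k l * b l k) = a l k * b k l := by
    intro k l
    rw [_root_.map_mul, ← haE k l, hbE k l, Complex.conj_conj]
  set T := (ρ * qComm q α β).trace with hTdef
  have h2 : ∑ k, ∑ l, ((d l : ℂ) - (q : ℂ) * (d k : ℂ)) * (starRingEnd ℂ) (a k l * b l k)
      = ∑ k, ∑ l, ((d k : ℂ) - (q : ℂ) * (d l : ℂ)) * (a k l * b l k) := by
    rw [Finset.sum_comm]
    refine Finset.sum_congr rfl fun k _ => Finset.sum_congr rfl fun l _ => ?_
    rw [hzsym l k]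
  have hsym : (2 : ℂ) * T
      = ∑ k, ∑ l, (((d k : ℂ) - (q : ℂ) * (d l : ℂ)) * (a k l * b l k)
          + ((d l : ℂ) - (q : ℂ) * (d k : ℂ)) * (starRingEnd ℂ) (a k l * b l k)) := by
    rw [two_mul]
    nth_rewrite 1 [hT]
    nth_rewrite 1 [hT]
    nth_rewrite 2 [← h2]
    rw [← Finset.sum_add_distrib]
    exact Finset.sum_congr rfl fun k _ => (Finset.sum_add_distrib).symm
  have hml : lam 0 ≤ lam (Fin.last n) := hmono (Fin.zero_le _)
  have hL0 : 0 ≤ lam (Fin.last n) + q * lam 0 := by nlinarith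
  have hC0 : 0 ≤ (1 + q) * (lam (Fin.last n) - q * lam 0) := by nlinarith
  -- key bound
  have hkey : (lam (Fin.last n) + q * lam 0) * (2 * ‖T‖)
      ≤ (1 + q) * (lam (Fin.last n) - q * lam 0)
        * ∑ k, ∑ l, ((d k + d l) * (‖a k l‖ * ‖b k l‖)) := by
    have tri : ‖(2 : ℂ) * T‖ ≤ ∑ k, ∑ l, ‖((d k : ℂ) - (q : ℂ) * (d l : ℂ)) * (a k l * b l k)
          + ((d l : ℂ) - (q : ℂ) * (d k : ℂ)) * (starRingEnd ℂ) (a k l * b l k)‖ := by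
      rw [hsym]
      exact (norm_sum_le _ _).trans (Finset.sum_le_sum fun k _ => norm_sum_le _ _)
    have step1 : (lam (Fin.last n) + q * lam 0) * (2 * ‖T‖)
        ≤ (lam (Fin.last n) + q * lam 0) * ∑ k, ∑ l, ‖((d k : ℂ) - (q : ℂ) * (d l : ℂ)) * (a k l * b l k)
          + ((d l : ℂ) - (q : ℂ) * (d k : ℂ)) * (starRingEnd ℂ) (a k l * b l k)‖ := by
      rw [show 2 * ‖T‖ = ‖(2 : ℂ) * T‖ from by
        rw [norm_mul, Complex.norm_two]]
      exact mul_le_mul_of_nonneg_left tri hL0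
    refine step1.trans ?_
    rw [Finset.mul_sum, Finset.mul_sum]
    refine Finset.sum_le_sum fun k _ => ?_
    rw [Finset.mul_sum, Finset.mul_sum]
    refine Finset.sum_le_sum fun l _ => ?_
    have hzabs : ‖a k l * b l k‖ = ‖a k l‖ * ‖b k l‖ := by
      rw [norm_mul, hbE k l, Complex.norm_conj]
    have hpt := myPtwise (a k l * b l k) hq0 hq1 hlam0 (hdlo k) (hdhi k) (hdlo l) (hdhi l)
    rw [hzabs] at hpt
    exact hpt
  -- variance expansion
  have hvar : ∀ M : Matrix (Fin (n + 1)) (Fin (n + 1)) ℂ, M.IsHermitian →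
      2 * variance ρ M
        = ∑ k, ∑ l, (d k + d l) * Complex.normSq ((star U * shift ρ M * U) k l) := by
    intro M hM
    have hcE : ∀ k l, (star U * shift ρ M * U) l k
        = (starRingEnd ℂ) ((star U * shift ρ M * U) k l) := hermEntry _ (hshiftH M hM)
    have hs : (ρ * (shift ρ M * shift ρ M)).trace
        = (ρ * (M * M)).trace - ((ρ * M).trace) ^ 2 := by
      simp only [shift, Matrix.sub_mul, Matrix.mul_sub, Matrix.smul_mul, Matrix.mul_smul,
        Matrix.mul_one, Matrix.one_mul, trace_sub, trace_smul, smul_eq_mul, smul_smul]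
      rw [htr]
      ring
    have e3 : (ρ * (shift ρ M * shift ρ M)).trace
        = ∑ k, ∑ l, (d k : ℂ) * ((star U * shift ρ M * U) k l * (star U * shift ρ M * U) l k) := by
      rw [htrace, hconj]
      exact Finset.sum_congr rfl fun k _ => by rw [Matrix.mul_apply, Finset.mul_sum]
    have e4 : variance ρ M = ∑ k, ∑ l, d k * Complex.normSq ((star U * shift ρ M * U) k l) := by
      rw [variance, ← hs, e3, Complex.re_sum]
      refine Finset.sum_congr rfl fun k _ => ?_
      rw [Complex.re_sum]
      refine Finset.sum_congr rfl fun l _ => ?_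
      rw [hcE k l, Complex.mul_conj, ← Complex.ofReal_mul]
      exact Complex.ofReal_re _
    have e5 : ∑ k, ∑ l, d k * Complex.normSq ((star U * shift ρ M * U) k l)
        = ∑ k, ∑ l, d l * Complex.normSq ((star U * shift ρ M * U) k l) := by
      rw [Finset.sum_comm]
      refine Finset.sum_congr rfl fun k _ => Finset.sum_congr rfl fun l _ => ?_
      rw [hcE k l, Complex.normSq_conj]
    rw [two_mul, e4]
    nth_rewrite 2 [e5]
    rw [← Finset.sum_add_distrib]
    refine Finset.sum_congr rfl fun k _ => ?_
    rw [← Finset.sum_add_distrib]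
    exact Finset.sum_congr rfl fun l _ => by ring
  have hVA := hvar A hA
  have hVB := hvar B hB
  rw [← ha] at hVA
  rw [← hb] at hVB
  -- Cauchy-Schwarz
  have hnn : ∀ k l : Fin (n + 1), 0 ≤ d k + d l := by
    intro k l
    have h1 := hdlo k
    have h2 := hdlo l
    linarith
  have hCS : (∑ k, ∑ l, ((d k + d l) * (‖a k l‖ * ‖b k l‖))) ^ 2
      ≤ (2 * variance ρ A) * (2 * variance ρ B) := by
    rw [hVA, hVB]
    have key := Finset.sum_mul_sq_le_sq_mul_sq Finset.univ
      (fun p : Fin (n + 1) × Fin (n + 1) =>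
        Real.sqrt (d p.1 + d p.2) * ‖a p.1 p.2‖)
      (fun p : Fin (n + 1) × Fin (n + 1) =>
        Real.sqrt (d p.1 + d p.2) * ‖b p.1 p.2‖)
    have e6 : ∑ k, ∑ l, ((d k + d l) * (‖a k l‖ * ‖b k l‖))
        = ∑ p : Fin (n + 1) × Fin (n + 1),
            (Real.sqrt (d p.1 + d p.2) * ‖a p.1 p.2‖)
              * (Real.sqrt (d p.1 + d p.2) * ‖b p.1 p.2‖) := by
      rw [Fintype.sum_prod_type]
      refine Finset.sum_congr rfl fun k _ => Finset.sum_congr rfl fun l _ => ?_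
      rw [show (Real.sqrt (d k + d l) * ‖a k l‖)
            * (Real.sqrt (d k + d l) * ‖b k l‖)
          = (Real.sqrt (d k + d l) * Real.sqrt (d k + d l))
            * (‖a k l‖ * ‖b k l‖) from by ring,
        Real.mul_self_sqrt (hnn k l)]
    have e7 : ∑ p : Fin (n + 1) × Fin (n + 1),
          (Real.sqrt (d p.1 + d p.2) * ‖a p.1 p.2‖) ^ 2
        = ∑ k, ∑ l, (d k + d l) * Complex.normSq (a k l) := by
      rw [Fintype.sum_prod_type]
      refine Finset.sum_congr rfl fun k _ => Finset.sum_congr rfl fun l _ => ?_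
      rw [mul_pow, Real.sq_sqrt (hnn k l), Complex.sq_norm]
    have e8 : ∑ p : Fin (n + 1) × Fin (n + 1),
          (Real.sqrt (d p.1 + d p.2) * ‖b p.1 p.2‖) ^ 2
        = ∑ k, ∑ l, (d k + d l) * Complex.normSq (b k l) := by
      rw [Fintype.sum_prod_type]
      refine Finset.sum_congr rfl fun k _ => Finset.sum_congr rfl fun l _ => ?_
      rw [mul_pow, Real.sq_sqrt (hnn k l), Complex.sq_norm]
    rw [e6, ← e7, ← e8]
    exact key
  -- final assembly
  have hS0 : 0 ≤ ∑ k, ∑ l, ((d k + d l) * (‖a k l‖ * ‖b k l‖)) :=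
    Finset.sum_nonneg fun k _ => Finset.sum_nonneg fun l _ =>
      mul_nonneg (hnn k l) (mul_nonneg (norm_nonneg _) (norm_nonneg _))
  have hstep : ((lam (Fin.last n) + q * lam 0) * (2 * ‖T‖)) ^ 2
      ≤ ((1 + q) * (lam (Fin.last n) - q * lam 0)) ^ 2
        * ((2 * variance ρ A) * (2 * variance ρ B)) := by
    calc ((lam (Fin.last n) + q * lam 0) * (2 * ‖T‖)) ^ 2
        ≤ ((1 + q) * (lam (Fin.last n) - q * lam 0)
            * ∑ k, ∑ l, ((d k + d l) * (‖a k l‖ * ‖b k l‖))) ^ 2 :=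
          pow_le_pow_left₀ (mul_nonneg hL0 (by positivity)) hkey 2
      _ = ((1 + q) * (lam (Fin.last n) - q * lam 0)) ^ 2
            * (∑ k, ∑ l, ((d k + d l) * (‖a k l‖ * ‖b k l‖))) ^ 2 := by
          ring
      _ ≤ _ := mul_le_mul_of_nonneg_left hCS (sq_nonneg _)
  set VA := variance ρ A
  set VB := variance ρ B
  nlinarith [hstep]
end

section
/- Let ρ be an n×n density matrix with eigenvalues 0 ≤ λ₁ ≤ λ₂ ≤ ⋯ ≤ λ_n, let A, B be n×n self-adjoint complex matrices, and let q ∈ ℝ with q > 1. Then q²·(qλ_n + λ₁)²·|Tr[ρ[A₀,B₀]_{1/q}]|² = (qλ_n + λ₁)²·|Tr[ρ[B₀,A₀]_q]|², and (qλ_n + λ₁)²·|Tr[ρ[B₀,A₀]_q]|² ≤ (1+q)²·(qλ_n − λ₁)²·V_ρ(A)·V_ρ(B). -/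
open Matrix ComplexOrder

private lemma key_scalar_s9 {m M x y q : ℝ} (hm : 0 ≤ m) (hq : 1 < q)
    (hx1 : m ≤ x) (hx2 : x ≤ M) (hy1 : m ≤ y) (hy2 : y ≤ M) :
    (q * M + m) * |y - q * x| ≤ (q * M - m) * (q * x + y) := by
  have hx0 : 0 ≤ x := hm.trans hx1
  have hy0 : 0 ≤ y := hm.trans hy1
  have hM0 : 0 ≤ M := hx0.trans hx2
  have h1 : m * y ≤ x * y := mul_le_mul_of_nonneg_right hx1 hy0
  have h2 : x * y ≤ x * M := mul_le_mul_of_nonneg_left hy2 hx0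
  have h3 : m * x ≤ y * x := mul_le_mul_of_nonneg_right hy1 hx0
  have h4 : y * x ≤ y * M := mul_le_mul_of_nonneg_left hx2 hy0
  have h5 : (0:ℝ) ≤ (q * q - 1) * (x * M) :=
    mul_nonneg (by nlinarith) (mul_nonneg hx0 hM0)
  rcases abs_cases (y - q * x) with ⟨h, _⟩ | ⟨h, _⟩ <;> rw [h] <;> nlinarith

/-- Refined uncertainty relation, case `q > 1`:
`q²·(qλₙ + λ₁)²·|Tr[ρ[A₀,B₀]_{1/q}]|² = (qλₙ + λ₁)²·|Tr[ρ[B₀,A₀]_q]|²` and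
`(qλₙ + λ₁)²·|Tr[ρ[B₀,A₀]_q]|² ≤ (1+q)²·(qλₙ − λ₁)²·V_ρ(A)·V_ρ(B)`. -/
theorem refined_uncertainty_of_one_lt {n : ℕ}
    (ρ A B : Matrix (Fin (n + 1)) (Fin (n + 1)) ℂ)
    (hρ : ρ.PosSemidef) (htr : ρ.trace = 1)
    (hA : A.IsHermitian) (hB : B.IsHermitian)
    (lam : Fin (n + 1) → ℝ) (hlam : IsOrderedEigenvalues hρ.1 lam)
    (hlam0 : 0 ≤ lam 0) (q : ℝ) (hq : 1 < q) :
    q ^ 2 * (q * lam (Fin.last n) + lam 0) ^ 2 *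
        ‖(ρ * qComm (1 / q) (shift ρ A) (shift ρ B)).trace‖ ^ 2 =
      (q * lam (Fin.last n) + lam 0) ^ 2 *
        ‖(ρ * qComm q (shift ρ B) (shift ρ A)).trace‖ ^ 2 ∧
    (q * lam (Fin.last n) + lam 0) ^ 2 *
        ‖(ρ * qComm q (shift ρ B) (shift ρ A)).trace‖ ^ 2 ≤
      (1 + q) ^ 2 * (q * lam (Fin.last n) - lam 0) ^ 2 *
        variance ρ A * variance ρ B := by
  obtain ⟨hmono, σ, hσ⟩ := hlam
  have hq0 : (0 : ℝ) < q := lt_trans one_pos hq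
  set A₀ := shift ρ A with hA₀def
  set B₀ := shift ρ B with hB₀def
  set T := (ρ * qComm q B₀ A₀).trace with hTdef
  -- Part 1 : the equality
  have hqC : (q : ℂ) ≠ 0 := by exact_mod_cast ne_of_gt hq0
  have hcommeq : qComm q B₀ A₀ = (-(q : ℂ)) • qComm (1 / q) A₀ B₀ := by
    have hs : (-(q : ℂ)) * (((1 : ℝ) / q : ℝ) : ℂ) = -1 := by
      push_cast
      field_simp
    simp only [qComm, smul_sub, smul_smul, hs]
    simp only [neg_smul, one_smul, neg_neg]
    abel
  have habs1 : ‖T‖ = q * ‖(ρ * qComm (1 / q) A₀ B₀).trace‖ := by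
    rw [hTdef, hcommeq, mul_smul_comm, trace_smul, smul_eq_mul, norm_mul]
    congr 1
    rw [show (-(q : ℂ)) = ((-q : ℝ) : ℂ) by push_cast; ring, Complex.norm_real, Real.norm_eq_abs]
    rw [abs_neg, abs_of_pos hq0]
  -- spectral setup
  set U : Matrix (Fin (n + 1)) (Fin (n + 1)) ℂ := (hρ.1.eigenvectorUnitary : Matrix (Fin (n + 1)) (Fin (n + 1)) ℂ) with hUdef
  set d : Fin (n + 1) → ℝ := hρ.1.eigenvalues with hddef
  have hspec : ρ = U * diagonal (fun i => (d i : ℂ)) * star U := by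
    have := hρ.1.spectral_theorem
    rw [Unitary.conjStarAlgAut_apply] at this
    exact this
  have hUstar : star U * U = 1 := (Unitary.mem_iff.mp hρ.1.eigenvectorUnitary.2).1
  have hUU : U * star U = 1 := mul_eq_one_comm.mp hUstar
  have htrace : ∀ X : Matrix (Fin (n + 1)) (Fin (n + 1)) ℂ,
      (ρ * X).trace = ∑ i, (d i : ℂ) * (star U * X * U) i i := by
    intro X
    conv_lhs => rw [hspec]
    rw [show U * diagonal (fun i => (d i : ℂ)) * star U * X
        = U * (diagonal (fun i => (d i : ℂ)) * (star U * X)) by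
      simp only [Matrix.mul_assoc]]
    rw [trace_mul_comm]
    rw [show diagonal (fun i => (d i : ℂ)) * (star U * X) * U
        = diagonal (fun i => (d i : ℂ)) * (star U * X * U) by simp only [Matrix.mul_assoc]]
    simp [Matrix.trace, Matrix.diag]
  have hUabsorb : ∀ Z : Matrix (Fin (n + 1)) (Fin (n + 1)) ℂ, U * (star U * Z) = Z := by
    intro Z; rw [← Matrix.mul_assoc, hUU, Matrix.one_mul]
  have hmulconj : ∀ X Y : Matrix (Fin (n + 1)) (Fin (n + 1)) ℂ,
      (star U * X * U) * (star U * Y * U) = star U * (X * Y) * U := by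
    intro X Y
    simp only [Matrix.mul_assoc, hUabsorb]
  -- hermitian facts
  have hrealtr : ∀ C : Matrix (Fin (n + 1)) (Fin (n + 1)) ℂ, C.IsHermitian →
      star ((ρ * C).trace) = (ρ * C).trace := by
    intro C hC
    rw [← trace_conjTranspose, conjTranspose_mul, hC.eq, hρ.1.eq, trace_mul_comm]
  have hA₀H : A₀.IsHermitian := by
    rw [hA₀def]
    simp only [shift]
    refine hA.sub ?_
    unfold Matrix.IsHermitian
    rw [conjTranspose_smul, conjTranspose_one, hrealtr A hA]
  have hB₀H : B₀.IsHermitian := by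
    rw [hB₀def]
    simp only [shift]
    refine hB.sub ?_
    unfold Matrix.IsHermitian
    rw [conjTranspose_smul, conjTranspose_one, hrealtr B hB]
  set A' := star U * A₀ * U with hA'def
  set B' := star U * B₀ * U with hB'def
  have hA'H : A'.IsHermitian := by
    rw [hA'def, Matrix.star_eq_conjTranspose]
    exact isHermitian_conjTranspose_mul_mul U hA₀H
  have hB'H : B'.IsHermitian := by
    rw [hB'def, Matrix.star_eq_conjTranspose]
    exact isHermitian_conjTranspose_mul_mul U hB₀H
  have hA'conj : ∀ i j, A' j i = (starRingEnd ℂ) (A' i j) := by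
    intro i j
    conv_lhs => rw [← hA'H.eq]
    rw [conjTranspose_apply]
    rfl
  have hB'conj : ∀ i j, B' j i = (starRingEnd ℂ) (B' i j) := by
    intro i j
    conv_lhs => rw [← hB'H.eq]
    rw [conjTranspose_apply]
    rfl
  set a : Fin (n + 1) → Fin (n + 1) → ℝ := fun i j => ‖A' i j‖ with hadef
  set b : Fin (n + 1) → Fin (n + 1) → ℝ := fun i j => ‖B' i j‖ with hbdef
  have hasymm : ∀ i j, a j i = a i j := by
    intro i j
    simp only [hadef]
    rw [hA'conj i j]
    exact Complex.norm_conj _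
  have hbsymm : ∀ i j, b j i = b i j := by
    intro i j
    simp only [hbdef]
    rw [hB'conj i j]
    exact Complex.norm_conj _
  have ha0 : ∀ i j, 0 ≤ a i j := fun i j => norm_nonneg _
  have hb0 : ∀ i j, 0 ≤ b i j := fun i j => norm_nonneg _
  -- eigenvalue bounds
  have hdm : ∀ i, lam 0 ≤ d i ∧ d i ≤ lam (Fin.last n) := by
    intro i
    have h := hσ (σ.symm i)
    rw [Equiv.apply_symm_apply] at h
    exact ⟨h ▸ hmono (Fin.zero_le _), h ▸ hmono (Fin.le_last _)⟩
  have hd0 : ∀ i, 0 ≤ d i := fun i => hlam0.trans (hdm i).1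
  have hw0 : ∀ i j, 0 ≤ q * d i + d j := fun i j =>
    add_nonneg (mul_nonneg hq0.le (hd0 i)) (hd0 j)
  -- variance formulas
  have hshift_sq : ∀ C : Matrix (Fin (n + 1)) (Fin (n + 1)) ℂ,
      (ρ * (shift ρ C * shift ρ C)).trace = (ρ * (C * C)).trace - ((ρ * C).trace) ^ 2 := by
    intro C
    have hexp : shift ρ C * shift ρ C
        = C * C - (ρ * C).trace • C - (ρ * C).trace • C
          + ((ρ * C).trace * (ρ * C).trace) • (1 : Matrix (Fin (n + 1)) (Fin (n + 1)) ℂ) := by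
      simp only [shift, sub_mul, mul_sub, smul_sub, smul_mul_assoc, mul_smul_comm, smul_smul,
        Matrix.mul_one, Matrix.one_mul]
      abel
    rw [hexp]
    simp only [Matrix.mul_sub, Matrix.mul_add, mul_smul_comm, trace_sub, trace_add,
      trace_smul, smul_eq_mul, Matrix.mul_one, htr]
    ring
  have hvar_gen : ∀ C₀ C' : Matrix (Fin (n + 1)) (Fin (n + 1)) ℂ, C'.IsHermitian →
      C' = star U * C₀ * U →
      (ρ * (C₀ * C₀)).trace = ((∑ i, ∑ j, d i * ‖C' i j‖ ^ 2 : ℝ) : ℂ) := by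
    intro C₀ C' hC' hEq
    rw [htrace, ← hmulconj C₀ C₀, ← hEq]
    have hentry : ∀ i j, C' i j * C' j i = ((‖C' i j‖ ^ 2 : ℝ) : ℂ) := by
      intro i j
      have h1 : C' j i = (starRingEnd ℂ) (C' i j) := by
        conv_lhs => rw [← hC'.eq]
        rw [conjTranspose_apply]
        rfl
      rw [h1, Complex.mul_conj, Complex.sq_norm]
    simp only [Matrix.mul_apply, hentry]
    push_cast
    simp only [Finset.mul_sum]
  have hVA : variance ρ A = ∑ i, ∑ j, d i * a i j ^ 2 := by
    unfold variance
    rw [← hshift_sq A, hvar_gen (shift ρ A) A' hA'H hA'def, Complex.ofReal_re]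
  have hVB : variance ρ B = ∑ i, ∑ j, d i * b i j ^ 2 := by
    unfold variance
    rw [← hshift_sq B, hvar_gen (shift ρ B) B' hB'H hB'def, Complex.ofReal_re]
  -- trace of q-commutator as a double sum
  have hT : T = ∑ i, ∑ j, ((d j - q * d i : ℝ) : ℂ) * (A' i j * B' j i) := by
    rw [hTdef]
    have hq1 : qComm q B₀ A₀ = B₀ * A₀ - (q : ℂ) • (A₀ * B₀) := rfl
    rw [hq1, show ρ * (B₀ * A₀ - (q : ℂ) • (A₀ * B₀))
        = ρ * (B₀ * A₀) - (q : ℂ) • (ρ * (A₀ * B₀)) by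
      rw [Matrix.mul_sub, mul_smul_comm]]
    rw [trace_sub, trace_smul, smul_eq_mul, htrace, htrace, ← hmulconj B₀ A₀,
      ← hmulconj A₀ B₀, ← hA'def, ← hB'def]
    have e1 : ∑ i, (d i : ℂ) * (B' * A') i i
        = ∑ i, ∑ j, ((d j : ℝ) : ℂ) * (A' i j * B' j i) := by
      simp only [Matrix.mul_apply, Finset.mul_sum]
      rw [Finset.sum_comm]
      exact Finset.sum_congr rfl fun i _ => Finset.sum_congr rfl fun j _ => by ring
    have e2 : (q : ℂ) * ∑ i, (d i : ℂ) * (A' * B') i i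
        = ∑ i, ∑ j, ((q * d i : ℝ) : ℂ) * (A' i j * B' j i) := by
      simp only [Matrix.mul_apply, Finset.mul_sum]
      push_cast
      exact Finset.sum_congr rfl fun i _ => Finset.sum_congr rfl fun j _ => by ring
    rw [e1, e2, ← Finset.sum_sub_distrib]
    refine Finset.sum_congr rfl fun i _ => ?_
    rw [← Finset.sum_sub_distrib]
    refine Finset.sum_congr rfl fun j _ => ?_
    push_cast
    ring
  -- triangle inequality
  have habsT : ‖T‖ ≤ ∑ i, ∑ j, |d j - q * d i| * (a i j * b i j) := by
    rw [hT]
    refine le_trans (norm_sum_le _ _) (Finset.sum_le_sum fun i _ => ?_)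
    refine le_trans (norm_sum_le _ _) (Finset.sum_le_sum fun j _ => ?_)
    rw [norm_mul, norm_mul, Complex.norm_real, Real.norm_eq_abs]
    have hb' : ‖B' j i‖ = b i j := by
      rw [show ‖B' j i‖ = b j i from rfl, hbsymm i j]
    rw [hb']
  have h01 : lam 0 ≤ lam (Fin.last n) := (hdm 0).1.trans (hdm 0).2
  have hK0 : 0 ≤ q * lam (Fin.last n) + lam 0 := by nlinarith
  have hL0 : 0 ≤ q * lam (Fin.last n) - lam 0 := by nlinarith
  -- pointwise eigenvalue bound
  have hstep : (q * lam (Fin.last n) + lam 0) * ‖T‖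
      ≤ (q * lam (Fin.last n) - lam 0) * ∑ i, ∑ j, (q * d i + d j) * (a i j * b i j) := by
    calc (q * lam (Fin.last n) + lam 0) * ‖T‖
        ≤ (q * lam (Fin.last n) + lam 0) * ∑ i, ∑ j, |d j - q * d i| * (a i j * b i j) :=
          mul_le_mul_of_nonneg_left habsT hK0
      _ = ∑ i, ∑ j, ((q * lam (Fin.last n) + lam 0) * |d j - q * d i|) * (a i j * b i j) := by
          simp only [Finset.mul_sum, mul_assoc]
      _ ≤ ∑ i, ∑ j, ((q * lam (Fin.last n) - lam 0) * (q * d i + d j)) * (a i j * b i j) := by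
          refine Finset.sum_le_sum fun i _ => Finset.sum_le_sum fun j _ => ?_
          exact mul_le_mul_of_nonneg_right
            (key_scalar_s9 hlam0 hq (hdm i).1 (hdm i).2 (hdm j).1 (hdm j).2)
            (mul_nonneg (ha0 i j) (hb0 i j))
      _ = (q * lam (Fin.last n) - lam 0) * ∑ i, ∑ j, (q * d i + d j) * (a i j * b i j) := by
          simp only [Finset.mul_sum, mul_assoc]
  -- Cauchy-Schwarz
  have hCS : (∑ i, ∑ j, (q * d i + d j) * (a i j * b i j)) ^ 2
      ≤ (∑ i, ∑ j, (q * d i + d j) * a i j ^ 2) * (∑ i, ∑ j, (q * d i + d j) * b i j ^ 2) := by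
    have h := Finset.sum_sq_le_sum_mul_sum_of_sq_eq_mul
      (Finset.univ : Finset (Fin (n + 1) × Fin (n + 1)))
      (r := fun p => (q * d p.1 + d p.2) * (a p.1 p.2 * b p.1 p.2))
      (f := fun p => (q * d p.1 + d p.2) * a p.1 p.2 ^ 2)
      (g := fun p => (q * d p.1 + d p.2) * b p.1 p.2 ^ 2)
      (fun p _ => mul_nonneg (hw0 p.1 p.2) (sq_nonneg _))
      (fun p _ => mul_nonneg (hw0 p.1 p.2) (sq_nonneg _))
      (fun p _ => by ring)
    simpa only [Fintype.sum_prod_type] using h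
  have hsumA : ∑ i, ∑ j, (q * d i + d j) * a i j ^ 2
      = (1 + q) * ∑ i, ∑ j, d i * a i j ^ 2 := by
    have hswap : (∑ i, ∑ j, d j * a i j ^ 2) = ∑ i, ∑ j, d i * a i j ^ 2 := by
      rw [Finset.sum_comm]
      exact Finset.sum_congr rfl fun i _ => Finset.sum_congr rfl fun j _ => by
        rw [hasymm i j]
    rw [show (1 + q) * ∑ i, ∑ j, d i * a i j ^ 2
        = q * (∑ i, ∑ j, d i * a i j ^ 2) + ∑ i, ∑ j, d i * a i j ^ 2 by ring]
    nth_rewrite 2 [← hswap]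
    simp only [Finset.mul_sum, ← Finset.sum_add_distrib]
    exact Finset.sum_congr rfl fun i _ => Finset.sum_congr rfl fun j _ => by ring
  have hsumB : ∑ i, ∑ j, (q * d i + d j) * b i j ^ 2
      = (1 + q) * ∑ i, ∑ j, d i * b i j ^ 2 := by
    have hswap : (∑ i, ∑ j, d j * b i j ^ 2) = ∑ i, ∑ j, d i * b i j ^ 2 := by
      rw [Finset.sum_comm]
      exact Finset.sum_congr rfl fun i _ => Finset.sum_congr rfl fun j _ => by
        rw [hbsymm i j]
    rw [show (1 + q) * ∑ i, ∑ j, d i * b i j ^ 2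
        = q * (∑ i, ∑ j, d i * b i j ^ 2) + ∑ i, ∑ j, d i * b i j ^ 2 by ring]
    nth_rewrite 2 [← hswap]
    simp only [Finset.mul_sum, ← Finset.sum_add_distrib]
    exact Finset.sum_congr rfl fun i _ => Finset.sum_congr rfl fun j _ => by ring
  constructor
  · rw [habs1]
    ring
  · rw [hVA, hVB]
    have habs0 : 0 ≤ ‖T‖ := norm_nonneg _
    have hVAnn : 0 ≤ ∑ i, ∑ j, d i * a i j ^ 2 :=
      Finset.sum_nonneg fun i _ => Finset.sum_nonneg fun j _ => mul_nonneg (hd0 i) (sq_nonneg _)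
    have hVBnn : 0 ≤ ∑ i, ∑ j, d i * b i j ^ 2 :=
      Finset.sum_nonneg fun i _ => Finset.sum_nonneg fun j _ => mul_nonneg (hd0 i) (sq_nonneg _)
    rw [hsumA, hsumB] at hCS
    have h1 := mul_self_le_mul_self (mul_nonneg hK0 habs0) hstep
    nlinarith [mul_le_mul_of_nonneg_left hCS (sq_nonneg (q * lam (Fin.last n) - lam 0))]
end

section
/- Let ρ be an n×n density matrix with eigenvalues 0 ≤ λ₁ ≤ λ₂ ≤ ⋯ ≤ λ_n, let A, B be n×n self-adjoint complex matrices, and let q ∈ ℝ with −1 ≤ q < 0. Then (λ_n − qλ₁)²·|Tr[ρ{A₀,B₀}_q]|² = (λ_n − qλ₁)²·|Tr[ρ[A₀,B₀]_{−q}]|², and (λ_n − qλ₁)²·|Tr[ρ{A₀,B₀}_q]|² ≤ (1−q)²·(λ_n + qλ₁)²·V_ρ(A)·V_ρ(B). -/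
open Matrix ComplexOrder

section helpers
variable {m : Type*} [Fintype m] [DecidableEq m]

lemma qkeyR {a b x y q : ℝ} (ha : 0 ≤ a) (hax : a ≤ x) (hxb : x ≤ b) (hay : a ≤ y) (hyb : y ≤ b)
    (hq0 : -1 ≤ q) (hq1 : q ≤ 0) :
    (b - q*a) * (|x + q*y| + |y + q*x|) ≤ (1-q) * ((b + q*a) * (x+y)) := by
  have hab : a ≤ b := hax.trans hxb
  have hx0 : 0 ≤ x := ha.trans hax
  have hy0 : 0 ≤ y := ha.trans hay
  rcases abs_cases (x + q*y) with ⟨h1, h1'⟩ | ⟨h1, h1'⟩ <;>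
    rcases abs_cases (y + q*x) with ⟨h2, h2'⟩ | ⟨h2, h2'⟩ <;> rw [h1, h2]
  · nlinarith [mul_nonneg (by linarith : (0:ℝ) ≤ -q) (by linarith : (0:ℝ) ≤ b - a),
      mul_nonneg hx0 hy0]
  · nlinarith [mul_nonneg (sub_nonneg.2 hay) hx0, mul_nonneg (sub_nonneg.2 hxb) hy0,
      mul_nonneg (by linarith : (0:ℝ) ≤ 1 + q) (mul_nonneg hx0 ha),
      mul_nonneg (by linarith : (0:ℝ) ≤ -q) (mul_nonneg (sub_nonneg.2 hax) hx0)]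
  · nlinarith [mul_nonneg (sub_nonneg.2 hax) hy0, mul_nonneg (sub_nonneg.2 hyb) hx0,
      mul_nonneg (by linarith : (0:ℝ) ≤ 1 + q) (mul_nonneg hy0 ha),
      mul_nonneg (by linarith : (0:ℝ) ≤ -q) (mul_nonneg (sub_nonneg.2 hay) hy0)]
  · nlinarith [mul_nonneg (by linarith : (0:ℝ) ≤ 1 + q) (by linarith : (0:ℝ) ≤ x + y),
      mul_nonneg (by linarith : (0:ℝ) ≤ 1 + q) ha,
      mul_nonneg (by linarith : (0:ℝ) ≤ 1 - q)
        (mul_nonneg (by nlinarith : (0:ℝ) ≤ b + q*a) (by linarith : (0:ℝ) ≤ x + y))]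

omit [DecidableEq m] in
lemma trace_realR {ρ M : Matrix m m ℂ} (hρ : ρ.IsHermitian) (hM : M.IsHermitian) :
    star (ρ * M).trace = (ρ * M).trace := by
  rw [← Matrix.trace_conjTranspose, Matrix.conjTranspose_mul, hM.eq, hρ.eq,
    Matrix.trace_mul_comm]

lemma key_trace {ρ : Matrix m m ℂ} (hH : ρ.IsHermitian) (M : Matrix m m ℂ) :
    (ρ * M).trace = ∑ i, (hH.eigenvalues i : ℂ) *
      ((star (hH.eigenvectorUnitary : Matrix m m ℂ) * M *
        (hH.eigenvectorUnitary : Matrix m m ℂ)) i i) := by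
  set U : Matrix m m ℂ := (hH.eigenvectorUnitary : Matrix m m ℂ) with hU
  conv_lhs => rw [hH.spectral_theorem, Unitary.conjStarAlgAut_apply]
  rw [show U * Matrix.diagonal (RCLike.ofReal ∘ hH.eigenvalues) * star U * M
      = (U * Matrix.diagonal (RCLike.ofReal ∘ hH.eigenvalues)) * (star U * M) from by
        rw [Matrix.mul_assoc], Matrix.trace_mul_comm,
    show (star U * M) * (U * Matrix.diagonal (RCLike.ofReal ∘ hH.eigenvalues))
      = (star U * M * U) * Matrix.diagonal (RCLike.ofReal ∘ hH.eigenvalues) from by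
        simp [Matrix.mul_assoc], Matrix.trace_mul_comm]
  simp [Matrix.trace, Matrix.diag, Matrix.diagonal_mul, mul_comm]

omit [DecidableEq m] in
lemma conj_herm {U M : Matrix m m ℂ} (hM : M.IsHermitian) :
    (star U * M * U).IsHermitian := by
  simp [Matrix.IsHermitian, Matrix.conjTranspose_mul, Matrix.star_eq_conjTranspose,
    Matrix.mul_assoc, hM.eq]

lemma starU_mul_conj {U : Matrix m m ℂ} (hUU : U * star U = 1) (M N : Matrix m m ℂ) :
    star U * (M * N) * U = (star U * M * U) * (star U * N * U) := by
  have hcancel : ∀ Z : Matrix m m ℂ, U * (star U * Z) = Z := by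
    intro Z; rw [← Matrix.mul_assoc, hUU, Matrix.one_mul]
  simp only [Matrix.mul_assoc, hcancel]

end helpers

/-- Refined uncertainty relation, case `−1 ≤ q < 0`:
`(λₙ − qλ₁)²·|Tr[ρ{A₀,B₀}_q]|² = (λₙ − qλ₁)²·|Tr[ρ[A₀,B₀]_{−q}]|²` and
`(λₙ − qλ₁)²·|Tr[ρ{A₀,B₀}_q]|² ≤ (1−q)²·(λₙ + qλ₁)²·V_ρ(A)·V_ρ(B)`. -/
theorem refined_uncertainty_of_neg_one_le_neg {n : ℕ}
    (ρ A B : Matrix (Fin (n + 1)) (Fin (n + 1)) ℂ)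
    (hρ : ρ.PosSemidef) (htr : ρ.trace = 1)
    (hA : A.IsHermitian) (hB : B.IsHermitian)
    (lam : Fin (n + 1) → ℝ) (hlam : IsOrderedEigenvalues hρ.1 lam)
    (hlam0 : 0 ≤ lam 0) (q : ℝ) (hq0 : -1 ≤ q) (hq1 : q < 0) :
    (lam (Fin.last n) - q * lam 0) ^ 2 *
        ‖(ρ * qAnti q (shift ρ A) (shift ρ B)).trace‖ ^ 2 =
      (lam (Fin.last n) - q * lam 0) ^ 2 *
        ‖(ρ * qComm (-q) (shift ρ A) (shift ρ B)).trace‖ ^ 2 ∧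
    (lam (Fin.last n) - q * lam 0) ^ 2 *
        ‖(ρ * qAnti q (shift ρ A) (shift ρ B)).trace‖ ^ 2 ≤
      (1 - q) ^ 2 * (lam (Fin.last n) + q * lam 0) ^ 2 *
        variance ρ A * variance ρ B := by
  have hqc : qAnti q (shift ρ A) (shift ρ B) = qComm (-q) (shift ρ A) (shift ρ B) := by
    simp [qAnti, qComm, sub_neg_eq_add]
  refine ⟨by rw [hqc], ?_⟩
  obtain ⟨hmono, σ, hσ⟩ := hlam
  set a := lam 0 with haa
  set b := lam (Fin.last n) with hbb
  have hH : ρ.IsHermitian := hρ.1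
  set μ : Fin (n+1) → ℝ := hH.eigenvalues with hμdef
  have hbounds : ∀ i, a ≤ μ i ∧ μ i ≤ b := by
    intro i
    have h1 : lam (σ.symm i) = μ i := by rw [hσ]; simp
    exact ⟨h1 ▸ hmono (Fin.zero_le _), h1 ▸ hmono (Fin.le_last _)⟩
  have hab : a ≤ b := (hbounds 0).1.trans (hbounds 0).2
  have hb0 : 0 ≤ b := hlam0.trans hab
  set U : Matrix (Fin (n+1)) (Fin (n+1)) ℂ := (hH.eigenvectorUnitary :
    Matrix (Fin (n+1)) (Fin (n+1)) ℂ) with hUdef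
  have hUU : U * star U = 1 := (Matrix.mem_unitaryGroup_iff).mp hH.eigenvectorUnitary.2
  -- centered operators are Hermitian
  have hshift : ∀ (M : Matrix (Fin (n+1)) (Fin (n+1)) ℂ), M.IsHermitian →
      (shift ρ M).IsHermitian := by
    intro M hM
    unfold shift Matrix.IsHermitian
    rw [Matrix.conjTranspose_sub, hM.eq, Matrix.conjTranspose_smul,
      Matrix.conjTranspose_one, trace_realR hH hM]
  set A' := shift ρ A with hA'def
  set B' := shift ρ B with hB'def
  have hA' : A'.IsHermitian := hshift A hA
  have hB' : B'.IsHermitian := hshift B hB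
  set X := star U * A' * U with hXdef
  set Y := star U * B' * U with hYdef
  have hXh : X.IsHermitian := conj_herm hA'
  have hYh : Y.IsHermitian := conj_herm hB'
  have hXsym : ∀ i j, X j i = starRingEnd ℂ (X i j) := by
    intro i j
    have := congrFun (congrFun hXh.eq j) i
    rw [Matrix.conjTranspose_apply] at this
    exact this.symm
  have hYsym : ∀ i j, Y j i = starRingEnd ℂ (Y i j) := by
    intro i j
    have := congrFun (congrFun hYh.eq j) i
    rw [Matrix.conjTranspose_apply] at this
    exact this.symm
  have habsX : ∀ i j, ‖X j i‖ = ‖X i j‖ := by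
    intro i j; rw [hXsym i j, Complex.norm_conj]
  have habsY : ∀ i j, ‖Y j i‖ = ‖Y i j‖ := by
    intro i j; rw [hYsym i j, Complex.norm_conj]
  -- trace of products in eigenbasis
  have e1 : (ρ * (A' * B')).trace = ∑ i, ∑ j, (μ i : ℂ) * (X i j * Y j i) := by
    rw [key_trace hH, ← hUdef, starU_mul_conj hUU]
    simp only [← hXdef, ← hYdef, Matrix.mul_apply, Finset.mul_sum]
    rfl
  have e2 : (ρ * (B' * A')).trace = ∑ i, ∑ j, (μ j : ℂ) * (X i j * Y j i) := by
    rw [key_trace hH, ← hUdef, starU_mul_conj hUU]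
    simp only [← hXdef, ← hYdef, Matrix.mul_apply, Finset.mul_sum]
    rw [Finset.sum_comm]
    refine Finset.sum_congr rfl fun i _ => Finset.sum_congr rfl fun j _ => by ring
  have trace_anti : (ρ * qAnti q A' B').trace
      = ∑ i, ∑ j, ((μ i + q * μ j : ℝ) : ℂ) * (X i j * Y j i) := by
    rw [qAnti, Matrix.mul_add, Matrix.trace_add, Matrix.mul_smul, Matrix.trace_smul,
      e1, e2, smul_eq_mul, Finset.mul_sum, ← Finset.sum_add_distrib]
    refine Finset.sum_congr rfl fun i _ => ?_
    rw [Finset.mul_sum, ← Finset.sum_add_distrib]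
    refine Finset.sum_congr rfl fun j _ => ?_
    push_cast
    ring
  -- variance in eigenbasis
  have hvar : ∀ (M : Matrix (Fin (n+1)) (Fin (n+1)) ℂ) (hM : M.IsHermitian),
      variance ρ M = ∑ i, ∑ j, μ i *
        ‖(star U * shift ρ M * U) i j‖ ^ 2 := by
    intro M hM
    set t := (ρ * M).trace with htdef
    set M' := shift ρ M with hM'def
    set Z := star U * M' * U with hZdef
    have hZh : Z.IsHermitian := conj_herm (hshift M hM)
    have hZsym : ∀ i j, Z j i = starRingEnd ℂ (Z i j) := by
      intro i j
      have := congrFun (congrFun hZh.eq j) i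
      rw [Matrix.conjTranspose_apply] at this
      exact this.symm
    have hsq : (ρ * (M' * M')).trace = (ρ * (M * M)).trace - t ^ 2 := by
      have expand : ρ * (M' * M') = ρ * (M * M) - (2*t) • (ρ * M) + (t^2) • ρ := by
        rw [hM'def]
        unfold shift
        rw [← htdef]
        simp only [Matrix.mul_sub, Matrix.sub_mul, smul_mul_assoc, mul_smul_comm,
          Matrix.mul_one, Matrix.one_mul, smul_smul]
        module
      rw [expand, Matrix.trace_add, Matrix.trace_sub, Matrix.trace_smul, Matrix.trace_smul,
        htr, smul_eq_mul, smul_eq_mul, mul_one]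
      ring
    have : (ρ * (M' * M')).trace
        = ((∑ i, ∑ j, μ i * ‖Z i j‖ ^ 2 : ℝ) : ℂ) := by
      rw [key_trace hH, ← hUdef, starU_mul_conj hUU, ← hZdef]
      push_cast
      simp only [Matrix.mul_apply, Finset.mul_sum]
      refine Finset.sum_congr rfl fun i _ => Finset.sum_congr rfl fun j _ => ?_
      rw [hZsym i j, Complex.mul_conj, ← Complex.sq_norm]
      push_cast
      ring
    rw [variance, ← htdef, ← hsq, this, Complex.ofReal_re]
  -- now the inequality
  have hq1' := le_of_lt hq1
  have hμ0 : ∀ i, 0 ≤ μ i := fun i => hlam0.trans (hbounds i).1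
  set c : Fin (n+1) → Fin (n+1) → ℝ := fun i j => μ i + q * μ j with hcdef
  have main : ∀ Z : Matrix (Fin (n+1)) (Fin (n+1)) ℂ,
      (∀ i j, ‖Z j i‖ = ‖Z i j‖) →
      (b - q*a) * (∑ p : Fin (n+1) × Fin (n+1), |c p.1 p.2| * ‖Z p.1 p.2‖ ^ 2)
        ≤ (1-q) * ((b + q*a) *
          (∑ p : Fin (n+1) × Fin (n+1), μ p.1 * ‖Z p.1 p.2‖ ^ 2)) := by
    intro Z hZs
    set K : Fin (n+1) × Fin (n+1) → ℝ := fun p => ‖Z p.1 p.2‖ ^ 2 with hKdef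
    have hK0 : ∀ p, 0 ≤ K p := fun p => by positivity
    have hswap : ∀ f : Fin (n+1) → Fin (n+1) → ℝ,
        ∑ p : Fin (n+1) × Fin (n+1), f p.1 p.2 * K p
          = ∑ p : Fin (n+1) × Fin (n+1), f p.2 p.1 * K p := by
      intro f
      rw [← Equiv.sum_comp (Equiv.prodComm (Fin (n+1)) (Fin (n+1)))
        (fun p : Fin (n+1) × Fin (n+1) => f p.2 p.1 * K p)]
      refine Finset.sum_congr rfl fun p _ => ?_
      simp only [Equiv.prodComm_apply, Prod.fst_swap, Prod.snd_swap, hKdef]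
      rw [hZs p.1 p.2]
    have point : ∀ p : Fin (n+1) × Fin (n+1),
        (b - q*a) * ((|c p.1 p.2| + |c p.2 p.1|) * K p)
          ≤ (1-q) * ((b + q*a) * ((μ p.1 + μ p.2) * K p)) := by
      intro p
      have h := qkeyR hlam0 (hbounds p.1).1 (hbounds p.1).2 (hbounds p.2).1
        (hbounds p.2).2 hq0 hq1'
      have h2 := mul_le_mul_of_nonneg_right h (hK0 p)
      calc (b - q*a) * ((|c p.1 p.2| + |c p.2 p.1|) * K p)
          = (b - q*a) * (|μ p.1 + q * μ p.2| + |μ p.2 + q * μ p.1|) * K p := by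
            simp only [hcdef]; ring
        _ ≤ (1-q) * ((b + q*a) * (μ p.1 + μ p.2)) * K p := h2
        _ = (1-q) * ((b + q*a) * ((μ p.1 + μ p.2) * K p)) := by ring
    have hsum := Finset.sum_le_sum fun p (_ : p ∈ Finset.univ) => point p
    have L : ∑ p : Fin (n+1) × Fin (n+1), (b - q*a) * ((|c p.1 p.2| + |c p.2 p.1|) * K p)
        = (b - q*a) * (∑ p : Fin (n+1) × Fin (n+1), |c p.1 p.2| * K p)
          + (b - q*a) * (∑ p : Fin (n+1) × Fin (n+1), |c p.2 p.1| * K p) := by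
      simp only [Finset.mul_sum, ← Finset.sum_add_distrib]
      exact Finset.sum_congr rfl fun p _ => by ring
    have R : ∑ p : Fin (n+1) × Fin (n+1), (1-q) * ((b + q*a) * ((μ p.1 + μ p.2) * K p))
        = (1-q) * ((b + q*a) * (∑ p : Fin (n+1) × Fin (n+1), μ p.1 * K p))
          + (1-q) * ((b + q*a) * (∑ p : Fin (n+1) × Fin (n+1), μ p.2 * K p)) := by
      simp only [Finset.mul_sum, ← Finset.sum_add_distrib]
      exact Finset.sum_congr rfl fun p _ => by ring
    have s1 : (∑ p : Fin (n+1) × Fin (n+1), |c p.1 p.2| * K p)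
        = ∑ p : Fin (n+1) × Fin (n+1), |c p.2 p.1| * K p := hswap fun i j => |c i j|
    have s2 : (∑ p : Fin (n+1) × Fin (n+1), μ p.1 * K p)
        = ∑ p : Fin (n+1) × Fin (n+1), μ p.2 * K p := hswap fun i j => μ i
    rw [L, R, ← s1, ← s2] at hsum
    linarith
  set TrT := (ρ * qAnti q A' B').trace with hTdef
  have trace_anti' : TrT = ∑ p : Fin (n+1) × Fin (n+1),
      ((c p.1 p.2 : ℝ) : ℂ) * (X p.1 p.2 * Y p.2 p.1) := by
    rw [trace_anti]
    exact (Fintype.sum_prod_type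
      (fun p : Fin (n+1) × Fin (n+1) => ((c p.1 p.2 : ℝ) : ℂ) * (X p.1 p.2 * Y p.2 p.1))).symm
  have habsT : ‖TrT‖ ≤ ∑ p : Fin (n+1) × Fin (n+1),
      |c p.1 p.2| * (‖X p.1 p.2‖ * ‖Y p.2 p.1‖) := by
    rw [trace_anti']
    refine (norm_sum_le _ _).trans (le_of_eq (Finset.sum_congr rfl fun p _ => ?_))
    rw [norm_mul, norm_mul, Complex.norm_real, Real.norm_eq_abs]
  set SA := ∑ p : Fin (n+1) × Fin (n+1), |c p.1 p.2| * ‖X p.1 p.2‖ ^ 2 with hSAdef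
  set SB := ∑ p : Fin (n+1) × Fin (n+1), |c p.1 p.2| * ‖Y p.2 p.1‖ ^ 2 with hSBdef
  have hCS : (∑ p : Fin (n+1) × Fin (n+1),
      |c p.1 p.2| * (‖X p.1 p.2‖ * ‖Y p.2 p.1‖)) ^ 2 ≤ SA * SB :=
    Finset.sum_sq_le_sum_mul_sum_of_sq_eq_mul _ (fun p _ => by positivity)
      (fun p _ => by positivity) (fun p _ => by ring)
  have hT2 : ‖TrT‖ ^ 2 ≤ SA * SB :=
    (pow_le_pow_left₀ (norm_nonneg TrT) habsT 2).trans hCS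
  have hSB' : SB = ∑ p : Fin (n+1) × Fin (n+1), |c p.1 p.2| * ‖Y p.1 p.2‖ ^ 2 :=
    Finset.sum_congr rfl fun p _ => by rw [habsY p.1 p.2]
  have hbA : (b - q*a) * SA ≤ (1-q) * ((b + q*a) *
      (∑ p : Fin (n+1) × Fin (n+1), μ p.1 * ‖X p.1 p.2‖ ^ 2)) := main X habsX
  have hbB : (b - q*a) * SB ≤ (1-q) * ((b + q*a) *
      (∑ p : Fin (n+1) × Fin (n+1), μ p.1 * ‖Y p.1 p.2‖ ^ 2)) := by
    rw [hSB']; exact main Y habsY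
  have hVA : variance ρ A = ∑ p : Fin (n+1) × Fin (n+1),
      μ p.1 * ‖X p.1 p.2‖ ^ 2 := by
    rw [hvar A hA]
    exact (Fintype.sum_prod_type
      (fun p : Fin (n+1) × Fin (n+1) => μ p.1 * ‖X p.1 p.2‖ ^ 2)).symm
  have hVB : variance ρ B = ∑ p : Fin (n+1) × Fin (n+1),
      μ p.1 * ‖Y p.1 p.2‖ ^ 2 := by
    rw [hvar B hB]
    exact (Fintype.sum_prod_type
      (fun p : Fin (n+1) × Fin (n+1) => μ p.1 * ‖Y p.1 p.2‖ ^ 2)).symm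
  have hR0 : 0 ≤ b - q * a := by nlinarith
  have hS0 : 0 ≤ b + q * a := by nlinarith
  have hSB0 : 0 ≤ SB := Finset.sum_nonneg fun p _ => mul_nonneg (abs_nonneg _) (sq_nonneg _)
  have hVA0 : 0 ≤ ∑ p : Fin (n+1) × Fin (n+1), μ p.1 * ‖X p.1 p.2‖ ^ 2 :=
    Finset.sum_nonneg fun p _ => mul_nonneg (hμ0 _) (sq_nonneg _)
  rw [hVA, hVB]
  calc (b - q*a) ^ 2 * ‖TrT‖ ^ 2
      ≤ (b - q*a) ^ 2 * (SA * SB) :=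
        mul_le_mul_of_nonneg_left hT2 (sq_nonneg _)
    _ = ((b - q*a) * SA) * ((b - q*a) * SB) := by ring
    _ ≤ ((1-q) * ((b + q*a) * (∑ p : Fin (n+1) × Fin (n+1),
            μ p.1 * ‖X p.1 p.2‖ ^ 2)))
        * ((1-q) * ((b + q*a) * (∑ p : Fin (n+1) × Fin (n+1),
            μ p.1 * ‖Y p.1 p.2‖ ^ 2))) := by
        refine mul_le_mul hbA hbB (mul_nonneg hR0 hSB0) ?_
        exact mul_nonneg (by linarith) (mul_nonneg hS0 hVA0)
    _ = (1 - q) ^ 2 * (b + q*a) ^ 2 * (∑ p : Fin (n+1) × Fin (n+1),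
            μ p.1 * ‖X p.1 p.2‖ ^ 2)
        * (∑ p : Fin (n+1) × Fin (n+1), μ p.1 * ‖Y p.1 p.2‖ ^ 2) := by ring
end

section
/- Let ρ be an n×n density matrix with eigenvalues 0 ≤ λ₁ ≤ λ₂ ≤ ⋯ ≤ λ_n, let A, B be n×n self-adjoint complex matrices, and let q ∈ ℝ with q < −1. Then q²·(λ₁ − qλ_n)²·|Tr[ρ[A₀,B₀]_{−1/q}]|² = q²·(λ₁ − qλ_n)²·|Tr[ρ{A₀,B₀}_{1/q}]|² = (λ₁ − qλ_n)²·|Tr[ρ{B₀,A₀}_q]|², and (λ₁ − qλ_n)²·|Tr[ρ{B₀,A₀}_q]|² ≤ (1−q)²·(λ₁ + qλ_n)²·V_ρ(A)·V_ρ(B). -/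
open Matrix ComplexOrder

lemma perterm {q l0 l1 a b : ℝ} (z : ℂ) (hq : q < -1) (h0 : 0 ≤ l0)
    (ha0 : l0 ≤ a) (ha1 : a ≤ l1) (hb0 : l0 ≤ b) (hb1 : b ≤ l1) :
    (l0 - q * l1) * ‖((b + q * a : ℝ) : ℂ) * z + ((a + q * b : ℝ) : ℂ) * (star z)‖ ≤
    ((1 - q) * (-l0 - q * l1)) * ((a + b) * ‖z‖) := by
  have hl1 : 0 ≤ l1 := le_trans h0 (ha0.trans ha1)
  have ha : 0 ≤ a := le_trans h0 ha0
  have hb : 0 ≤ b := le_trans h0 hb0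
  have hc : 0 ≤ l0 - q * l1 := by nlinarith
  have hdd : 0 ≤ (1 - q) * (-l0 - q * l1) := by nlinarith
  have hre : (((b + q * a : ℝ) : ℂ) * z + ((a + q * b : ℝ) : ℂ) * (star z)).re
      = (b + q * a) * z.re + (a + q * b) * z.re := by
    simp [Complex.add_re, Complex.mul_re, Complex.conj_re, Complex.conj_im]
  have him : (((b + q * a : ℝ) : ℂ) * z + ((a + q * b : ℝ) : ℂ) * (star z)).im
      = (b + q * a) * z.im - (a + q * b) * z.im := by
    simp [Complex.add_im, Complex.mul_im, Complex.conj_re, Complex.conj_im]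
    ring
  have e1 : ((l0 - q * l1) * (1 + q)) * ((l0 - q * l1) * (1 + q)) ≤ ((1 - q) * (-l0 - q * l1)) * ((1 - q) * (-l0 - q * l1)) := by
    have h1 : (l0 - q * l1) * (-(1 + q)) ≤ (1 - q) * (-l0 - q * l1) := by nlinarith
    have h1' : 0 ≤ (l0 - q * l1) * (-(1+q)) := mul_nonneg hc (by linarith)
    nlinarith
  have e2 : ((l0 - q * l1) * (1 - q) * (b - a)) * ((l0 - q * l1) * (1 - q) * (b - a))
      ≤ (((1 - q) * (-l0 - q * l1)) * (a + b)) * (((1 - q) * (-l0 - q * l1)) * (a + b)) := by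
    have key1 : (l0 - q * l1) * (b - a) ≤ (-l0 - q * l1) * (a + b) := by
      nlinarith [mul_le_mul hb1 ha0 h0 hl1, mul_nonneg (by linarith : (0:ℝ) ≤ -q - 1) (mul_nonneg hl1 ha)]
    have key2 : (l0 - q * l1) * (a - b) ≤ (-l0 - q * l1) * (a + b) := by
      nlinarith [mul_le_mul ha1 hb0 h0 hl1, mul_nonneg (by linarith : (0:ℝ) ≤ -q - 1) (mul_nonneg hl1 hb)]
    have h2a : (l0 - q * l1) * (1 - q) * (b - a) ≤ ((1 - q) * (-l0 - q * l1)) * (a + b) := by nlinarith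
    have h2b : (l0 - q * l1) * (1 - q) * (a - b) ≤ ((1 - q) * (-l0 - q * l1)) * (a + b) := by nlinarith
    have hdd2 : 0 ≤ ((1 - q) * (-l0 - q * l1)) * (a + b) := mul_nonneg hdd (by linarith)
    nlinarith
  set w := ((b + q * a : ℝ) : ℂ) * z + ((a + q * b : ℝ) : ℂ) * (star z) with hw
  have key : ((l0 - q * l1) * ‖w‖) ^ 2
      ≤ (((1 - q) * (-l0 - q * l1)) * ((a + b) * ‖z‖)) ^ 2 := by
    calc ((l0 - q * l1) * ‖w‖) ^ 2
        = (l0 - q * l1) * (l0 - q * l1) * (w.re * w.re + w.im * w.im) := by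
          rw [mul_pow, Complex.sq_norm, Complex.normSq_apply]; ring
      _ = ((l0 - q * l1) * (1+q) * ((l0 - q * l1) * (1+q))) * (((a+b)*z.re) * ((a+b)*z.re))
          + ((l0 - q * l1) * (1-q) * (b-a) * ((l0 - q * l1) * (1-q) * (b-a))) * (z.im * z.im) := by
          rw [hre, him]; ring
      _ ≤ (((1 - q) * (-l0 - q * l1)) * ((1 - q) * (-l0 - q * l1))) * (((a+b)*z.re) * ((a+b)*z.re))
          + ((((1 - q) * (-l0 - q * l1)) * (a + b)) * (((1 - q) * (-l0 - q * l1)) * (a + b))) * (z.im * z.im) := by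
          exact add_le_add (mul_le_mul_of_nonneg_right e1 (mul_self_nonneg _))
            (mul_le_mul_of_nonneg_right e2 (mul_self_nonneg _))
      _ = (((1 - q) * (-l0 - q * l1)) * ((a + b) * ‖z‖)) ^ 2 := by
          rw [mul_pow, mul_pow, mul_pow, Complex.sq_norm, Complex.normSq_apply]; ring
  have hrhs : 0 ≤ ((1 - q) * (-l0 - q * l1)) * ((a + b) * ‖z‖) :=
    mul_nonneg hdd (mul_nonneg (by linarith) (norm_nonneg _))
  exact le_of_pow_le_pow_left₀ two_ne_zero hrhs key

/-- Refined uncertainty relation, case `q < −1`: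
`q²·(λ₁ − qλₙ)²·|Tr[ρ[A₀,B₀]_{−1/q}]|² = q²·(λ₁ − qλₙ)²·|Tr[ρ{A₀,B₀}_{1/q}]|²
 = (λ₁ − qλₙ)²·|Tr[ρ{B₀,A₀}_q]|²` and
`(λ₁ − qλₙ)²·|Tr[ρ{B₀,A₀}_q]|² ≤ (1−q)²·(λ₁ + qλₙ)²·V_ρ(A)·V_ρ(B)`. -/
theorem refined_uncertainty_of_lt_neg_one {n : ℕ}
    (ρ A B : Matrix (Fin (n + 1)) (Fin (n + 1)) ℂ)
    (hρ : ρ.PosSemidef) (htr : ρ.trace = 1)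
    (hA : A.IsHermitian) (hB : B.IsHermitian)
    (lam : Fin (n + 1) → ℝ) (hlam : IsOrderedEigenvalues hρ.1 lam)
    (hlam0 : 0 ≤ lam 0) (q : ℝ) (hq : q < -1) :
    q ^ 2 * (lam 0 - q * lam (Fin.last n)) ^ 2 *
        ‖(ρ * qComm (-1 / q) (shift ρ A) (shift ρ B)).trace‖ ^ 2 =
      q ^ 2 * (lam 0 - q * lam (Fin.last n)) ^ 2 *
        ‖(ρ * qAnti (1 / q) (shift ρ A) (shift ρ B)).trace‖ ^ 2 ∧
    q ^ 2 * (lam 0 - q * lam (Fin.last n)) ^ 2 *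
        ‖(ρ * qAnti (1 / q) (shift ρ A) (shift ρ B)).trace‖ ^ 2 =
      (lam 0 - q * lam (Fin.last n)) ^ 2 *
        ‖(ρ * qAnti q (shift ρ B) (shift ρ A)).trace‖ ^ 2 ∧
    (lam 0 - q * lam (Fin.last n)) ^ 2 *
        ‖(ρ * qAnti q (shift ρ B) (shift ρ A)).trace‖ ^ 2 ≤
      (1 - q) ^ 2 * (lam 0 + q * lam (Fin.last n)) ^ 2 *
        variance ρ A * variance ρ B := by
  obtain ⟨hmono, σ, hσ⟩ := hlam
  classical
  set A₀ := shift ρ A with hA₀def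
  set B₀ := shift ρ B with hB₀def
  have e1 : qComm (-1 / q) A₀ B₀ = qAnti (1 / q) A₀ B₀ := by
    unfold qComm qAnti
    rw [sub_eq_add_neg, ← neg_smul]
    congr 1
    congr 1
    push_cast
    ring
  have hq0 : q ≠ 0 := by intro h; rw [h] at hq; norm_num at hq
  have hqc : (q : ℂ) * ((1/q : ℝ) : ℂ) = 1 := by
    push_cast
    field_simp
  have e2 : (ρ * qAnti q B₀ A₀).trace = (q : ℂ) * (ρ * qAnti (1/q) A₀ B₀).trace := by
    unfold qAnti
    rw [Matrix.mul_add, Matrix.mul_add, trace_add, trace_add, Matrix.mul_smul, Matrix.mul_smul,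
      trace_smul, trace_smul, smul_eq_mul, smul_eq_mul]
    linear_combination (-((ρ * (B₀ * A₀)).trace)) * hqc
  refine ⟨by rw [e1], by rw [e2, norm_mul, Complex.norm_real, Real.norm_eq_abs, mul_pow, sq_abs]; ring, ?_⟩
  -- spectral setup
  set U : Matrix (Fin (n+1)) (Fin (n+1)) ℂ := ↑(hρ.1.eigenvectorUnitary) with hUdef
  set d : Fin (n+1) → ℝ := hρ.1.eigenvalues with hddef
  have hU1 : U * star U = 1 := Matrix.mem_unitaryGroup_iff.mp (hρ.1.eigenvectorUnitary).2
  have hD : star U * ρ * U = Matrix.diagonal (fun i => (d i : ℂ)) := by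
    have h := hρ.1.conjStarAlgAut_star_eigenvectorUnitary
    simpa [Unitary.conjStarAlgAut_apply, Function.comp_def] using h
  have cjmul : ∀ X Y : Matrix (Fin (n+1)) (Fin (n+1)) ℂ,
      (star U * X * U) * (star U * Y * U) = star U * (X * Y) * U := by
    intro X Y
    calc (star U * X * U) * (star U * Y * U)
        = star U * X * (U * star U) * (Y * U) := by simp only [Matrix.mul_assoc]
      _ = star U * (X * Y) * U := by rw [hU1]; simp only [Matrix.mul_one, Matrix.mul_assoc]
  have trconj : ∀ M : Matrix (Fin (n+1)) (Fin (n+1)) ℂ, (star U * M * U).trace = M.trace := by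
    intro M
    rw [Matrix.trace_mul_comm, ← Matrix.mul_assoc, hU1, Matrix.one_mul]
  have key : ∀ X Y : Matrix (Fin (n+1)) (Fin (n+1)) ℂ,
      (ρ * (X * Y)).trace
        = ∑ i, ∑ j, (d i : ℂ) * ((star U * X * U) i j * (star U * Y * U) j i) := by
    intro X Y
    rw [← trconj (ρ * (X * Y)), ← cjmul ρ (X * Y), hD, ← cjmul X Y]
    simp only [Matrix.trace, Matrix.diag]
    refine Finset.sum_congr rfl fun i _ => ?_
    rw [Matrix.diagonal_mul, Matrix.mul_apply, Finset.mul_sum]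
  have htreal : ∀ C : Matrix (Fin (n+1)) (Fin (n+1)) ℂ, C.IsHermitian →
      star ((ρ * C).trace) = (ρ * C).trace := by
    intro C hC
    rw [← Matrix.trace_conjTranspose, Matrix.conjTranspose_mul, hC.eq, hρ.1.eq,
      Matrix.trace_mul_comm]
  have hshiftH : ∀ C : Matrix (Fin (n+1)) (Fin (n+1)) ℂ, C.IsHermitian →
      (shift ρ C).IsHermitian := by
    intro C hC
    show (shift ρ C)ᴴ = shift ρ C
    unfold shift
    rw [Matrix.conjTranspose_sub, Matrix.conjTranspose_smul, Matrix.conjTranspose_one, hC.eq,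
      htreal C hC]
  have hconjH : ∀ C : Matrix (Fin (n+1)) (Fin (n+1)) ℂ, C.IsHermitian →
      (star U * C * U).IsHermitian := by
    intro C hC
    show (star U * C * U)ᴴ = star U * C * U
    simp only [Matrix.star_eq_conjTranspose, Matrix.conjTranspose_mul,
      Matrix.conjTranspose_conjTranspose, hC.eq, Matrix.mul_assoc]
  -- variance formula
  have hvar : ∀ C : Matrix (Fin (n+1)) (Fin (n+1)) ℂ, (hC : C.IsHermitian) →
      variance ρ C = ∑ i, ∑ j, d i * ‖(star U * shift ρ C * U) i j‖ ^ 2 := by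
    intro C hC
    have expand : shift ρ C * shift ρ C
        = C * C - (ρ * C).trace • C - (ρ * C).trace • C
          + ((ρ * C).trace * (ρ * C).trace) • (1 : Matrix (Fin (n+1)) (Fin (n+1)) ℂ) := by
      unfold shift
      simp only [Matrix.sub_mul, Matrix.mul_sub, Matrix.smul_mul, Matrix.mul_smul,
        smul_sub, sub_smul, Matrix.one_mul, Matrix.mul_one, smul_smul]
      abel
    have hρmul : ρ * (shift ρ C * shift ρ C)
        = ρ * (C * C) - (ρ * C).trace • (ρ * C) - (ρ * C).trace • (ρ * C)
          + ((ρ * C).trace * (ρ * C).trace) • ρ := by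
      rw [expand]
      simp only [Matrix.mul_sub, Matrix.mul_add, Matrix.mul_smul, Matrix.mul_one]
    have htr2 : (ρ * (shift ρ C * shift ρ C)).trace
        = (ρ * (C * C)).trace - ((ρ * C).trace) ^ 2 := by
      rw [hρmul]
      simp only [trace_add, trace_sub, trace_smul, htr, smul_eq_mul]
      ring
    have hH := hconjH (shift ρ C) (hshiftH C hC)
    have h3 : (ρ * (shift ρ C * shift ρ C)).trace
        = ((∑ i, ∑ j, d i * ‖(star U * shift ρ C * U) i j‖ ^ 2 : ℝ) : ℂ) := by
      rw [key (shift ρ C) (shift ρ C)]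
      push_cast
      refine Finset.sum_congr rfl fun i _ => Finset.sum_congr rfl fun j _ => ?_
      rw [← hH.apply j i, Complex.star_def, Complex.mul_conj, Complex.normSq_eq_norm_sq]
      push_cast
      ring
    unfold variance
    rw [← htr2, h3, Complex.ofReal_re]
  -- abbreviations
  have hA₀H : A₀.IsHermitian := hshiftH A hA
  have hB₀H : B₀.IsHermitian := hshiftH B hB
  set A' := star U * A₀ * U with hA'def
  set B' := star U * B₀ * U with hB'def
  have hA'H : A'.IsHermitian := hconjH A₀ hA₀H
  have hB'H : B'.IsHermitian := hconjH B₀ hB₀H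
  have hSA := hvar A hA
  have hSB := hvar B hB
  rw [← hA₀def, ← hA'def] at hSA
  rw [← hB₀def, ← hB'def] at hSB
  set l0 := lam 0 with hl0def
  set l1 := lam (Fin.last n) with hl1def
  have hdbound : ∀ i, l0 ≤ d i ∧ d i ≤ l1 := by
    intro i
    have h := hσ (σ.symm i)
    rw [Equiv.apply_symm_apply] at h
    exact ⟨h ▸ hmono (Fin.zero_le _), h ▸ hmono (Fin.le_last _)⟩
  have hd0 : ∀ i, 0 ≤ d i := fun i => le_trans hlam0 (hdbound i).1
  have hl1n : 0 ≤ l1 := le_trans hlam0 (hmono (Fin.zero_le _))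
  have hl01 : l0 ≤ l1 := hmono (Fin.zero_le _)
  have hc : 0 ≤ l0 - q * l1 := by nlinarith [mul_nonneg (show (0:ℝ) ≤ -q by linarith) hl1n]
  have hdd : 0 ≤ (1 - q) * (-l0 - q * l1) := by
    nlinarith [mul_nonneg (show (0:ℝ) ≤ -q - 1 by linarith) hl1n]
  set T := (ρ * qAnti q B₀ A₀).trace with hTdef
  have hT : T = ∑ i, ∑ j, ((d i : ℂ) * (B' i j * A' j i)
      + (q : ℂ) * ((d i : ℂ) * (A' i j * B' j i))) := by
    have hsplit : ρ * qAnti q B₀ A₀ = ρ * (B₀ * A₀) + (q : ℂ) • (ρ * (A₀ * B₀)) := by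
      unfold qAnti
      rw [Matrix.mul_add, Matrix.mul_smul]
    rw [hTdef, hsplit, trace_add, trace_smul, smul_eq_mul, key B₀ A₀, key A₀ B₀, Finset.mul_sum]
    simp only [Finset.mul_sum]
    rw [← Finset.sum_add_distrib]
    refine Finset.sum_congr rfl fun i _ => ?_
    rw [← Finset.sum_add_distrib]
  have hswap : T = ∑ i, ∑ j, ((d j : ℂ) * (B' j i * A' i j)
      + (q : ℂ) * ((d j : ℂ) * (A' j i * B' i j))) := by
    rw [hT, Finset.sum_comm]
  have h2T : 2 * T = ∑ i, ∑ j, (((d j + q * d i : ℝ) : ℂ) * (A' i j * star (B' i j))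
      + ((d i + q * d j : ℝ) : ℂ) * star (A' i j * star (B' i j))) := by
    calc 2 * T = (∑ i, ∑ j, ((d i : ℂ) * (B' i j * A' j i)
          + (q : ℂ) * ((d i : ℂ) * (A' i j * B' j i))))
        + ∑ i, ∑ j, ((d j : ℂ) * (B' j i * A' i j)
          + (q : ℂ) * ((d j : ℂ) * (A' j i * B' i j))) := by
          rw [two_mul]
          exact congrArg₂ (· + ·) hT hswap
      _ = ∑ i, ∑ j, (((d i : ℂ) * (B' i j * A' j i) + (q : ℂ) * ((d i : ℂ) * (A' i j * B' j i)))
          + ((d j : ℂ) * (B' j i * A' i j) + (q : ℂ) * ((d j : ℂ) * (A' j i * B' i j)))) := by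
          rw [← Finset.sum_add_distrib]
          exact Finset.sum_congr rfl fun i _ => (Finset.sum_add_distrib).symm
      _ = _ := by
          refine Finset.sum_congr rfl fun i _ => Finset.sum_congr rfl fun j _ => ?_
          rw [← hA'H.apply j i, ← hB'H.apply j i, star_mul', star_star]
          push_cast
          ring
  set S := ∑ i, ∑ j, d i * (‖A' i j‖ * ‖B' i j‖) with hSdef
  have habs1 : (l0 - q * l1) * ‖2 * T‖
      ≤ ∑ i, ∑ j, ((1 - q) * (-l0 - q * l1))
        * ((d i + d j) * ‖A' i j * star (B' i j)‖) := by
    rw [h2T]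
    calc (l0 - q * l1) * ‖∑ i, ∑ j, (((d j + q * d i : ℝ) : ℂ) * (A' i j * star (B' i j))
          + ((d i + q * d j : ℝ) : ℂ) * star (A' i j * star (B' i j)))‖
        ≤ (l0 - q * l1) * ∑ i, ∑ j, ‖((d j + q * d i : ℝ) : ℂ) * (A' i j * star (B' i j))
          + ((d i + q * d j : ℝ) : ℂ) * star (A' i j * star (B' i j))‖ := by
          refine mul_le_mul_of_nonneg_left ?_ hc
          exact le_trans (norm_sum_le _ _)
            (Finset.sum_le_sum fun i _ => norm_sum_le _ _)
      _ = ∑ i, ∑ j, (l0 - q * l1) * ‖((d j + q * d i : ℝ) : ℂ) * (A' i j * star (B' i j))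
          + ((d i + q * d j : ℝ) : ℂ) * star (A' i j * star (B' i j))‖ := by
          rw [Finset.mul_sum]
          exact Finset.sum_congr rfl fun i _ => Finset.mul_sum _ _ _
      _ ≤ _ := by
          refine Finset.sum_le_sum fun i _ => Finset.sum_le_sum fun j _ => ?_
          exact perterm _ hq hlam0 (hdbound i).1 (hdbound i).2 (hdbound j).1 (hdbound j).2
  have hABabs : ∀ i j, ‖A' i j * star (B' i j)‖
      = ‖A' i j‖ * ‖B' i j‖ := by
    intro i j
    rw [norm_mul]
    congr 1
    rw [Complex.star_def, Complex.norm_conj]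
  have hAsym : ∀ i j, ‖A' j i‖ = ‖A' i j‖ := by
    intro i j
    rw [← hA'H.apply j i, Complex.star_def, Complex.norm_conj]
  have hBsym : ∀ i j, ‖B' j i‖ = ‖B' i j‖ := by
    intro i j
    rw [← hB'H.apply j i, Complex.star_def, Complex.norm_conj]
  have hsum2 : (∑ i, ∑ j, ((1 - q) * (-l0 - q * l1))
        * ((d i + d j) * ‖A' i j * star (B' i j)‖))
      = ((1 - q) * (-l0 - q * l1)) * (2 * S) := by
    have hexp : ∀ i j : Fin (n+1), ((1 - q) * (-l0 - q * l1))
          * ((d i + d j) * ‖A' i j * star (B' i j)‖)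
        = ((1 - q) * (-l0 - q * l1)) * (d i * (‖A' i j‖ * ‖B' i j‖))
          + ((1 - q) * (-l0 - q * l1)) * (d j * (‖A' i j‖ * ‖B' i j‖)) := by
      intro i j
      rw [hABabs]
      ring
    calc (∑ i, ∑ j, ((1 - q) * (-l0 - q * l1))
          * ((d i + d j) * ‖A' i j * star (B' i j)‖))
        = (∑ i, ∑ j, ((1 - q) * (-l0 - q * l1)) * (d i * (‖A' i j‖ * ‖B' i j‖)))
          + (∑ i, ∑ j, ((1 - q) * (-l0 - q * l1)) * (d j * (‖A' i j‖ * ‖B' i j‖))) := by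
          rw [← Finset.sum_add_distrib]
          refine Finset.sum_congr rfl fun i _ => ?_
          rw [← Finset.sum_add_distrib]
          exact Finset.sum_congr rfl fun j _ => hexp i j
      _ = (∑ i, ∑ j, ((1 - q) * (-l0 - q * l1)) * (d i * (‖A' i j‖ * ‖B' i j‖)))
          + (∑ i, ∑ j, ((1 - q) * (-l0 - q * l1)) * (d i * (‖A' i j‖ * ‖B' i j‖))) := by
          congr 1
          rw [Finset.sum_comm]
          refine Finset.sum_congr rfl fun i _ => Finset.sum_congr rfl fun j _ => ?_
          rw [hAsym i j, hBsym i j]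
      _ = ((1 - q) * (-l0 - q * l1)) * (2 * S) := by
          have hx : (∑ i, ∑ j, ((1 - q) * (-l0 - q * l1)) * (d i * (‖A' i j‖ * ‖B' i j‖)))
              = ((1 - q) * (-l0 - q * l1)) * S := by
            rw [hSdef, Finset.mul_sum]
            exact Finset.sum_congr rfl fun i _ => (Finset.mul_sum _ _ _).symm
          rw [hx]; ring
  set SA := ∑ i, ∑ j, d i * ‖A' i j‖ ^ 2 with hSAdef
  set SB := ∑ i, ∑ j, d i * ‖B' i j‖ ^ 2 with hSBdef
  have hCS : S ^ 2 ≤ SA * SB := by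
    rw [hSdef, hSAdef, hSBdef]
    have h := Finset.sum_mul_sq_le_sq_mul_sq (Finset.univ ×ˢ Finset.univ)
      (fun p : Fin (n+1) × Fin (n+1) => Real.sqrt (d p.1) * ‖A' p.1 p.2‖)
      (fun p => Real.sqrt (d p.1) * ‖B' p.1 p.2‖)
    rw [Finset.sum_product, Finset.sum_product, Finset.sum_product] at h
    calc (∑ i, ∑ j, d i * (‖A' i j‖ * ‖B' i j‖)) ^ 2
        = (∑ i, ∑ j, (Real.sqrt (d i) * ‖A' i j‖)
            * (Real.sqrt (d i) * ‖B' i j‖)) ^ 2 := by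
          congr 1
          refine Finset.sum_congr rfl fun i _ => Finset.sum_congr rfl fun j _ => ?_
          rw [show (Real.sqrt (d i) * ‖A' i j‖) * (Real.sqrt (d i) * ‖B' i j‖)
              = (Real.sqrt (d i) * Real.sqrt (d i)) * (‖A' i j‖ * ‖B' i j‖) by ring,
            Real.mul_self_sqrt (hd0 i)]
      _ ≤ (∑ i, ∑ j, (Real.sqrt (d i) * ‖A' i j‖) ^ 2)
          * (∑ i, ∑ j, (Real.sqrt (d i) * ‖B' i j‖) ^ 2) := h
      _ = _ := by
          congr 1 <;> exact Finset.sum_congr rfl fun i _ => Finset.sum_congr rfl fun j _ => by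
            rw [mul_pow, Real.sq_sqrt (hd0 i)]
  have hS0 : 0 ≤ S := by
    rw [hSdef]
    refine Finset.sum_nonneg fun i _ => Finset.sum_nonneg fun j _ => ?_
    exact mul_nonneg (hd0 i) (mul_nonneg (norm_nonneg _) (norm_nonneg _))
  have h2abs : ‖2 * T‖ = 2 * ‖T‖ := by
    rw [norm_mul]
    norm_num
  have hT1 : (l0 - q * l1) * ‖T‖ ≤ ((1 - q) * (-l0 - q * l1)) * S := by
    have hx := habs1
    rw [hsum2, h2abs] at hx
    linarith
  have hsq : ((l0 - q * l1) * ‖T‖) ^ 2 ≤ (((1 - q) * (-l0 - q * l1)) * S) ^ 2 :=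
    pow_le_pow_left₀ (mul_nonneg hc (norm_nonneg _)) hT1 2
  have hfin : (((1 - q) * (-l0 - q * l1)) * S) ^ 2 ≤ ((1 - q) * (-l0 - q * l1)) ^ 2 * (SA * SB) := by
    rw [mul_pow]
    exact mul_le_mul_of_nonneg_left hCS (sq_nonneg _)
  rw [hSA, hSB]
  calc (l0 - q * l1) ^ 2 * ‖T‖ ^ 2
      = ((l0 - q * l1) * ‖T‖) ^ 2 := by ring
    _ ≤ (((1 - q) * (-l0 - q * l1)) * S) ^ 2 := hsq
    _ ≤ ((1 - q) * (-l0 - q * l1)) ^ 2 * (SA * SB) := hfin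
    _ = (1 - q) ^ 2 * (l0 + q * l1) ^ 2 * SA * SB := by ring
end

section
/- Let ρ be an n×n density matrix with eigenvalues 0 ≤ λ₁ ≤ λ₂ ≤ ⋯ ≤ λ_n and let A, B be n×n self-adjoint complex matrices. Then (λ_n + λ₁)²·|Tr[ρ[A,B]]|² ≤ 4·(λ_n − λ₁)²·V_ρ(A)·V_ρ(B), where [A,B] = AB − BA. Moreover Tr[ρ[A₀,B₀]] = Tr[ρ[A,B]]. -/
open Matrix ComplexOrder

lemma key_real_ineq {m M x y : ℝ} (hm : 0 ≤ m) (hx1 : m ≤ x) (hx2 : x ≤ M)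
    (hy1 : m ≤ y) (hy2 : y ≤ M) : (M + m) * |x - y| ≤ (M - m) * (x + y) := by
  rcases le_total x y with h | h
  · rw [abs_of_nonpos (by linarith)]; nlinarith
  · rw [abs_of_nonneg (by linarith)]; nlinarith

lemma comm_shift_aux {n : ℕ} (M N : Matrix (Fin n) (Fin n) ℂ) (c d : ℂ) :
    (M - c • 1) * (N - d • 1) - (N - d • 1) * (M - c • 1) = M * N - N * M := by
  simp only [sub_mul, mul_sub, Matrix.smul_mul, Matrix.mul_smul, one_mul, mul_one,
    smul_smul]
  rw [mul_comm c d]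
  abel

/-- Refined Robertson uncertainty relation (`q = 1` case):
`(λₙ + λ₁)²·|Tr[ρ[A,B]]|² ≤ 4·(λₙ − λ₁)²·V_ρ(A)·V_ρ(B)`, together with
`Tr[ρ[A₀,B₀]] = Tr[ρ[A,B]]`. -/
theorem refined_robertson_uncertainty {n : ℕ}
    (ρ A B : Matrix (Fin (n + 1)) (Fin (n + 1)) ℂ)
    (hρ : ρ.PosSemidef) (htr : ρ.trace = 1)
    (hA : A.IsHermitian) (hB : B.IsHermitian)
    (lam : Fin (n + 1) → ℝ) (hlam : IsOrderedEigenvalues hρ.1 lam)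
    (hlam0 : 0 ≤ lam 0) :
    (lam (Fin.last n) + lam 0) ^ 2 *
        ‖(ρ * (A * B - B * A)).trace‖ ^ 2 ≤
      4 * (lam (Fin.last n) - lam 0) ^ 2 * variance ρ A * variance ρ B ∧
    (ρ * (shift ρ A * shift ρ B - shift ρ B * shift ρ A)).trace =
      (ρ * (A * B - B * A)).trace := by
  set U : Matrix (Fin (n+1)) (Fin (n+1)) ℂ := (hρ.1.eigenvectorUnitary : Matrix (Fin (n+1)) (Fin (n+1)) ℂ) with hU
  have hU1 : U * star U = 1 := (Matrix.mem_unitaryGroup_iff).mp hρ.1.eigenvectorUnitary.2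
  have hU2 : star U * U = 1 := (Matrix.mem_unitaryGroup_iff').mp hρ.1.eigenvectorUnitary.2
  set p : Fin (n+1) → ℝ := hρ.1.eigenvalues with hp
  set D : Matrix (Fin (n+1)) (Fin (n+1)) ℂ := Matrix.diagonal (fun i => (p i : ℂ)) with hD
  have hspec : ρ = U * D * star U := by
    have := hρ.1.spectral_theorem
    rw [this, Unitary.conjStarAlgAut_apply]; rfl
  -- trace transfer
  have htrans : ∀ X : Matrix (Fin (n+1)) (Fin (n+1)) ℂ,
      (ρ * X).trace = (D * (star U * X * U)).trace := by
    intro X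
    rw [hspec]
    rw [Matrix.mul_assoc, Matrix.mul_assoc, Matrix.trace_mul_comm, Matrix.mul_assoc, Matrix.mul_assoc]
  have hmulc : ∀ X Y : Matrix (Fin (n+1)) (Fin (n+1)) ℂ,
      star U * (X * Y) * U = (star U * X * U) * (star U * Y * U) := by
    intro X Y
    calc star U * (X * Y) * U = star U * X * (U * star U) * Y * U := by
          rw [hU1]; noncomm_ring
      _ = _ := by noncomm_ring
  -- conjugated matrices
  set a : Matrix (Fin (n+1)) (Fin (n+1)) ℂ := star U * A * U with ha_def
  set b : Matrix (Fin (n+1)) (Fin (n+1)) ℂ := star U * B * U with hb_def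
  have ha : a.IsHermitian := by
    unfold a
    unfold Matrix.IsHermitian
    rw [Matrix.conjTranspose_mul, Matrix.conjTranspose_mul]
    rw [show Uᴴ = star U from rfl, show (star U)ᴴ = U from star_star U, hA.eq, Matrix.mul_assoc]
  have hb : b.IsHermitian := by
    unfold b
    unfold Matrix.IsHermitian
    rw [Matrix.conjTranspose_mul, Matrix.conjTranspose_mul]
    rw [show Uᴴ = star U from rfl, show (star U)ᴴ = U from star_star U, hB.eq, Matrix.mul_assoc]
  have hDh : D.IsHermitian := by
    rw [hD]
    exact Matrix.isHermitian_diagonal_iff.mpr (fun i => Complex.conj_ofReal (p i))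
  -- trace of D is 1
  have htrD : D.trace = 1 := by
    have := htrans 1
    rw [Matrix.mul_one, htr] at this
    rw [Matrix.mul_one] at this
    rw [hU2, Matrix.mul_one] at this
    exact this.symm
  -- reality of traces against D
  have hreal : ∀ M : Matrix (Fin (n+1)) (Fin (n+1)) ℂ, M.IsHermitian →
      ((starRingEnd ℂ) ((D * M).trace) = (D * M).trace) := by
    intro M hM
    have h1 : (D * M)ᴴ.trace = star ((D * M).trace) := Matrix.trace_conjTranspose (D * M)
    rw [Matrix.conjTranspose_mul, hM.eq, hDh.eq, Matrix.trace_mul_comm] at h1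
    exact h1.symm
  -- centered operators
  set α : ℂ := (D * a).trace with hα_def
  set β : ℂ := (D * b).trace with hβ_def
  have hαreal : (starRingEnd ℂ) α = α := hreal a ha
  have hβreal : (starRingEnd ℂ) β = β := hreal b hb
  set a₀ : Matrix (Fin (n+1)) (Fin (n+1)) ℂ := a - α • 1 with ha₀_def
  set b₀ : Matrix (Fin (n+1)) (Fin (n+1)) ℂ := b - β • 1 with hb₀_def
  have ha₀ : a₀.IsHermitian := by
    rw [ha₀_def]
    unfold Matrix.IsHermitian
    rw [Matrix.conjTranspose_sub, ha.eq, Matrix.conjTranspose_smul,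
      Matrix.conjTranspose_one, Complex.star_def, hαreal]
  have hb₀ : b₀.IsHermitian := by
    rw [hb₀_def]
    unfold Matrix.IsHermitian
    rw [Matrix.conjTranspose_sub, hb.eq, Matrix.conjTranspose_smul,
      Matrix.conjTranspose_one, Complex.star_def, hβreal]
  -- variance identity
  have hvarA : variance ρ A = ((D * (a₀ * a₀)).trace).re := by
    unfold variance
    rw [htrans (A * A), htrans A, hmulc A A]
    congr 1
    rw [ha₀_def]
    rw [show (a - α • 1) * (a - α • 1) = a * a - α • a - α • a + (α * α) • 1 by
      simp only [sub_mul, mul_sub, Matrix.smul_mul, Matrix.mul_smul, one_mul, mul_one,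
        smul_smul]; abel]
    simp only [Matrix.mul_add, Matrix.mul_sub, Matrix.trace_add, Matrix.trace_sub,
      Matrix.mul_smul, Matrix.trace_smul, Matrix.mul_one, htrD]
    rw [← hα_def]
    ring_nf
    rw [← ha_def]
    ring
  have hvarB : variance ρ B = ((D * (b₀ * b₀)).trace).re := by
    unfold variance
    rw [htrans (B * B), htrans B, hmulc B B]
    congr 1
    rw [hb₀_def]
    rw [show (b - β • 1) * (b - β • 1) = b * b - β • b - β • b + (β * β) • 1 by
      simp only [sub_mul, mul_sub, Matrix.smul_mul, Matrix.mul_smul, one_mul, mul_one,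
        smul_smul]; abel]
    simp only [Matrix.mul_add, Matrix.mul_sub, Matrix.trace_add, Matrix.trace_sub,
      Matrix.mul_smul, Matrix.trace_smul, Matrix.mul_one, htrD]
    rw [← hβ_def]
    ring_nf
    rw [← hb_def]
    ring
  -- commutator trace identity
  have hcomm : (ρ * (A * B - B * A)).trace = (D * (a₀ * b₀ - b₀ * a₀)).trace := by
    rw [htrans]
    congr 2
    have h1 : star U * (A * B - B * A) * U = a * b - b * a := by
      rw [Matrix.mul_sub, Matrix.sub_mul, hmulc A B, hmulc B A, ← ha_def, ← hb_def]
    rw [h1, ha₀_def, hb₀_def, comm_shift_aux]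
  -- entrywise trace formula
  have htrace_entry : ∀ M : Matrix (Fin (n+1)) (Fin (n+1)) ℂ,
      (D * M).trace = ∑ j, (p j : ℂ) * M j j := by
    intro M
    rw [hD]
    simp [Matrix.trace, Matrix.diag, Matrix.diagonal_mul]
  have ha₀entry : ∀ j k, a₀ k j = (starRingEnd ℂ) (a₀ j k) := by
    intro j k
    conv_lhs => rw [← ha₀]
    rw [Matrix.conjTranspose_apply, Complex.star_def]
  have hb₀entry : ∀ j k, b₀ k j = (starRingEnd ℂ) (b₀ j k) := by
    intro j k
    conv_lhs => rw [← hb₀]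
    rw [Matrix.conjTranspose_apply, Complex.star_def]
  have habsA : ∀ j k, ‖a₀ k j‖ = ‖a₀ j k‖ := by
    intro j k; rw [ha₀entry j k, Complex.norm_conj]
  have habsB : ∀ j k, ‖b₀ k j‖ = ‖b₀ j k‖ := by
    intro j k; rw [hb₀entry j k, Complex.norm_conj]
  -- trace of commutator as double sum
  have hT : (D * (a₀ * b₀ - b₀ * a₀)).trace
      = ∑ j, ∑ k, ((p j : ℂ) - (p k : ℂ)) * (a₀ j k * b₀ k j) := by
    rw [htrace_entry]
    have e1 : ∀ j : Fin (n+1), (p j : ℂ) * ((a₀ * b₀ - b₀ * a₀) j j)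
        = (∑ k, (p j : ℂ) * (a₀ j k * b₀ k j)) - ∑ k, (p j : ℂ) * (b₀ j k * a₀ k j) := by
      intro j
      rw [Matrix.sub_apply, Matrix.mul_apply, Matrix.mul_apply, mul_sub,
        Finset.mul_sum, Finset.mul_sum]
    simp only [e1]
    rw [Finset.sum_sub_distrib]
    have e2 : ∑ j, ∑ k, (p j : ℂ) * (b₀ j k * a₀ k j)
        = ∑ j, ∑ k, (p k : ℂ) * (b₀ k j * a₀ j k) := Finset.sum_comm
    rw [e2, ← Finset.sum_sub_distrib]
    refine Finset.sum_congr rfl fun j _ => ?_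
    rw [← Finset.sum_sub_distrib]
    refine Finset.sum_congr rfl fun k _ => ?_
    ring
  -- variance as double sum
  have hVA : variance ρ A = ∑ j, ∑ k, p j * (‖a₀ j k‖)^2 := by
    rw [hvarA, htrace_entry]
    have e1 : ∀ j : Fin (n+1), (p j : ℂ) * ((a₀ * a₀) j j)
        = ((∑ k, p j * (‖a₀ j k‖)^2 : ℝ) : ℂ) := by
      intro j
      rw [Matrix.mul_apply, Finset.mul_sum, Complex.ofReal_sum]
      refine Finset.sum_congr rfl fun k _ => ?_
      rw [ha₀entry j k, Complex.mul_conj, ← Complex.sq_norm]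
      push_cast
      ring
    simp only [e1]
    rw [← Complex.ofReal_sum, Complex.ofReal_re]
  have hVB : variance ρ B = ∑ j, ∑ k, p j * (‖b₀ j k‖)^2 := by
    rw [hvarB, htrace_entry]
    have e1 : ∀ j : Fin (n+1), (p j : ℂ) * ((b₀ * b₀) j j)
        = ((∑ k, p j * (‖b₀ j k‖)^2 : ℝ) : ℂ) := by
      intro j
      rw [Matrix.mul_apply, Finset.mul_sum, Complex.ofReal_sum]
      refine Finset.sum_congr rfl fun k _ => ?_
      rw [hb₀entry j k, Complex.mul_conj, ← Complex.sq_norm]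
      push_cast
      ring
    simp only [e1]
    rw [← Complex.ofReal_sum, Complex.ofReal_re]
  -- symmetrized weighted sums
  have hsymA : ∑ j, ∑ k, (p j + p k) * (‖a₀ j k‖)^2 = 2 * variance ρ A := by
    have e : ∑ j, ∑ k, p k * (‖a₀ j k‖)^2
        = ∑ j, ∑ k, p j * (‖a₀ j k‖)^2 := by
      rw [Finset.sum_comm]
      refine Finset.sum_congr rfl fun j _ => Finset.sum_congr rfl fun k _ => ?_
      rw [habsA j k]
    simp only [add_mul, Finset.sum_add_distrib, e, hVA]
    ring
  have hsymB : ∑ j, ∑ k, (p j + p k) * (‖b₀ k j‖)^2 = 2 * variance ρ B := by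
    have e : ∑ j, ∑ k, p j * (‖b₀ k j‖)^2
        = ∑ j, ∑ k, p j * (‖b₀ j k‖)^2 := by
      refine Finset.sum_congr rfl fun j _ => Finset.sum_congr rfl fun k _ => ?_
      rw [habsB j k]
    have e2 : ∑ j, ∑ k, p k * (‖b₀ k j‖)^2
        = ∑ j, ∑ k, p j * (‖b₀ j k‖)^2 := Finset.sum_comm
    simp only [add_mul, Finset.sum_add_distrib, e, e2, hVB]
    ring
  -- eigenvalue bounds
  obtain ⟨hmono, σ, hσ⟩ := hlam
  have hbnd : ∀ j, lam 0 ≤ p j ∧ p j ≤ lam (Fin.last n) := by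
    intro j
    have hpj : p j = lam (σ.symm j) := by rw [hσ (σ.symm j)]; simp [hp]
    rw [hpj]
    exact ⟨hmono (Fin.zero_le _), hmono (Fin.le_last _)⟩
  have hp0 : ∀ j, 0 ≤ p j := fun j => le_trans hlam0 (hbnd j).1
  set m : ℝ := lam 0 with hm_def
  set Mx : ℝ := lam (Fin.last n) with hMx_def
  have hMm : 0 ≤ Mx + m := by
    have := (hbnd 0).1; have := (hbnd 0).2; have := hp0 0; linarith
  have hMm2 : 0 ≤ Mx - m := by
    have := (hbnd 0).1; have := (hbnd 0).2; linarith
  set S : ℝ := ∑ j, ∑ k, (p j + p k) * (‖a₀ j k‖ * ‖b₀ k j‖) with hS_def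
  set L : ℝ := ‖(ρ * (A * B - B * A)).trace‖ with hL_def
  have hL0 : (0:ℝ) ≤ L := norm_nonneg _
  -- step 1 : triangle inequality
  have hstep1 : L ≤ ∑ j, ∑ k, |p j - p k| * (‖a₀ j k‖ * ‖b₀ k j‖) := by
    rw [hL_def, hcomm, hT]
    refine (norm_sum_le _ _).trans ?_
    refine Finset.sum_le_sum fun j _ => ?_
    refine (norm_sum_le _ _).trans ?_
    refine Finset.sum_le_sum fun k _ => ?_
    rw [norm_mul, norm_mul]
    rw [show ((p j : ℂ) - (p k : ℂ)) = ((p j - p k : ℝ) : ℂ) by push_cast; ring,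
      Complex.norm_real, Real.norm_eq_abs]
  -- step 2
  have hstep2 : (Mx + m) * L ≤ (Mx - m) * S := by
    calc (Mx + m) * L
        ≤ (Mx + m) * ∑ j, ∑ k, |p j - p k| * (‖a₀ j k‖ * ‖b₀ k j‖) :=
          mul_le_mul_of_nonneg_left hstep1 hMm
      _ = ∑ j, ∑ k, ((Mx + m) * |p j - p k|) * (‖a₀ j k‖ * ‖b₀ k j‖) := by
          simp only [Finset.mul_sum]; exact Finset.sum_congr rfl fun j _ =>
            Finset.sum_congr rfl fun k _ => by ring
      _ ≤ ∑ j, ∑ k, ((Mx - m) * (p j + p k)) * (‖a₀ j k‖ * ‖b₀ k j‖) := by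
          refine Finset.sum_le_sum fun j _ => Finset.sum_le_sum fun k _ => ?_
          refine mul_le_mul_of_nonneg_right ?_
            (mul_nonneg (norm_nonneg _) (norm_nonneg _))
          exact key_real_ineq hlam0 (hbnd j).1 (hbnd j).2 (hbnd k).1 (hbnd k).2
      _ = (Mx - m) * S := by
          rw [hS_def]; simp only [Finset.mul_sum]; exact Finset.sum_congr rfl fun j _ =>
            Finset.sum_congr rfl fun k _ => by ring
  -- Cauchy-Schwarz
  have hCS : S ^ 2 ≤ (2 * variance ρ A) * (2 * variance ρ B) := by
    have key := Finset.sum_mul_sq_le_sq_mul_sq (Finset.univ : Finset (Fin (n+1) × Fin (n+1)))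
      (fun jk => Real.sqrt (p jk.1 + p jk.2) * ‖a₀ jk.1 jk.2‖)
      (fun jk => Real.sqrt (p jk.1 + p jk.2) * ‖b₀ jk.2 jk.1‖)
    have hw : ∀ j k : Fin (n+1), 0 ≤ p j + p k := fun j k => add_nonneg (hp0 j) (hp0 k)
    have e1 : ∑ jk : Fin (n+1) × Fin (n+1),
        (Real.sqrt (p jk.1 + p jk.2) * ‖a₀ jk.1 jk.2‖)
          * (Real.sqrt (p jk.1 + p jk.2) * ‖b₀ jk.2 jk.1‖) = S := by
      rw [Fintype.sum_prod_type, hS_def]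
      refine Finset.sum_congr rfl fun j _ => Finset.sum_congr rfl fun k _ => ?_
      rw [mul_mul_mul_comm, Real.mul_self_sqrt (hw j k)]
    have e2 : ∑ jk : Fin (n+1) × Fin (n+1),
        (Real.sqrt (p jk.1 + p jk.2) * ‖a₀ jk.1 jk.2‖) ^ 2
          = 2 * variance ρ A := by
      rw [Fintype.sum_prod_type, ← hsymA]
      refine Finset.sum_congr rfl fun j _ => Finset.sum_congr rfl fun k _ => ?_
      rw [mul_pow, Real.sq_sqrt (hw j k)]
    have e3 : ∑ jk : Fin (n+1) × Fin (n+1),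
        (Real.sqrt (p jk.1 + p jk.2) * ‖b₀ jk.2 jk.1‖) ^ 2
          = 2 * variance ρ B := by
      rw [Fintype.sum_prod_type, ← hsymB]
      refine Finset.sum_congr rfl fun j _ => Finset.sum_congr rfl fun k _ => ?_
      rw [mul_pow, Real.sq_sqrt (hw j k)]
    rw [e1, e2, e3] at key
    exact key
  -- conclusion
  have hS0 : 0 ≤ S := by
    rw [hS_def]
    refine Finset.sum_nonneg fun j _ => Finset.sum_nonneg fun k _ => ?_
    exact mul_nonneg (add_nonneg (hp0 j) (hp0 k))
      (mul_nonneg (norm_nonneg _) (norm_nonneg _))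
  constructor
  · calc (Mx + m) ^ 2 * L ^ 2 = ((Mx + m) * L) ^ 2 := by ring
      _ ≤ ((Mx - m) * S) ^ 2 := by
          exact pow_le_pow_left₀ (mul_nonneg hMm hL0) hstep2 2
      _ = (Mx - m) ^ 2 * S ^ 2 := by ring
      _ ≤ (Mx - m) ^ 2 * ((2 * variance ρ A) * (2 * variance ρ B)) :=
          mul_le_mul_of_nonneg_left hCS (sq_nonneg _)
      _ = 4 * (Mx - m) ^ 2 * variance ρ A * variance ρ B := by ring
  · unfold shift
    rw [comm_shift_aux]
end

section
/- Let n ≥ 1, let ρ = (1/n)·I be the maximally mixed n×n state, let A, B be n×n self-adjoint complex matrices, and let q ∈ ℝ with |q| < 1. Then (1/(1−|q|)²)·|Tr[ρ[A₀,B₀]_{|q|}]|² ≤ V_ρ(A)·V_ρ(B), and this inequality is equivalent to |Tr[A₀B₀]|² ≤ Tr[A₀²]·Tr[B₀²] in the sense that (1/(1−|q|)²)·|Tr[ρ[A₀,B₀]_{|q|}]|² = |Tr[A₀B₀]/n|². -/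
open Matrix ComplexOrder

open scoped ComplexConjugate

lemma trace_mul_expand {m : ℕ} (M N : Matrix (Fin m) (Fin m) ℂ) :
    (M * N).trace = ∑ i, ∑ j, M i j * N j i := by
  simp [Matrix.trace, Matrix.diag, Matrix.mul_apply]

lemma cs_trace {m : ℕ} (X Y : Matrix (Fin m) (Fin m) ℂ)
    (hX : ∀ i j, X j i = conj (X i j)) (hY : ∀ i j, Y j i = conj (Y i j)) :
    ‖(X * Y).trace‖ ^ 2 ≤ ((X * X).trace).re * ((Y * Y).trace).re := by
  set x : EuclideanSpace ℂ (Fin m × Fin m) := WithLp.toLp 2 (fun p : Fin m × Fin m => X p.1 p.2) with hx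
  set y : EuclideanSpace ℂ (Fin m × Fin m) := WithLp.toLp 2 (fun p : Fin m × Fin m => Y p.1 p.2) with hy
  have h1 : (X * Y).trace = inner ℂ y x := by
    rw [trace_mul_expand, PiLp.inner_apply, Fintype.sum_prod_type]
    refine Finset.sum_congr rfl fun i _ => Finset.sum_congr rfl fun j _ => ?_
    simp [hx, hy, RCLike.inner_apply, hY i j, mul_comm]
  have h2 : ((X * X).trace).re = ‖x‖ ^ 2 := by
    rw [← inner_self_eq_norm_sq (𝕜 := ℂ) x]
    congr 1
    rw [trace_mul_expand, PiLp.inner_apply, Fintype.sum_prod_type]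
    refine Finset.sum_congr rfl fun i _ => Finset.sum_congr rfl fun j _ => ?_
    simp [hx, RCLike.inner_apply, hX i j, mul_comm, Complex.mul_conj']
  have h3 : ((Y * Y).trace).re = ‖y‖ ^ 2 := by
    rw [← inner_self_eq_norm_sq (𝕜 := ℂ) y]
    congr 1
    rw [trace_mul_expand, PiLp.inner_apply, Fintype.sum_prod_type]
    refine Finset.sum_congr rfl fun i _ => Finset.sum_congr rfl fun j _ => ?_
    simp [hy, RCLike.inner_apply, hY i j, mul_comm, Complex.mul_conj']
  rw [h1, h2, h3]
  have := norm_inner_le_norm (𝕜 := ℂ) y x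
  have h4 : ‖(inner ℂ y x : ℂ)‖ = ‖(inner ℂ y x : ℂ)‖ := rfl
  rw [h4]
  nlinarith [norm_nonneg (inner ℂ y x : ℂ), norm_nonneg x, norm_nonneg y]

/-- For the maximally mixed state `ρ = (1/n)·I` and `|q| < 1`:
`(1/(1−|q|)²)·|Tr[ρ[A₀,B₀]_{|q|}]|² ≤ V_ρ(A)·V_ρ(B)`, and moreover
`(1/(1−|q|)²)·|Tr[ρ[A₀,B₀]_{|q|}]|² = |Tr[A₀B₀]/n|²`. -/
theorem maximally_mixed_uncertainty {n : ℕ}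
    (ρ A B : Matrix (Fin (n + 1)) (Fin (n + 1)) ℂ)
    (hρ : ρ = ((n + 1 : ℂ))⁻¹ • (1 : Matrix (Fin (n + 1)) (Fin (n + 1)) ℂ))
    (hA : A.IsHermitian) (hB : B.IsHermitian) (q : ℝ) (hq : |q| < 1) :
    (1 / (1 - |q|) ^ 2) *
        ‖(ρ * qComm |q| (shift ρ A) (shift ρ B)).trace‖ ^ 2 ≤
      variance ρ A * variance ρ B ∧
    (1 / (1 - |q|) ^ 2) *
        ‖(ρ * qComm |q| (shift ρ A) (shift ρ B)).trace‖ ^ 2 =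
      ‖(shift ρ A * shift ρ B).trace / (n + 1 : ℂ)‖ ^ 2 := by
  set c : ℝ := ((n : ℝ) + 1)⁻¹ with hc
  have hcast : ((n : ℂ) + 1)⁻¹ = (c : ℂ) := by push_cast [hc]; ring
  have hn0 : ((n : ℂ) + 1) ≠ 0 := by
    exact_mod_cast (Nat.cast_add_one_ne_zero (R := ℂ) n)
  have hγn : ((n : ℂ) + 1)⁻¹ * ((n : ℂ) + 1) = 1 := inv_mul_cancel₀ hn0
  have hcpos : 0 < c := by positivity
  have hq1 : 0 < 1 - |q| := by linarith
  -- traces against ρ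
  have hρmul : ∀ M : Matrix (Fin (n + 1)) (Fin (n + 1)) ℂ,
      (ρ * M).trace = ((n : ℂ) + 1)⁻¹ * M.trace := by
    intro M; rw [hρ]; simp [Matrix.smul_mul]
  -- real centering constants and hermitianity of shifts
  have hherm : ∀ M : Matrix (Fin (n + 1)) (Fin (n + 1)) ℂ, M.IsHermitian →
      (shift ρ M).IsHermitian := by
    intro M hM
    have htr : star M.trace = M.trace := by
      rw [← Matrix.trace_conjTranspose, hM.eq]
    have hst : star ((ρ * M).trace) = (ρ * M).trace := by
      rw [hρmul M]
      simp only [star_mul', htr]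
      congr 1
      simp [star_inv₀]
    unfold Matrix.IsHermitian shift
    rw [Matrix.conjTranspose_sub, Matrix.conjTranspose_smul, Matrix.conjTranspose_one,
      hM.eq, hst]
  have hA0 := hherm A hA
  have hB0 := hherm B hB
  have hA0e : ∀ i j, (shift ρ A) j i = conj ((shift ρ A) i j) := fun i j =>
    (hA0.apply j i).symm
  have hB0e : ∀ i j, (shift ρ B) j i = conj ((shift ρ B) i j) := fun i j =>
    (hB0.apply j i).symm
  set A₀ := shift ρ A
  set B₀ := shift ρ B
  set T : ℂ := (A₀ * B₀).trace with hT
  -- trace of the q-commutator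
  have hTr : (ρ * qComm |q| A₀ B₀).trace = ((n : ℂ) + 1)⁻¹ * ((1 : ℂ) - ((|q| : ℝ) : ℂ)) * T := by
    rw [hρmul]
    unfold qComm
    rw [Matrix.trace_sub, Matrix.trace_smul, Matrix.trace_mul_comm B₀ A₀, ← hT]
    simp only [smul_eq_mul]
    ring
  -- abs of that trace
  have habs : ‖(ρ * qComm |q| A₀ B₀).trace‖ = c * (1 - |q|) * ‖T‖ := by
    rw [hTr, hcast]
    have h5 : (1 : ℂ) - ((|q| : ℝ) : ℂ) = ((1 - |q| : ℝ) : ℂ) := by push_cast; ring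
    rw [h5, norm_mul, norm_mul, Complex.norm_real, Real.norm_eq_abs, Complex.norm_real,
      Real.norm_eq_abs, abs_of_pos hcpos, abs_of_pos hq1]
  -- the equality part
  have heq : (1 / (1 - |q|) ^ 2) *
      ‖(ρ * qComm |q| A₀ B₀).trace‖ ^ 2 =
      ‖(A₀ * B₀).trace / (n + 1 : ℂ)‖ ^ 2 := by
    rw [habs, ← hT, norm_div]
    have h1 : ‖((n : ℂ) + 1)‖ = (n : ℝ) + 1 := by
      rw [show ((n : ℂ) + 1) = ((((n : ℝ) + 1) : ℝ) : ℂ) by push_cast; ring,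
        Complex.norm_real, Real.norm_eq_abs]
      exact abs_of_pos (by positivity)
    rw [h1]
    field_simp [hc]
    have hcn' : c * ((n : ℝ) + 1) = 1 := inv_mul_cancel₀ (by positivity)
    linear_combination ‖T‖ ^ 2 * (c * ((n : ℝ) + 1) + 1) * hcn'
  -- variance computation
  have hvar : ∀ M : Matrix (Fin (n + 1)) (Fin (n + 1)) ℂ,
      variance ρ M = c * ((shift ρ M * shift ρ M).trace).re := by
    intro M
    have hexp : (shift ρ M * shift ρ M).trace =
        (M * M).trace - ((n : ℂ) + 1)⁻¹ * M.trace ^ 2 := by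
      unfold shift
      rw [hρmul]
      rw [Matrix.sub_mul, Matrix.mul_sub, Matrix.mul_sub, Matrix.smul_mul, Matrix.mul_smul,
        Matrix.mul_smul, Matrix.smul_mul]
      simp only [Matrix.one_mul, Matrix.mul_one, Matrix.trace_sub, Matrix.trace_smul,
        Matrix.trace_one, smul_smul, smul_eq_mul]
      rw [Fintype.card_fin]
      push_cast
      linear_combination (((n : ℂ) + 1)⁻¹ * M.trace ^ 2) * hγn
    have : (ρ * (M * M)).trace - ((ρ * M).trace) ^ 2 =
        (c : ℂ) * (shift ρ M * shift ρ M).trace := by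
      rw [hexp, hρmul, hρmul, ← hcast]
      ring
    unfold variance
    rw [this, Complex.re_ofReal_mul]
  -- Cauchy–Schwarz
  have hCS := cs_trace A₀ B₀ hA0e hB0e
  constructor
  · rw [heq, ← hT, norm_div]
    have h1 : ‖((n : ℂ) + 1)‖ = (n : ℝ) + 1 := by
      rw [show ((n : ℂ) + 1) = ((((n : ℝ) + 1) : ℝ) : ℂ) by push_cast; ring,
        Complex.norm_real, Real.norm_eq_abs]
      exact abs_of_pos (by positivity)
    rw [h1, hvar A, hvar B, div_pow]
    have h2 : (0 : ℝ) < ((n : ℝ) + 1) ^ 2 := by positivity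
    rw [div_le_iff₀ h2]
    rw [← hT] at hCS
    have hcn : c * ((n : ℝ) + 1) = 1 := inv_mul_cancel₀ (by positivity)
    calc ‖T‖ ^ 2 ≤ ((A₀ * A₀).trace).re * ((B₀ * B₀).trace).re := hCS
      _ = c * ((A₀ * A₀).trace).re * (c * ((B₀ * B₀).trace).re) * ((n : ℝ) + 1) ^ 2 := by
          linear_combination (-(((A₀ * A₀).trace).re * ((B₀ * B₀).trace).re) *
            (c * ((n : ℝ) + 1) + 1)) * hcn
  · exact heq
end

section
/- Let ρ be an n×n density matrix whose smallest eigenvalue is zero (a non-faithful state), let A, B be n×n self-adjoint complex matrices, and let q ∈ ℝ with |q| > 1. Then (1/(1+|q|)²)·|Tr[ρ[A₀,B₀]_{|q|}]|² ≤ V_ρ(A)·V_ρ(B). -/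
open Matrix ComplexOrder

noncomputable def vec {n : ℕ} (M : Matrix (Fin n) (Fin n) ℂ) :
    EuclideanSpace ℂ (Fin n × Fin n) :=
  (WithLp.equiv 2 _).symm (fun p => M p.1 p.2)

open scoped InnerProductSpace in
lemma inner_vec_eq_trace {n : ℕ} (X Y : Matrix (Fin n) (Fin n) ℂ) :
    ⟪_root_.vec X, _root_.vec Y⟫_ℂ = (Xᴴ * Y).trace := by
  rw [_root_.vec, _root_.vec, WithLp.equiv_symm_apply, EuclideanSpace.inner_toLp_toLp]
  simp [Matrix.trace, dotProduct, Matrix.mul_apply, Matrix.diag, Matrix.conjTranspose_apply,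
    Fintype.sum_prod_type, mul_comm]
  rw [Finset.sum_comm]

open scoped InnerProductSpace in
/-- For a non-faithful density matrix (smallest eigenvalue zero) and `|q| > 1`:
`(1/(1+|q|)²)·|Tr[ρ[A₀,B₀]_{|q|}]|² ≤ V_ρ(A)·V_ρ(B)`. -/
theorem nonfaithful_qcommutator_uncertainty {n : ℕ}
    (ρ A B : Matrix (Fin n) (Fin n) ℂ)
    (hρ : ρ.PosSemidef) (htr : ρ.trace = 1)
    (hzero : ∃ i, hρ.1.eigenvalues i = 0)
    (hA : A.IsHermitian) (hB : B.IsHermitian) (q : ℝ) (hq : 1 < |q|) :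
    (1 / (1 + |q|) ^ 2) *
        ‖(ρ * qComm |q| (shift ρ A) (shift ρ B)).trace‖ ^ 2 ≤
      variance ρ A * variance ρ B := by

  obtain ⟨m, hm⟩ : ∃ m : Matrix (Fin n) (Fin n) ℂ, ρ = mᴴ * m := by
    open scoped MatrixOrder in
    obtain ⟨B, hB⟩ := CStarAlgebra.nonneg_iff_eq_star_mul_self.mp hρ.nonneg
    exact ⟨B, hB⟩
  -- traces Tr(ρ C) for hermitian C are real
  have hreal : ∀ C : Matrix (Fin n) (Fin n) ℂ, C.IsHermitian →
      star ((ρ * C).trace) = (ρ * C).trace := by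
    intro C hC
    rw [← Matrix.trace_conjTranspose, Matrix.conjTranspose_mul, hC.eq, hρ.1.eq,
      Matrix.trace_mul_comm]
  -- shifted operators are Hermitian
  have hshift : ∀ C : Matrix (Fin n) (Fin n) ℂ, C.IsHermitian → (shift ρ C).IsHermitian := by
    intro C hC
    unfold shift
    unfold Matrix.IsHermitian
    rw [Matrix.conjTranspose_sub, Matrix.conjTranspose_smul, Matrix.conjTranspose_one, hC.eq,
      hreal C hC]
  set X := shift ρ A with hX
  set Y := shift ρ B with hY
  have hXh := hshift A hA
  have hYh := hshift B hB
  -- key trace identity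
  have key : ∀ (U V : Matrix (Fin n) (Fin n) ℂ), U.IsHermitian →
      (ρ * (U * V)).trace = ((U * mᴴ)ᴴ * (V * mᴴ)).trace := by
    intro U V hU
    rw [Matrix.conjTranspose_mul, Matrix.conjTranspose_conjTranspose, hU.eq, hm,
      Matrix.trace_mul_comm]
    simp only [← Matrix.mul_assoc]
    rw [Matrix.trace_mul_comm]
    simp only [← Matrix.mul_assoc]
  -- inner products
  have hinXY : ⟪_root_.vec (X * mᴴ), _root_.vec (Y * mᴴ)⟫_ℂ = (ρ * (X * Y)).trace := by
    rw [inner_vec_eq_trace, key X Y hXh]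
  have hinYX : ⟪_root_.vec (Y * mᴴ), _root_.vec (X * mᴴ)⟫_ℂ = (ρ * (Y * X)).trace := by
    rw [inner_vec_eq_trace, key Y X hYh]
  -- variance identity
  have hvar : ∀ C : Matrix (Fin n) (Fin n) ℂ,
      (ρ * (shift ρ C * shift ρ C)).trace
        = (ρ * (C * C)).trace - ((ρ * C).trace) ^ 2 := by
    intro C
    simp only [shift, Matrix.sub_mul, Matrix.mul_sub, Matrix.smul_mul, Matrix.mul_smul,
      Matrix.one_mul, Matrix.mul_one, Matrix.trace_sub, Matrix.trace_smul, smul_smul,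
      smul_eq_mul, Matrix.mul_one]
    rw [htr]
    ring
  have hnormX : ‖_root_.vec (X * mᴴ)‖ ^ 2 = variance ρ A := by
    have h : ⟪_root_.vec (X * mᴴ), _root_.vec (X * mᴴ)⟫_ℂ = (ρ * (X * X)).trace := by
      rw [inner_vec_eq_trace, key X X hXh]
    rw [@norm_sq_eq_re_inner ℂ, h.trans (hvar A)]
    rfl
  have hnormY : ‖_root_.vec (Y * mᴴ)‖ ^ 2 = variance ρ B := by
    have h : ⟪_root_.vec (Y * mᴴ), _root_.vec (Y * mᴴ)⟫_ℂ = (ρ * (Y * Y)).trace := by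
      rw [inner_vec_eq_trace, key Y Y hYh]
    rw [@norm_sq_eq_re_inner ℂ, h.trans (hvar B)]
    rfl
  set c := ‖(ρ * (X * Y)).trace‖ with hc
  have hcs : c ≤ ‖_root_.vec (X * mᴴ)‖ * ‖_root_.vec (Y * mᴴ)‖ := by
    rw [hc, ← hinXY]
    exact norm_inner_le_norm _ _
  have hc2 : c ^ 2 ≤ variance ρ A * variance ρ B := by
    rw [← hnormX, ← hnormY]
    nlinarith [norm_nonneg (_root_.vec (X * mᴴ)), norm_nonneg (_root_.vec (Y * mᴴ)),
      norm_nonneg ((ρ * (X * Y)).trace)]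
  have hconj : ‖(ρ * (Y * X)).trace‖ = c := by
    rw [← hinYX, ← inner_conj_symm, hinXY, hc, Complex.norm_conj]
  have hsplit : (ρ * qComm |q| X Y).trace
      = (ρ * (X * Y)).trace - ((|q| : ℝ) : ℂ) * (ρ * (Y * X)).trace := by
    simp [qComm, Matrix.mul_sub, Matrix.mul_smul, smul_eq_mul]
  have hs : (0 : ℝ) < 1 + |q| := by linarith [abs_nonneg q]
  have habs : ‖(ρ * qComm |q| X Y).trace‖ ≤ (1 + |q|) * c := by
    rw [hsplit]
    calc ‖(ρ * (X * Y)).trace - ((|q| : ℝ) : ℂ) * (ρ * (Y * X)).trace‖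
        ≤ ‖(ρ * (X * Y)).trace‖
            + ‖((|q| : ℝ) : ℂ) * (ρ * (Y * X)).trace‖ := by
          exact norm_sub_le _ _
      _ = c + |q| * c := by
          rw [norm_mul, hconj, Complex.norm_real, Real.norm_eq_abs, abs_abs, hc]
      _ = (1 + |q|) * c := by ring
  have h2 : ‖(ρ * qComm |q| X Y).trace‖ ^ 2 ≤ ((1 + |q|) * c) ^ 2 :=
    pow_le_pow_left₀ (norm_nonneg _) habs 2
  calc (1 / (1 + |q|) ^ 2) * ‖(ρ * qComm |q| X Y).trace‖ ^ 2
      ≤ (1 / (1 + |q|) ^ 2) * ((1 + |q|) * c) ^ 2 := by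
        apply mul_le_mul_of_nonneg_left h2 (by positivity)
    _ = c ^ 2 := by field_simp
    _ ≤ variance ρ A * variance ρ B := hc2
end
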